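/- arXiv:2504.20470 — 6 statements merged into one kernel-verified Lean document; each statement's English description precedes it below -/
import Mathlib

section
/- Identifiability of the treated-arm principal-stratum outcome distribution (Theorem 3(a)): Suppose two models (Ω, ℱ, μ, G, A, S⁰, S¹, Y⁰, Y¹) and (Ω', ℱ', μ', G', A', S'⁰, S'¹, Y'⁰, Y'¹) each satisfy Assumption 5, Assumption 7, Assumption 8, and Condition 4(i), and have the same observed data distribution, i.e. μ(G=g, A=a, S=s, Y=y) = μ'(G'=g, A'=a, S'=s, Y'=y) for all g ∈ Fin m and a, s, y ∈ {0,1}. Then for all (a,b) ∈ {(0,0),(0,1),(1,1)} and every g such that μ(S⁰=a, S¹=b, G=g) > 0 and μ'(S'⁰=a, S'¹=b, G'=g) > 0: P(Y¹=1 | S⁰=a, S¹=b, G=g) = P'(Y'¹=1 | S'⁰=a, S'¹=b, G'=g). -/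
open MeasureTheory ProbabilityTheory

set_option maxHeartbeats 2000000

/-- Conditional probability `P(E | F) = μ(E ∩ F) / μ(F)` as a real number. -/
noncomputable def condP {Ω : Type*} [MeasurableSpace Ω] (μ : Measure Ω) (E F : Set Ω) : ℝ :=
  (μ (E ∩ F)).toReal / (μ F).toReal

noncomputable def oR {Ω : Type*} [MeasurableSpace Ω] (μ : Measure Ω) {m : ℕ}
    (G : Ω → Fin m) (A S Y : Ω → Bool) (g : Fin m) (a s y : Bool) : ℝ :=
  (μ {ω | G ω = g ∧ A ω = a ∧ S ω = s ∧ Y ω = y}).toReal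

lemma meas_pred_sum {Ω : Type*} [MeasurableSpace Ω] (μ : Measure Ω) [IsFiniteMeasure μ]
    {V : Type*} [Fintype V] [DecidableEq V] [MeasurableSpace V] [MeasurableSingletonClass V]
    {J : Ω → V} (hJ : Measurable J) {T : Set Ω} (hT : MeasurableSet T)
    (Q : V → Bool) :
    (μ ({ω | Q (J ω) = true} ∩ T)).toReal
      = ∑ v ∈ Finset.univ.filter (fun v => Q v = true), (μ ({ω | J ω = v} ∩ T)).toReal := by
  have hset : {ω | Q (J ω) = true} ∩ T
      = ⋃ v ∈ Finset.univ.filter (fun v => Q v = true), ({ω | J ω = v} ∩ T) := by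
    ext ω
    simp only [Set.mem_inter_iff, Set.mem_setOf_eq, Set.mem_iUnion, Finset.mem_filter,
      Finset.mem_univ, true_and]
    constructor
    · rintro ⟨hq, ht⟩; exact ⟨J ω, hq, rfl, ht⟩
    · rintro ⟨v, hq, hv, ht⟩; exact ⟨hv ▸ hq, ht⟩
  rw [hset, measure_biUnion_finset ?_ ?_, ENNReal.toReal_sum (fun v _ => measure_ne_top μ _)]
  · intro v _ w _ hvw
    refine Set.disjoint_left.mpr ?_
    rintro ω ⟨hv, -⟩ ⟨hw, -⟩
    exact hvw (hv.symm.trans hw)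
  · intro v _
    exact (hJ (measurableSet_singleton v)).inter hT

lemma model_facts {Ω : Type*} [MeasurableSpace Ω] (μ : Measure Ω) [IsProbabilityMeasure μ]
    {m : ℕ} {G : Ω → Fin m} {A S0 S1 Y0 Y1 S Y : Ω → Bool}
    (hGmeas : Measurable G) (hAmeas : Measurable A)
    (hS0meas : Measurable S0) (hS1meas : Measurable S1)
    (hY0meas : Measurable Y0) (hY1meas : Measurable Y1)
    (hSdef : ∀ ω, S ω = bif A ω then S1 ω else S0 ω)
    (hYdef : ∀ ω, Y ω = bif A ω then Y1 ω else Y0 ω)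
    (g : Fin m)
    (hpos : 0 < μ {ω | G ω = g})
    (hov : 0 < condP μ {ω | A ω = true} {ω | G ω = g} ∧
        condP μ {ω | A ω = true} {ω | G ω = g} < 1)
    (hind : ∀ (a s0 s1 y0 y1 : Bool),
      condP μ {ω | A ω = a ∧ S0 ω = s0 ∧ S1 ω = s1 ∧ Y0 ω = y0 ∧ Y1 ω = y1} {ω | G ω = g} =
        condP μ {ω | A ω = a} {ω | G ω = g} *
          condP μ {ω | S0 ω = s0 ∧ S1 ω = s1 ∧ Y0 ω = y0 ∧ Y1 ω = y1} {ω | G ω = g})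
    (hA7 : ∀ (s0 s1 : Bool), 0 < μ {ω | S0 ω = s0 ∧ S1 ω = s1 ∧ G ω = g} →
      condP μ {ω | Y1 ω = true} {ω | S0 ω = s0 ∧ S1 ω = s1 ∧ G ω = g} =
        condP μ {ω | Y1 ω = true} {ω | S0 ω = s0 ∧ S1 ω = s1})
    (hA8 : μ {ω | S0 ω ≤ S1 ω} = 1) :
    (condP μ {ω | S0 ω = false ∧ S1 ω = true} {ω | G ω = g}
      = (oR μ G A S Y g true true false + oR μ G A S Y g true true true) /
          (oR μ G A S Y g true false false + oR μ G A S Y g true false true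
            + oR μ G A S Y g true true false + oR μ G A S Y g true true true)
        - (oR μ G A S Y g false true false + oR μ G A S Y g false true true) /
          (oR μ G A S Y g false false false + oR μ G A S Y g false false true
            + oR μ G A S Y g false true false + oR μ G A S Y g false true true)) ∧
    (condP μ {ω | S0 ω = true ∧ S1 ω = true} {ω | G ω = g}
      = (oR μ G A S Y g false true false + oR μ G A S Y g false true true) /
          (oR μ G A S Y g false false false + oR μ G A S Y g false false true
            + oR μ G A S Y g false true false + oR μ G A S Y g false true true)) ∧
    (condP μ {ω | S0 ω = false ∧ S1 ω = true} {ω | G ω = g} *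
        condP μ {ω | Y1 ω = true} {ω | S0 ω = false ∧ S1 ω = true}
      + condP μ {ω | S0 ω = true ∧ S1 ω = true} {ω | G ω = g} *
        condP μ {ω | Y1 ω = true} {ω | S0 ω = true ∧ S1 ω = true}
      = oR μ G A S Y g true true true /
          (oR μ G A S Y g true false false + oR μ G A S Y g true false true
            + oR μ G A S Y g true true false + oR μ G A S Y g true true true)) ∧
    (0 < μ {ω | S0 ω = false ∧ S1 ω = false ∧ G ω = g} →
      condP μ {ω | Y1 ω = true} {ω | S0 ω = false ∧ S1 ω = false ∧ G ω = g}
        = oR μ G A S Y g true false true /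
            (oR μ G A S Y g true false false + oR μ G A S Y g true false true)) := by
  classical
  set J : Ω → Bool × Bool × Bool × Bool × Bool :=
    fun ω => (A ω, S0 ω, S1 ω, Y0 ω, Y1 ω) with hJdef
  have hJ : Measurable J :=
    hAmeas.prod (hS0meas.prod (hS1meas.prod (hY0meas.prod hY1meas)))
  have hGg : MeasurableSet {ω | G ω = g} := hGmeas (measurableSet_singleton g)
  set p : Bool × Bool × Bool × Bool × Bool → ℝ :=
    fun v => (μ ({ω | J ω = v} ∩ {ω | G ω = g})).toReal with hpdef
  set n : ℝ := (μ {ω | G ω = g}).toReal with hndef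
  set paT : ℝ := (μ ({ω | A ω = true} ∩ {ω | G ω = g})).toReal with hpaTdef
  have hn : 0 < n := ENNReal.toReal_pos hpos.ne' (measure_ne_top μ _)
  have hovT : 0 < paT := by
    have h := hov.1
    unfold condP at h
    rcases div_pos_iff.mp h with ⟨h1, _⟩ | ⟨_, h2⟩
    · exact h1
    · linarith
  have hlt : paT < n := by
    have h := hov.2
    unfold condP at h
    exact (div_lt_one hn).mp h
  have hovF : 0 < n - paT := by linarith
  -- expansion helper
  have expand : ∀ (Q : Bool × Bool × Bool × Bool × Bool → Bool) (E : Set Ω),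
      E = {ω | Q (J ω) = true} ∩ {ω | G ω = g} →
      (μ E).toReal = ∑ v ∈ Finset.univ.filter (fun v => Q v = true), p v := by
    intro Q E hE
    rw [hE]
    exact meas_pred_sum μ hJ hGg Q
  -- complement of A
  have hpaF : (μ ({ω | A ω = false} ∩ {ω | G ω = g})).toReal = n - paT := by
    have hu : {ω | G ω = g} =
        ({ω | A ω = false} ∩ {ω | G ω = g}) ∪ ({ω | A ω = true} ∩ {ω | G ω = g}) := by
      ext ω; cases h : A ω <;> simp [h]
    have hdis : Disjoint ({ω | A ω = false} ∩ {ω | G ω = g})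
        ({ω | A ω = true} ∩ {ω | G ω = g}) := by
      refine Set.disjoint_left.mpr ?_
      rintro ω ⟨h1, -⟩ ⟨h2, -⟩
      simp only [Set.mem_setOf_eq] at h1 h2
      rw [h1] at h2; exact Bool.false_ne_true h2
    have hadd := measure_union (μ := μ) hdis ((hAmeas (measurableSet_singleton true)).inter hGg)
    have hadd2 : n = (μ ({ω | A ω = false} ∩ {ω | G ω = g})).toReal + paT := by
      rw [hndef]
      conv_lhs => rw [hu]
      rw [hadd, ENNReal.toReal_add (measure_ne_top μ _) (measure_ne_top μ _)]
    linarith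
  -- A5 at atom level
  have hA5p : ∀ a s0 s1 y0 y1, p (a, s0, s1, y0, y1) * n
      = (bif a then paT else n - paT) * (p (false, s0, s1, y0, y1) + p (true, s0, s1, y0, y1)) := by
    intro a s0 s1 y0 y1
    have h := hind a s0 s1 y0 y1
    unfold condP at h
    have e1 : {ω | A ω = a ∧ S0 ω = s0 ∧ S1 ω = s1 ∧ Y0 ω = y0 ∧ Y1 ω = y1}
        = {ω | J ω = (a, s0, s1, y0, y1)} := by
      ext ω; simp [hJdef, Prod.ext_iff]
    have e2 : {ω | S0 ω = s0 ∧ S1 ω = s1 ∧ Y0 ω = y0 ∧ Y1 ω = y1} ∩ {ω | G ω = g}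
        = ({ω | J ω = (false, s0, s1, y0, y1)} ∩ {ω | G ω = g})
          ∪ ({ω | J ω = (true, s0, s1, y0, y1)} ∩ {ω | G ω = g}) := by
      ext ω
      simp only [Set.mem_inter_iff, Set.mem_setOf_eq, Set.mem_union, hJdef, Prod.ext_iff]
      cases h : A ω <;> simp [h] <;> tauto
    have hdis : Disjoint ({ω | J ω = (false, s0, s1, y0, y1)} ∩ {ω | G ω = g})
        ({ω | J ω = (true, s0, s1, y0, y1)} ∩ {ω | G ω = g}) := by
      refine Set.disjoint_left.mpr ?_
      rintro ω ⟨h1, -⟩ ⟨h2, -⟩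
      simp only [Set.mem_setOf_eq] at h1 h2
      rw [h1] at h2
      simp at h2
    have e2m := measure_union (μ := μ) hdis ((hJ (measurableSet_singleton _)).inter hGg)
    rw [e1, e2, e2m, ENNReal.toReal_add (measure_ne_top μ _) (measure_ne_top μ _)] at h
    have haT : (μ ({ω | A ω = a} ∩ {ω | G ω = g})).toReal = bif a then paT else n - paT := by
      cases a
      · simpa using hpaF
      · simp [hpaTdef]
    rw [haT] at h
    have h' : p (a, s0, s1, y0, y1)
        = (bif a then paT else n - paT) / n *
          ((p (false, s0, s1, y0, y1) + p (true, s0, s1, y0, y1)) / n) * n := by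
      have hpn := (div_mul_cancel₀ (p (a, s0, s1, y0, y1)) hn.ne').symm
      exact hpn.trans (congrArg (· * n) h)
    rw [h']
    field_simp
  -- monotonicity at atom level
  have hm0 : μ {ω | S0 ω = true ∧ S1 ω = false} = 0 := by
    have hms : MeasurableSet {ω | S0 ω = true ∧ S1 ω = false} := by
      have he : {ω | S0 ω = true ∧ S1 ω = false}
          = {ω | S0 ω = true} ∩ {ω | S1 ω = false} := rfl
      rw [he]
      exact (hS0meas (measurableSet_singleton true)).inter
        (hS1meas (measurableSet_singleton false))
    have hcs : {ω | S0 ω = true ∧ S1 ω = false} = {ω | S0 ω ≤ S1 ω}ᶜ := by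
      ext ω
      simp only [Set.mem_setOf_eq, Set.mem_compl_iff]
      cases h0 : S0 ω <;> cases h1 : S1 ω <;> simp [h0, h1]
    have hcompl : MeasurableSet {ω | S0 ω ≤ S1 ω} := by
      have : {ω | S0 ω ≤ S1 ω} = {ω | S0 ω = true ∧ S1 ω = false}ᶜ := by
        rw [hcs, compl_compl]
      rw [this]
      exact hms.compl
    rw [hcs, prob_compl_eq_one_sub hcompl, hA8, tsub_self]
  have hmono : ∀ a y0 y1, p (a, true, false, y0, y1) = 0 := by
    intro a y0 y1
    have hsub : {ω | J ω = (a, true, false, y0, y1)} ∩ {ω | G ω = g}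
        ⊆ {ω | S0 ω = true ∧ S1 ω = false} := by
      rintro ω ⟨h1, -⟩
      simp only [Set.mem_setOf_eq, hJdef, Prod.ext_iff] at h1 ⊢
      exact ⟨h1.2.1, h1.2.2.1⟩
    rw [hpdef]
    simp [measure_mono_null hsub hm0]
  -- representation via stratum weights
  obtain ⟨w, hwF, hwT, hw0⟩ :
      ∃ w : Bool → Bool → Bool → Bool → ℝ,
        (∀ s0 s1 y0 y1, p (false, s0, s1, y0, y1) = (n - paT) * w s0 s1 y0 y1 / n) ∧
        (∀ s0 s1 y0 y1, p (true, s0, s1, y0, y1) = paT * w s0 s1 y0 y1 / n) ∧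
        (∀ y0 y1, w true false y0 y1 = 0) := by
    refine ⟨fun s0 s1 y0 y1 => p (false, s0, s1, y0, y1) + p (true, s0, s1, y0, y1),
      ?_, ?_, ?_⟩
    · intro s0 s1 y0 y1
      have h := hA5p false s0 s1 y0 y1
      simp only [Bool.cond_false] at h
      dsimp only
      field_simp
      linarith
    · intro s0 s1 y0 y1
      have h := hA5p true s0 s1 y0 y1
      simp only [Bool.cond_true] at h
      dsimp only
      field_simp
      linarith
    · intro y0 y1
      dsimp only
      rw [hmono false y0 y1, hmono true y0 y1]
      ring
  -- observed-cell expansions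
  have hoT : ∀ s y, oR μ G A S Y g true s y
      = paT * (w false s false y + w false s true y + w true s false y + w true s true y) / n := by
    intro s y
    have hset : {ω | G ω = g ∧ A ω = true ∧ S ω = s ∧ Y ω = y}
        = {ω | (fun v : Bool × Bool × Bool × Bool × Bool =>
              v.1 == true && ((bif v.1 then v.2.2.1 else v.2.1) == s)
                && ((bif v.1 then v.2.2.2.2 else v.2.2.2.1) == y)) (J ω) = true}
            ∩ {ω | G ω = g} := by
      ext ω
      simp only [Set.mem_setOf_eq, Set.mem_inter_iff, hSdef, hYdef, hJdef,
        Bool.and_eq_true, beq_iff_eq]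
      tauto
    rw [oR, expand (fun v : Bool × Bool × Bool × Bool × Bool =>
      v.1 == true && ((bif v.1 then v.2.2.1 else v.2.1) == s)
        && ((bif v.1 then v.2.2.2.2 else v.2.2.2.1) == y)) _ hset]
    cases s <;> cases y <;>
      · simp [Finset.sum_filter, Fintype.sum_prod_type]
        simp only [hwF, hwT]
        ring
  have hoF : ∀ s y, oR μ G A S Y g false s y
      = (n - paT) * (w s false y false + w s false y true + w s true y false + w s true y true) / n := by
    intro s y
    have hset : {ω | G ω = g ∧ A ω = false ∧ S ω = s ∧ Y ω = y}
        = {ω | (fun v : Bool × Bool × Bool × Bool × Bool =>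
              v.1 == false && ((bif v.1 then v.2.2.1 else v.2.1) == s)
                && ((bif v.1 then v.2.2.2.2 else v.2.2.2.1) == y)) (J ω) = true}
            ∩ {ω | G ω = g} := by
      ext ω
      simp only [Set.mem_setOf_eq, Set.mem_inter_iff, hSdef, hYdef, hJdef,
        Bool.and_eq_true, beq_iff_eq]
      tauto
    rw [oR, expand (fun v : Bool × Bool × Bool × Bool × Bool =>
      v.1 == false && ((bif v.1 then v.2.2.1 else v.2.1) == s)
        && ((bif v.1 then v.2.2.2.2 else v.2.2.2.1) == y)) _ hset]
    cases s <;> cases y <;>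
      · simp [Finset.sum_filter, Fintype.sum_prod_type]
        simp only [hwF, hwT]
        ring
  -- strata expansions
  have hstrat : ∀ c b, (μ {ω | S0 ω = c ∧ S1 ω = b ∧ G ω = g}).toReal
      = w c b false false + w c b false true + w c b true false + w c b true true := by
    intro c b
    have hset : {ω | S0 ω = c ∧ S1 ω = b ∧ G ω = g}
        = {ω | (fun v : Bool × Bool × Bool × Bool × Bool =>
              v.2.1 == c && v.2.2.1 == b) (J ω) = true} ∩ {ω | G ω = g} := by
      ext ω
      simp only [Set.mem_setOf_eq, Set.mem_inter_iff, hJdef, Bool.and_eq_true, beq_iff_eq]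
      tauto
    rw [expand (fun v : Bool × Bool × Bool × Bool × Bool =>
      v.2.1 == c && v.2.2.1 == b) _ hset]
    cases c <;> cases b <;>
      · simp [Finset.sum_filter, Fintype.sum_prod_type]
        simp only [hwF, hwT]
        field_simp
        ring
  have hstraty : ∀ c b,
      (μ ({ω | Y1 ω = true} ∩ {ω | S0 ω = c ∧ S1 ω = b ∧ G ω = g})).toReal
        = w c b false true + w c b true true := by
    intro c b
    have hset : {ω | Y1 ω = true} ∩ {ω | S0 ω = c ∧ S1 ω = b ∧ G ω = g}
        = {ω | (fun v : Bool × Bool × Bool × Bool × Bool =>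
              v.2.1 == c && v.2.2.1 == b && v.2.2.2.2 == true) (J ω) = true}
            ∩ {ω | G ω = g} := by
      ext ω
      simp only [Set.mem_setOf_eq, Set.mem_inter_iff, hJdef, Bool.and_eq_true, beq_iff_eq]
      tauto
    rw [expand (fun v : Bool × Bool × Bool × Bool × Bool =>
      v.2.1 == c && v.2.2.1 == b && v.2.2.2.2 == true) _ hset]
    cases c <;> cases b <;>
      · simp [Finset.sum_filter, Fintype.sum_prod_type]
        simp only [hwF, hwT]
        field_simp
        ring
  -- total weight
  have hwsum : w false false false false + w false false false true + w false false true false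
      + w false false true true + w false true false false + w false true false true
      + w false true true false + w false true true true + w true false false false
      + w true false false true + w true false true false + w true false true true
      + w true true false false + w true true false true + w true true true false
      + w true true true true = n := by
    have hset : {ω | G ω = g}
        = {ω | (fun _ : Bool × Bool × Bool × Bool × Bool => true) (J ω) = true}
            ∩ {ω | G ω = g} := by
      ext ω; simp
    have h32 := expand (fun _ : Bool × Bool × Bool × Bool × Bool => true) _ hset
    rw [← hndef] at h32
    simp [Finset.sum_filter, Fintype.sum_prod_type] at h32
    simp only [hwF, hwT] at h32
    field_simp at h32
    have h2 : n * n = n * (w false false false false + w false false false true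
        + w false false true false + w false false true true + w false true false false
        + w false true false true + w false true true false + w false true true true
        + w true false false false + w true false false true + w true false true false
        + w true false true true + w true true false false + w true true false true
        + w true true true false + w true true true true) := by
      linear_combination h32
    exact (mul_left_cancel₀ hn.ne' h2).symm
  -- treated and control totals
  have ht : oR μ G A S Y g true false false + oR μ G A S Y g true false true
      + oR μ G A S Y g true true false + oR μ G A S Y g true true true = paT := by
    rw [hoT, hoT, hoT, hoT]
    rw [← add_div, ← add_div, ← add_div, div_eq_iff hn.ne']
    linear_combination paT * hwsum
  have hnt : oR μ G A S Y g false false false + oR μ G A S Y g false false true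
      + oR μ G A S Y g false true false + oR μ G A S Y g false true true = n - paT := by
    rw [hoF, hoF, hoF, hoF]
    rw [← add_div, ← add_div, ← add_div, div_eq_iff hn.ne']
    linear_combination (n - paT) * hwsum
  -- conditional entries
  have hentry : ∀ c, condP μ {ω | S0 ω = c ∧ S1 ω = true} {ω | G ω = g}
      = (w c true false false + w c true false true + w c true true false
          + w c true true true) / n := by
    intro c
    have hseteq : {ω | S0 ω = c ∧ S1 ω = true} ∩ {ω | G ω = g}
        = {ω | S0 ω = c ∧ S1 ω = true ∧ G ω = g} := by
      ext ω; simp only [Set.mem_inter_iff, Set.mem_setOf_eq]; tauto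
    show (μ _).toReal / (μ _).toReal = _
    rw [hseteq, hstrat c true, ← hndef]
  have hUW : ∀ c, w c true false true + w c true true true
      = (w c true false false + w c true false true + w c true true false
          + w c true true true) *
          condP μ {ω | Y1 ω = true} {ω | S0 ω = c ∧ S1 ω = true} := by
    intro c
    by_cases h0 : μ {ω | S0 ω = c ∧ S1 ω = true ∧ G ω = g} = 0
    · have hz1 := hstrat c true
      rw [h0] at hz1
      simp only [ENNReal.toReal_zero] at hz1
      have hz2 := hstraty c true
      rw [measure_mono_null Set.inter_subset_right h0] at hz2
      simp only [ENNReal.toReal_zero] at hz2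
      rw [← hz1, ← hz2]
      ring
    · have hposs : 0 < μ {ω | S0 ω = c ∧ S1 ω = true ∧ G ω = g} := pos_iff_ne_zero.mpr h0
      have h7 := hA7 c true hposs
      have hlhs : condP μ {ω | Y1 ω = true} {ω | S0 ω = c ∧ S1 ω = true ∧ G ω = g}
          = (w c true false true + w c true true true)
            / (w c true false false + w c true false true + w c true true false
                + w c true true true) := by
        show (μ _).toReal / (μ _).toReal = _
        rw [hstraty c true, hstrat c true]
      rw [hlhs] at h7
      have hWpos : 0 < w c true false false + w c true false true + w c true true false
          + w c true true true := by
        rw [← hstrat c true]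
        exact ENNReal.toReal_pos h0 (measure_ne_top μ _)
      rw [div_eq_iff hWpos.ne'] at h7
      linarith [h7]
  refine ⟨?_, ?_, ?_, ?_⟩
  · -- C1
    rw [hentry false, ht, hnt]
    simp only [hoT, hoF, hw0]
    field_simp
    ring
  · -- C2
    rw [hentry true, hnt]
    simp only [hoF, hw0]
    field_simp
    ring
  · -- C3
    rw [hentry false, hentry true, ht]
    simp only [hoT, hw0]
    rw [div_mul_eq_mul_div, div_mul_eq_mul_div, ← hUW false, ← hUW true]
    field_simp
    ring
  · -- C4
    intro hpos00
    have hseteq : {ω | Y1 ω = true} ∩ {ω | S0 ω = false ∧ S1 ω = false ∧ G ω = g}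
        = {ω | Y1 ω = true} ∩ {ω | S0 ω = false ∧ S1 ω = false ∧ G ω = g} := rfl
    have hW00 : 0 < w false false false false + w false false false true
        + w false false true false + w false false true true := by
      rw [← hstrat false false]
      exact ENNReal.toReal_pos hpos00.ne' (measure_ne_top μ _)
    have hlhs : condP μ {ω | Y1 ω = true} {ω | S0 ω = false ∧ S1 ω = false ∧ G ω = g}
        = (w false false false true + w false false true true)
          / (w false false false false + w false false false true
              + w false false true false + w false false true true) := by
      show (μ _).toReal / (μ _).toReal = _
      rw [hstraty false false, hstrat false false]
    rw [hlhs]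
    have hden : oR μ G A S Y g true false false + oR μ G A S Y g true false true
        = paT * (w false false false false + w false false false true
            + w false false true false + w false false true true) / n := by
      simp only [hoT, hw0]
      ring
    have hnum : oR μ G A S Y g true false true
        = paT * (w false false false true + w false false true true) / n := by
      simp only [hoT, hw0]
      ring
    rw [hden, hnum]
    rw [div_div_div_comm, div_self hn.ne', div_one, mul_div_mul_left _ _ hovT.ne']

lemma rank_two_inj {m : ℕ} (M : Matrix (Fin m) (Fin 2) ℝ) (h : M.rank = 2)
    (x y : Fin 2 → ℝ) (hxy : M.mulVec x = M.mulVec y) : x = y := by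
  have hrn := M.mulVecLin.finrank_range_add_finrank_ker
  rw [Matrix.rank] at h
  rw [h, Module.finrank_fin_fun] at hrn
  have hker : LinearMap.ker M.mulVecLin = ⊥ := Submodule.finrank_eq_zero.mp (by omega)
  have hinj := LinearMap.ker_eq_bot.mp hker
  exact hinj (show M.mulVecLin x = M.mulVecLin y by simpa [Matrix.mulVecLin_apply] using hxy)


/-- **Theorem 3(a).** Under Assumptions 5, 7, 8 and Condition 4(i), the treated-arm
principal-stratum outcome distribution `P(Y¹=1 | S⁰=a, S¹=b, G=g)` is identified from the
observed data distribution for all principal strata `(a,b) ∈ {(0,0),(0,1),(1,1)}`. -/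
theorem stmt7
    {Ω Ω' : Type*} [MeasurableSpace Ω] [MeasurableSpace Ω']
    (μ : Measure Ω) (μ' : Measure Ω')
    [IsProbabilityMeasure μ] [IsProbabilityMeasure μ']
    {m : ℕ} (hm : 1 ≤ m)
    (G : Ω → Fin m) (A S0 S1 Y0 Y1 S Y : Ω → Bool)
    (G' : Ω' → Fin m) (A' S0' S1' Y0' Y1' S' Y' : Ω' → Bool)
    (hGmeas : Measurable G) (hAmeas : Measurable A)
    (hS0meas : Measurable S0) (hS1meas : Measurable S1)
    (hY0meas : Measurable Y0) (hY1meas : Measurable Y1)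
    (hG'meas : Measurable G') (hA'meas : Measurable A')
    (hS0'meas : Measurable S0') (hS1'meas : Measurable S1')
    (hY0'meas : Measurable Y0') (hY1'meas : Measurable Y1')
    (hSdef : ∀ ω, S ω = bif A ω then S1 ω else S0 ω)
    (hYdef : ∀ ω, Y ω = bif A ω then Y1 ω else Y0 ω)
    (hS'def : ∀ ω, S' ω = bif A' ω then S1' ω else S0' ω)
    (hY'def : ∀ ω, Y' ω = bif A' ω then Y1' ω else Y0' ω)
    -- Assumption 5 for μ
    (hA5pos : ∀ g : Fin m, 0 < μ {ω | G ω = g})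
    (hA5ov : ∀ g : Fin m, 0 < condP μ {ω | A ω = true} {ω | G ω = g} ∧
        condP μ {ω | A ω = true} {ω | G ω = g} < 1)
    (hA5ind : ∀ (g : Fin m) (a s0 s1 y0 y1 : Bool),
      condP μ {ω | A ω = a ∧ S0 ω = s0 ∧ S1 ω = s1 ∧ Y0 ω = y0 ∧ Y1 ω = y1} {ω | G ω = g} =
        condP μ {ω | A ω = a} {ω | G ω = g} *
          condP μ {ω | S0 ω = s0 ∧ S1 ω = s1 ∧ Y0 ω = y0 ∧ Y1 ω = y1} {ω | G ω = g})
    -- Assumption 5 for μ'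
    (hA5pos' : ∀ g : Fin m, 0 < μ' {ω | G' ω = g})
    (hA5ov' : ∀ g : Fin m, 0 < condP μ' {ω | A' ω = true} {ω | G' ω = g} ∧
        condP μ' {ω | A' ω = true} {ω | G' ω = g} < 1)
    (hA5ind' : ∀ (g : Fin m) (a s0 s1 y0 y1 : Bool),
      condP μ' {ω | A' ω = a ∧ S0' ω = s0 ∧ S1' ω = s1 ∧ Y0' ω = y0 ∧ Y1' ω = y1}
          {ω | G' ω = g} =
        condP μ' {ω | A' ω = a} {ω | G' ω = g} *
          condP μ' {ω | S0' ω = s0 ∧ S1' ω = s1 ∧ Y0' ω = y0 ∧ Y1' ω = y1} {ω | G' ω = g})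
    -- Assumption 7 for μ
    (hA7 : ∀ (s0 s1 : Bool) (g : Fin m), 0 < μ {ω | S0 ω = s0 ∧ S1 ω = s1 ∧ G ω = g} →
      condP μ {ω | Y1 ω = true} {ω | S0 ω = s0 ∧ S1 ω = s1 ∧ G ω = g} =
        condP μ {ω | Y1 ω = true} {ω | S0 ω = s0 ∧ S1 ω = s1} ∧
      condP μ {ω | Y0 ω = true} {ω | S0 ω = s0 ∧ S1 ω = s1 ∧ G ω = g} =
        condP μ {ω | Y0 ω = true} {ω | S0 ω = s0 ∧ S1 ω = s1})
    -- Assumption 7 for μ'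
    (hA7' : ∀ (s0 s1 : Bool) (g : Fin m), 0 < μ' {ω | S0' ω = s0 ∧ S1' ω = s1 ∧ G' ω = g} →
      condP μ' {ω | Y1' ω = true} {ω | S0' ω = s0 ∧ S1' ω = s1 ∧ G' ω = g} =
        condP μ' {ω | Y1' ω = true} {ω | S0' ω = s0 ∧ S1' ω = s1} ∧
      condP μ' {ω | Y0' ω = true} {ω | S0' ω = s0 ∧ S1' ω = s1 ∧ G' ω = g} =
        condP μ' {ω | Y0' ω = true} {ω | S0' ω = s0 ∧ S1' ω = s1})
    -- Assumption 8 (monotonicity) for μ and μ'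
    (hA8 : μ {ω | S0 ω ≤ S1 ω} = 1)
    (hA8' : μ' {ω | S0' ω ≤ S1' ω} = 1)
    -- Condition 4(i): columns P(S⁰=0, S¹=1 | G=g) and P(S⁰=1, S¹=1 | G=g)
    (hC4i : (Matrix.of fun (g : Fin m) (j : Fin 2) =>
      condP μ {ω | S0 ω = (j = 1 : Bool) ∧ S1 ω = true} {ω | G ω = g}).rank = 2)
    (hC4i' : (Matrix.of fun (g : Fin m) (j : Fin 2) =>
      condP μ' {ω | S0' ω = (j = 1 : Bool) ∧ S1' ω = true} {ω | G' ω = g}).rank = 2)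
    -- equal observed data distributions
    (hobs : ∀ (g : Fin m) (a s y : Bool),
      μ {ω | G ω = g ∧ A ω = a ∧ S ω = s ∧ Y ω = y} =
        μ' {ω | G' ω = g ∧ A' ω = a ∧ S' ω = s ∧ Y' ω = y}) :
    ∀ a b : Bool, (a, b) ≠ (true, false) → ∀ g : Fin m,
      0 < μ {ω | S0 ω = a ∧ S1 ω = b ∧ G ω = g} →
      0 < μ' {ω | S0' ω = a ∧ S1' ω = b ∧ G' ω = g} →
      condP μ {ω | Y1 ω = true} {ω | S0 ω = a ∧ S1 ω = b ∧ G ω = g} =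
        condP μ' {ω | Y1' ω = true} {ω | S0' ω = a ∧ S1' ω = b ∧ G' ω = g} := by
  
  have hoo : ∀ (gg : Fin m) (aa ss yy : Bool),
      oR μ G A S Y gg aa ss yy = oR μ' G' A' S' Y' gg aa ss yy := by
    intro gg aa ss yy
    unfold oR
    rw [hobs]
  have hM := fun gg => model_facts μ hGmeas hAmeas hS0meas hS1meas hY0meas hY1meas
    hSdef hYdef gg (hA5pos gg) (hA5ov gg) (hA5ind gg)
    (fun s0 s1 h => (hA7 s0 s1 gg h).1) hA8
  have hM' := fun gg => model_facts μ' hG'meas hA'meas hS0'meas hS1'meas hY0'meas hY1'meas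
    hS'def hY'def gg (hA5pos' gg) (hA5ov' gg) (hA5ind' gg)
    (fun s0 s1 h => (hA7' s0 s1 gg h).1) hA8'
  set MM := (Matrix.of fun (g : Fin m) (j : Fin 2) =>
      condP μ {ω | S0 ω = (j = 1 : Bool) ∧ S1 ω = true} {ω | G ω = g}) with hMMdef
  have hent0 : ∀ gg, MM gg 0 = condP μ {ω | S0 ω = false ∧ S1 ω = true} {ω | G ω = gg} := by
    intro gg
    rw [hMMdef]
    simp only [Matrix.of_apply]
    norm_num
  have hent1 : ∀ gg, MM gg 1 = condP μ {ω | S0 ω = true ∧ S1 ω = true} {ω | G ω = gg} := by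
    intro gg
    rw [hMMdef]
    simp only [Matrix.of_apply]
    norm_num
  set θ0 : ℝ := condP μ {ω | Y1 ω = true} {ω | S0 ω = false ∧ S1 ω = true} with hθ0
  set θ1 : ℝ := condP μ {ω | Y1 ω = true} {ω | S0 ω = true ∧ S1 ω = true} with hθ1
  set θ0' : ℝ := condP μ' {ω | Y1' ω = true} {ω | S0' ω = false ∧ S1' ω = true} with hθ0'
  set θ1' : ℝ := condP μ' {ω | Y1' ω = true} {ω | S0' ω = true ∧ S1' ω = true} with hθ1'
  have hgen : ∀ gg, MM gg 0 * θ0 + MM gg 1 * θ1 = MM gg 0 * θ0' + MM gg 1 * θ1' := by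
    intro gg
    rw [hent0 gg, hent1 gg]
    rw [(hM gg).2.2.1]
    rw [show condP μ {ω | S0 ω = false ∧ S1 ω = true} {ω | G ω = gg}
          = condP μ' {ω | S0' ω = false ∧ S1' ω = true} {ω | G' ω = gg} from by
        rw [(hM gg).1, (hM' gg).1]; simp only [hoo],
       show condP μ {ω | S0 ω = true ∧ S1 ω = true} {ω | G ω = gg}
          = condP μ' {ω | S0' ω = true ∧ S1' ω = true} {ω | G' ω = gg} from by
        rw [(hM gg).2.1, (hM' gg).2.1]; simp only [hoo]]
    rw [(hM' gg).2.2.1]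
    simp only [hoo]
  have hsys : MM.mulVec ![θ0, θ1] = MM.mulVec ![θ0', θ1'] := by
    funext gg
    simp only [Matrix.mulVec, dotProduct, Fin.sum_univ_two, Matrix.cons_val_zero,
      Matrix.cons_val_one, Matrix.head_cons]
    exact hgen gg
  have hθeq := rank_two_inj MM hC4i _ _ hsys
  have hθ0eq : θ0 = θ0' := by
    have := congrFun hθeq 0
    simpa using this
  have hθ1eq : θ1 = θ1' := by
    have := congrFun hθeq 1
    simpa using this
  intro a b hne g hposμ hposμ'
  match a, b with
  | true, false => exact absurd rfl hne
  | false, false =>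
      rw [(hM g).2.2.2 hposμ, (hM' g).2.2.2 hposμ']
      simp only [hoo]
  | false, true =>
      rw [(hA7 false true g hposμ).1, (hA7' false true g hposμ').1, ← hθ0, ← hθ0', hθ0eq]
  | true, true =>
      rw [(hA7 true true g hposμ).1, (hA7' true true g hposμ').1, ← hθ1, ← hθ1', hθ1eq]
end

section
/- Identifiability of the control-arm principal-stratum outcome distribution (Theorem 3(b)): Suppose two models (Ω, ℱ, μ, G, A, S⁰, S¹, Y⁰, Y¹) and (Ω', ℱ', μ', G', A', S'⁰, S'¹, Y'⁰, Y'¹) each satisfy Assumption 5, Assumption 7, Assumption 8, and Condition 4(ii), and have the same observed data distribution, i.e. μ(G=g, A=a, S=s, Y=y) = μ'(G'=g, A'=a, S'=s, Y'=y) for all g ∈ Fin m and a, s, y ∈ {0,1}. Then for all (a,b) ∈ {(0,0),(0,1),(1,1)} and every g such that μ(S⁰=a, S¹=b, G=g) > 0 and μ'(S'⁰=a, S'¹=b, G'=g) > 0: P(Y⁰=1 | S⁰=a, S¹=b, G=g) = P'(Y'⁰=1 | S'⁰=a, S'¹=b, G'=g). -/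
open MeasureTheory ProbabilityTheory

set_option linter.unusedSectionVars false
set_option maxHeartbeats 1000000

section Aux
variable {Ω : Type*} [MeasurableSpace Ω]

lemma measBool {f : Ω → Bool} (hf : Measurable f) (b : Bool) : MeasurableSet {ω | f ω = b} :=
  hf (measurableSet_singleton b)

lemma measQ {m : ℕ} {G : Ω → Fin m} {A S0 S1 Y0 Y1 : Ω → Bool}
    (hG : Measurable G) (hA : Measurable A) (h0 : Measurable S0) (h1 : Measurable S1)
    (hy0 : Measurable Y0) (hy1 : Measurable Y1)
    (R : Fin m → Bool → Bool → Bool → Bool → Bool → Prop) :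
    MeasurableSet {ω | R (G ω) (A ω) (S0 ω) (S1 ω) (Y0 ω) (Y1 ω)} := by
  have hmap : Measurable (fun ω => (G ω, A ω, S0 ω, S1 ω, Y0 ω, Y1 ω)) :=
    hG.prodMk (hA.prodMk (h0.prodMk (h1.prodMk (hy0.prodMk hy1))))
  exact hmap ((Set.toFinite {x : Fin m × Bool × Bool × Bool × Bool × Bool |
    R x.1 x.2.1 x.2.2.1 x.2.2.2.1 x.2.2.2.2.1 x.2.2.2.2.2}).measurableSet)

lemma split1 (μ : Measure Ω) [IsFiniteMeasure μ] {f : Ω → Bool} (hf : Measurable f)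
    {P : Ω → Prop} (hP : MeasurableSet {ω | P ω}) :
    (μ {ω | P ω}).toReal = ∑ b : Bool, (μ {ω | P ω ∧ f ω = b}).toReal := by
  rw [Fintype.sum_bool]
  have hset : {ω | P ω} = {ω | P ω ∧ f ω = true} ∪ {ω | P ω ∧ f ω = false} := by
    ext ω; rcases Bool.eq_false_or_eq_true (f ω) with h | h <;> simp [h]
  have hdis : Disjoint {ω | P ω ∧ f ω = true} {ω | P ω ∧ f ω = false} := by
    rw [Set.disjoint_left]; rintro ω ⟨-, h1⟩ ⟨-, h2⟩; rw [h1] at h2; exact Bool.noConfusion h2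
  have hm2 : MeasurableSet {ω | P ω ∧ f ω = false} := hP.inter (measBool hf false)
  rw [hset, measure_union hdis hm2,
    ENNReal.toReal_add (measure_ne_top _ _) (measure_ne_top _ _)]

end Aux

section Model

variable {Ω : Type*} [MeasurableSpace Ω] {μ : Measure Ω} [IsProbabilityMeasure μ] {m : ℕ}
  {G : Ω → Fin m} {A S0 S1 Y0 Y1 S Y : Ω → Bool}

lemma master (hG : Measurable G) (hA : Measurable A) (h0 : Measurable S0) (h1 : Measurable S1)
    (hy0 : Measurable Y0) (hy1 : Measurable Y1)
    (g : Fin m) (Q : Bool → Bool → Bool → Bool → Bool → Prop)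
    [∀ a s0 s1 y0 y1, Decidable (Q a s0 s1 y0 y1)] :
    (μ {ω | G ω = g ∧ Q (A ω) (S0 ω) (S1 ω) (Y0 ω) (Y1 ω)}).toReal =
      ∑ a : Bool, ∑ s0 : Bool, ∑ s1 : Bool, ∑ y0 : Bool, ∑ y1 : Bool,
        if Q a s0 s1 y0 y1 then
          (μ {ω | G ω = g ∧ A ω = a ∧ S0 ω = s0 ∧ S1 ω = s1 ∧ Y0 ω = y0 ∧ Y1 ω = y1}).toReal
        else 0 := by
  rw [split1 μ hA (measQ hG hA h0 h1 hy0 hy1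
    (fun gv av s0v s1v y0v y1v => gv = g ∧ Q av s0v s1v y0v y1v))]
  refine Finset.sum_congr rfl fun a _ => ?_
  rw [split1 μ h0 (measQ hG hA h0 h1 hy0 hy1
    (fun gv av s0v s1v y0v y1v => (gv = g ∧ Q av s0v s1v y0v y1v) ∧ av = a))]
  refine Finset.sum_congr rfl fun s0 _ => ?_
  rw [split1 μ h1 (measQ hG hA h0 h1 hy0 hy1
    (fun gv av s0v s1v y0v y1v => ((gv = g ∧ Q av s0v s1v y0v y1v) ∧ av = a) ∧ s0v = s0))]
  refine Finset.sum_congr rfl fun s1 _ => ?_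
  rw [split1 μ hy0 (measQ hG hA h0 h1 hy0 hy1
    (fun gv av s0v s1v y0v y1v => (((gv = g ∧ Q av s0v s1v y0v y1v) ∧ av = a) ∧ s0v = s0)
      ∧ s1v = s1))]
  refine Finset.sum_congr rfl fun y0 _ => ?_
  rw [split1 μ hy1 (measQ hG hA h0 h1 hy0 hy1
    (fun gv av s0v s1v y0v y1v => ((((gv = g ∧ Q av s0v s1v y0v y1v) ∧ av = a) ∧ s0v = s0)
      ∧ s1v = s1) ∧ y0v = y0))]
  refine Finset.sum_congr rfl fun y1 _ => ?_
  by_cases hQ : Q a s0 s1 y0 y1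
  · rw [if_pos hQ]
    have hset : {ω | ((((((G ω = g ∧ Q (A ω) (S0 ω) (S1 ω) (Y0 ω) (Y1 ω)) ∧ A ω = a)
        ∧ S0 ω = s0) ∧ S1 ω = s1) ∧ Y0 ω = y0) ∧ Y1 ω = y1)} =
        {ω | G ω = g ∧ A ω = a ∧ S0 ω = s0 ∧ S1 ω = s1 ∧ Y0 ω = y0 ∧ Y1 ω = y1} := by
      ext ω
      simp only [Set.mem_setOf_eq]
      constructor
      · rintro ⟨⟨⟨⟨⟨⟨hg, -⟩, ha⟩, hs0⟩, hs1⟩, hy0'⟩, hy1'⟩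
        exact ⟨hg, ha, hs0, hs1, hy0', hy1'⟩
      · rintro ⟨hg, ha, hs0, hs1, hy0', hy1'⟩
        refine ⟨⟨⟨⟨⟨⟨hg, ?_⟩, ha⟩, hs0⟩, hs1⟩, hy0'⟩, hy1'⟩
        rw [ha, hs0, hs1, hy0', hy1']; exact hQ
    rw [hset]
  · rw [if_neg hQ]
    have hempty : {ω | ((((((G ω = g ∧ Q (A ω) (S0 ω) (S1 ω) (Y0 ω) (Y1 ω)) ∧ A ω = a)
        ∧ S0 ω = s0) ∧ S1 ω = s1) ∧ Y0 ω = y0) ∧ Y1 ω = y1)} = (∅ : Set Ω) := by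
      ext ω
      simp only [Set.mem_setOf_eq, Set.mem_empty_iff_false, iff_false]
      rintro ⟨⟨⟨⟨⟨⟨-, hq⟩, ha⟩, hs0⟩, hs1⟩, hy0'⟩, hy1'⟩
      rw [ha, hs0, hs1, hy0', hy1'] at hq
      exact hQ hq
    rw [hempty]
    simp

lemma monoZero (hG : Measurable G) (hA : Measurable A) (h0 : Measurable S0)
    (h1 : Measurable S1) (hy0 : Measurable Y0) (hy1 : Measurable Y1)
    (hA8 : μ {ω | S0 ω ≤ S1 ω} = 1) (g : Fin m) (a y0 y1 : Bool) :
    (μ {ω | G ω = g ∧ A ω = a ∧ S0 ω = true ∧ S1 ω = false ∧ Y0 ω = y0 ∧ Y1 ω = y1}).toReal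
      = 0 := by
  have hms : MeasurableSet {ω | S0 ω ≤ S1 ω} := by
    have := measQ (G := G) (A := A) (S0 := S0) (S1 := S1) (Y0 := Y0) (Y1 := Y1)
      hG hA h0 h1 hy0 hy1 (fun _ _ s0v s1v _ _ => s0v ≤ s1v)
    exact this
  have hcompl : μ {ω | S0 ω ≤ S1 ω}ᶜ = 0 := by
    rw [measure_compl hms (measure_ne_top μ _), hA8, measure_univ, tsub_self]
  have hsub : {ω | G ω = g ∧ A ω = a ∧ S0 ω = true ∧ S1 ω = false ∧ Y0 ω = y0 ∧ Y1 ω = y1}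
      ⊆ {ω | S0 ω ≤ S1 ω}ᶜ := by
    rintro ω ⟨-, -, hs0, hs1, -, -⟩
    simp only [Set.mem_compl_iff, Set.mem_setOf_eq, hs0, hs1]
    decide
  rw [measure_mono_null hsub hcompl]
  simp

lemma obsControl (hSdef : ∀ ω, S ω = bif A ω then S1 ω else S0 ω)
    (hYdef : ∀ ω, Y ω = bif A ω then Y1 ω else Y0 ω) (g : Fin m) (s y : Bool) :
    μ {ω | G ω = g ∧ A ω = false ∧ S ω = s ∧ Y ω = y} =
      μ {ω | G ω = g ∧ A ω = false ∧ S0 ω = s ∧ Y0 ω = y} := by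
  congr 1
  ext ω
  simp only [Set.mem_setOf_eq]
  constructor
  · rintro ⟨hg, ha, hs, hy⟩
    rw [hSdef ω, ha] at hs
    rw [hYdef ω, ha] at hy
    exact ⟨hg, ha, hs, hy⟩
  · rintro ⟨hg, ha, hs, hy⟩
    refine ⟨hg, ha, ?_, ?_⟩
    · rw [hSdef ω, ha]; exact hs
    · rw [hYdef ω, ha]; exact hy

lemma obsTreat (hSdef : ∀ ω, S ω = bif A ω then S1 ω else S0 ω)
    (hYdef : ∀ ω, Y ω = bif A ω then Y1 ω else Y0 ω) (g : Fin m) (s y : Bool) :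
    μ {ω | G ω = g ∧ A ω = true ∧ S ω = s ∧ Y ω = y} =
      μ {ω | G ω = g ∧ A ω = true ∧ S1 ω = s ∧ Y1 ω = y} := by
  congr 1
  ext ω
  simp only [Set.mem_setOf_eq]
  constructor
  · rintro ⟨hg, ha, hs, hy⟩
    rw [hSdef ω, ha] at hs
    rw [hYdef ω, ha] at hy
    exact ⟨hg, ha, hs, hy⟩
  · rintro ⟨hg, ha, hs, hy⟩
    refine ⟨hg, ha, ?_, ?_⟩
    · rw [hSdef ω, ha]; exact hs
    · rw [hYdef ω, ha]; exact hy

lemma indFull (hG : Measurable G) (hA : Measurable A) (h0 : Measurable S0)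
    (h1 : Measurable S1) (hy0 : Measurable Y0) (hy1 : Measurable Y1)
    (hA5pos : ∀ g : Fin m, 0 < μ {ω | G ω = g})
    (hA5ind : ∀ (g : Fin m) (a s0 s1 y0 y1 : Bool),
      condP μ {ω | A ω = a ∧ S0 ω = s0 ∧ S1 ω = s1 ∧ Y0 ω = y0 ∧ Y1 ω = y1} {ω | G ω = g} =
        condP μ {ω | A ω = a} {ω | G ω = g} *
          condP μ {ω | S0 ω = s0 ∧ S1 ω = s1 ∧ Y0 ω = y0 ∧ Y1 ω = y1} {ω | G ω = g})
    (g : Fin m) (a s0 s1 y0 y1 : Bool) :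
    (μ {ω | G ω = g ∧ A ω = a ∧ S0 ω = s0 ∧ S1 ω = s1 ∧ Y0 ω = y0 ∧ Y1 ω = y1}).toReal *
        (μ {ω | G ω = g}).toReal =
      (μ {ω | G ω = g ∧ A ω = a}).toReal *
        ((μ {ω | G ω = g ∧ A ω = false ∧ S0 ω = s0 ∧ S1 ω = s1 ∧ Y0 ω = y0 ∧ Y1 ω = y1}).toReal
          + (μ {ω | G ω = g ∧ A ω = true ∧ S0 ω = s0 ∧ S1 ω = s1 ∧ Y0 ω = y0 ∧ Y1 ω = y1}).toReal) := by
  have hd : 0 < (μ {ω | G ω = g}).toReal :=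
    ENNReal.toReal_pos (hA5pos g).ne' (measure_ne_top μ _)
  have h := hA5ind g a s0 s1 y0 y1
  unfold condP at h
  rw [show {ω | A ω = a ∧ S0 ω = s0 ∧ S1 ω = s1 ∧ Y0 ω = y0 ∧ Y1 ω = y1} ∩ {ω | G ω = g}
      = {ω | G ω = g ∧ A ω = a ∧ S0 ω = s0 ∧ S1 ω = s1 ∧ Y0 ω = y0 ∧ Y1 ω = y1} from by
    ext ω; simp only [Set.mem_inter_iff, Set.mem_setOf_eq]; tauto] at h
  rw [show {ω | A ω = a} ∩ {ω | G ω = g} = {ω | G ω = g ∧ A ω = a} from by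
    ext ω; simp only [Set.mem_inter_iff, Set.mem_setOf_eq]; tauto] at h
  rw [show {ω | S0 ω = s0 ∧ S1 ω = s1 ∧ Y0 ω = y0 ∧ Y1 ω = y1} ∩ {ω | G ω = g}
      = {ω | G ω = g ∧ S0 ω = s0 ∧ S1 ω = s1 ∧ Y0 ω = y0 ∧ Y1 ω = y1} from by
    ext ω; simp only [Set.mem_inter_iff, Set.mem_setOf_eq]; tauto] at h
  have hcomp : (μ {ω | G ω = g ∧ S0 ω = s0 ∧ S1 ω = s1 ∧ Y0 ω = y0 ∧ Y1 ω = y1}).toReal =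
      (μ {ω | G ω = g ∧ A ω = false ∧ S0 ω = s0 ∧ S1 ω = s1 ∧ Y0 ω = y0 ∧ Y1 ω = y1}).toReal
      + (μ {ω | G ω = g ∧ A ω = true ∧ S0 ω = s0 ∧ S1 ω = s1 ∧ Y0 ω = y0 ∧ Y1 ω = y1}).toReal := by
    rw [split1 μ hA (measQ hG hA h0 h1 hy0 hy1
      (fun gv _ s0v s1v y0v y1v => gv = g ∧ s0v = s0 ∧ s1v = s1 ∧ y0v = y0 ∧ y1v = y1)),
      Fintype.sum_bool]
    rw [show {ω | (G ω = g ∧ S0 ω = s0 ∧ S1 ω = s1 ∧ Y0 ω = y0 ∧ Y1 ω = y1) ∧ A ω = true}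
        = {ω | G ω = g ∧ A ω = true ∧ S0 ω = s0 ∧ S1 ω = s1 ∧ Y0 ω = y0 ∧ Y1 ω = y1} from by
      ext ω; simp only [Set.mem_setOf_eq]; tauto]
    rw [show {ω | (G ω = g ∧ S0 ω = s0 ∧ S1 ω = s1 ∧ Y0 ω = y0 ∧ Y1 ω = y1) ∧ A ω = false}
        = {ω | G ω = g ∧ A ω = false ∧ S0 ω = s0 ∧ S1 ω = s1 ∧ Y0 ω = y0 ∧ Y1 ω = y1} from by
      ext ω; simp only [Set.mem_setOf_eq]; tauto]
    ring
  rw [hcomp] at h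
  field_simp at h
  refine mul_right_cancel₀ hd.ne' ?_
  linear_combination (μ {ω | G ω = g}).toReal * h

lemma decompA (hG : Measurable G) (hA : Measurable A) (h0 : Measurable S0) (h1 : Measurable S1)
    (hy0 : Measurable Y0) (hy1 : Measurable Y1) (g : Fin m) :
    (μ {ω | G ω = g}).toReal =
      (μ {ω | G ω = g ∧ A ω = false}).toReal + (μ {ω | G ω = g ∧ A ω = true}).toReal := by
  have e0 := master (μ := μ) hG hA h0 h1 hy0 hy1 g (fun _ _ _ _ _ => True)
  have e1 := master (μ := μ) hG hA h0 h1 hy0 hy1 g (fun a _ _ _ _ => a = false)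
  have e2 := master (μ := μ) hG hA h0 h1 hy0 hy1 g (fun a _ _ _ _ => a = true)
  rw [show {ω | G ω = g ∧ True} = {ω | G ω = g} from by
    ext ω; simp only [Set.mem_setOf_eq, and_true]] at e0
  simp only [Fintype.sum_bool] at e0 e1 e2
  norm_num at e0 e1 e2
  rw [e0, e1, e2]
  ring

lemma decompControl (hG : Measurable G) (hA : Measurable A) (h0 : Measurable S0)
    (h1 : Measurable S1) (hy0 : Measurable Y0) (hy1 : Measurable Y1) (g : Fin m) :
    (μ {ω | G ω = g ∧ A ω = false}).toReal =
      (μ {ω | G ω = g ∧ A ω = false ∧ S0 ω = true ∧ Y0 ω = true}).toReal +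
      (μ {ω | G ω = g ∧ A ω = false ∧ S0 ω = true ∧ Y0 ω = false}).toReal +
      (μ {ω | G ω = g ∧ A ω = false ∧ S0 ω = false ∧ Y0 ω = true}).toReal +
      (μ {ω | G ω = g ∧ A ω = false ∧ S0 ω = false ∧ Y0 ω = false}).toReal := by
  have e1 := master (μ := μ) hG hA h0 h1 hy0 hy1 g (fun a _ _ _ _ => a = false)
  have c1 := master (μ := μ) hG hA h0 h1 hy0 hy1 g
    (fun a s0 _ y0 _ => a = false ∧ s0 = true ∧ y0 = true)
  have c2 := master (μ := μ) hG hA h0 h1 hy0 hy1 g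
    (fun a s0 _ y0 _ => a = false ∧ s0 = true ∧ y0 = false)
  have c3 := master (μ := μ) hG hA h0 h1 hy0 hy1 g
    (fun a s0 _ y0 _ => a = false ∧ s0 = false ∧ y0 = true)
  have c4 := master (μ := μ) hG hA h0 h1 hy0 hy1 g
    (fun a s0 _ y0 _ => a = false ∧ s0 = false ∧ y0 = false)
  simp only [Fintype.sum_bool] at e1 c1 c2 c3 c4
  norm_num at e1 c1 c2 c3 c4
  rw [e1, c1, c2, c3, c4]
  ring

lemma decompTreat (hG : Measurable G) (hA : Measurable A) (h0 : Measurable S0)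
    (h1 : Measurable S1) (hy0 : Measurable Y0) (hy1 : Measurable Y1) (g : Fin m) :
    (μ {ω | G ω = g ∧ A ω = true}).toReal =
      (μ {ω | G ω = g ∧ A ω = true ∧ S1 ω = true ∧ Y1 ω = true}).toReal +
      (μ {ω | G ω = g ∧ A ω = true ∧ S1 ω = true ∧ Y1 ω = false}).toReal +
      (μ {ω | G ω = g ∧ A ω = true ∧ S1 ω = false ∧ Y1 ω = true}).toReal +
      (μ {ω | G ω = g ∧ A ω = true ∧ S1 ω = false ∧ Y1 ω = false}).toReal := by
  have e1 := master (μ := μ) hG hA h0 h1 hy0 hy1 g (fun a _ _ _ _ => a = true)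
  have c1 := master (μ := μ) hG hA h0 h1 hy0 hy1 g
    (fun a _ s1 _ y1 => a = true ∧ s1 = true ∧ y1 = true)
  have c2 := master (μ := μ) hG hA h0 h1 hy0 hy1 g
    (fun a _ s1 _ y1 => a = true ∧ s1 = true ∧ y1 = false)
  have c3 := master (μ := μ) hG hA h0 h1 hy0 hy1 g
    (fun a _ s1 _ y1 => a = true ∧ s1 = false ∧ y1 = true)
  have c4 := master (μ := μ) hG hA h0 h1 hy0 hy1 g
    (fun a _ s1 _ y1 => a = true ∧ s1 = false ∧ y1 = false)
  simp only [Fintype.sum_bool] at e1 c1 c2 c3 c4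
  norm_num at e1 c1 c2 c3 c4
  rw [e1, c1, c2, c3, c4]
  ring

lemma margControl (hG : Measurable G) (hA : Measurable A) (h0 : Measurable S0)
    (h1 : Measurable S1) (hy0 : Measurable Y0) (hy1 : Measurable Y1)
    (hA5pos : ∀ g : Fin m, 0 < μ {ω | G ω = g})
    (hA5ind : ∀ (g : Fin m) (a s0 s1 y0 y1 : Bool),
      condP μ {ω | A ω = a ∧ S0 ω = s0 ∧ S1 ω = s1 ∧ Y0 ω = y0 ∧ Y1 ω = y1} {ω | G ω = g} =
        condP μ {ω | A ω = a} {ω | G ω = g} *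
          condP μ {ω | S0 ω = s0 ∧ S1 ω = s1 ∧ Y0 ω = y0 ∧ Y1 ω = y1} {ω | G ω = g})
    (g : Fin m) (s y : Bool) :
    (μ {ω | G ω = g ∧ S0 ω = s ∧ Y0 ω = y}).toReal * (μ {ω | G ω = g ∧ A ω = false}).toReal =
      (μ {ω | G ω = g ∧ A ω = false ∧ S0 ω = s ∧ Y0 ω = y}).toReal *
        (μ {ω | G ω = g}).toReal := by
  have e1 := master (μ := μ) hG hA h0 h1 hy0 hy1 g (fun a s0 _ y0 _ => a = false ∧ s0 = s ∧ y0 = y)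
  have eB := master (μ := μ) hG hA h0 h1 hy0 hy1 g (fun _ s0 _ y0 _ => s0 = s ∧ y0 = y)
  have h1' := indFull hG hA h0 h1 hy0 hy1 hA5pos hA5ind g false s true y true
  have h2 := indFull hG hA h0 h1 hy0 hy1 hA5pos hA5ind g false s true y false
  have h3 := indFull hG hA h0 h1 hy0 hy1 hA5pos hA5ind g false s false y true
  have h4 := indFull hG hA h0 h1 hy0 hy1 hA5pos hA5ind g false s false y false
  cases s <;> cases y <;>
  · simp only [Fintype.sum_bool] at e1 eB
    norm_num at e1 eB
    rw [e1, eB]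
    linear_combination -(h1' + h2 + h3 + h4)

lemma margTreat (hG : Measurable G) (hA : Measurable A) (h0 : Measurable S0)
    (h1 : Measurable S1) (hy0 : Measurable Y0) (hy1 : Measurable Y1)
    (hA5pos : ∀ g : Fin m, 0 < μ {ω | G ω = g})
    (hA5ind : ∀ (g : Fin m) (a s0 s1 y0 y1 : Bool),
      condP μ {ω | A ω = a ∧ S0 ω = s0 ∧ S1 ω = s1 ∧ Y0 ω = y0 ∧ Y1 ω = y1} {ω | G ω = g} =
        condP μ {ω | A ω = a} {ω | G ω = g} *
          condP μ {ω | S0 ω = s0 ∧ S1 ω = s1 ∧ Y0 ω = y0 ∧ Y1 ω = y1} {ω | G ω = g})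
    (g : Fin m) (s : Bool) :
    (μ {ω | G ω = g ∧ S1 ω = s}).toReal * (μ {ω | G ω = g ∧ A ω = true}).toReal =
      ((μ {ω | G ω = g ∧ A ω = true ∧ S1 ω = s ∧ Y1 ω = true}).toReal +
        (μ {ω | G ω = g ∧ A ω = true ∧ S1 ω = s ∧ Y1 ω = false}).toReal) *
        (μ {ω | G ω = g}).toReal := by
  have e1 := master (μ := μ) hG hA h0 h1 hy0 hy1 g (fun a _ s1 _ y1 => a = true ∧ s1 = s ∧ y1 = true)
  have e2 := master (μ := μ) hG hA h0 h1 hy0 hy1 g (fun a _ s1 _ y1 => a = true ∧ s1 = s ∧ y1 = false)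
  have eC := master (μ := μ) hG hA h0 h1 hy0 hy1 g (fun _ _ s1 _ _ => s1 = s)
  have h1' := indFull hG hA h0 h1 hy0 hy1 hA5pos hA5ind g true true s true true
  have h2 := indFull hG hA h0 h1 hy0 hy1 hA5pos hA5ind g true true s true false
  have h3 := indFull hG hA h0 h1 hy0 hy1 hA5pos hA5ind g true true s false true
  have h4 := indFull hG hA h0 h1 hy0 hy1 hA5pos hA5ind g true true s false false
  have h5 := indFull hG hA h0 h1 hy0 hy1 hA5pos hA5ind g true false s true true
  have h6 := indFull hG hA h0 h1 hy0 hy1 hA5pos hA5ind g true false s true false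
  have h7 := indFull hG hA h0 h1 hy0 hy1 hA5pos hA5ind g true false s false true
  have h8 := indFull hG hA h0 h1 hy0 hy1 hA5pos hA5ind g true false s false false
  cases s <;>
  · simp only [Fintype.sum_bool] at e1 e2 eC
    norm_num at e1 e2 eC
    rw [e1, e2, eC]
    linear_combination -(h1' + h2 + h3 + h4 + h5 + h6 + h7 + h8)

lemma strataF1 (hG : Measurable G) (hA : Measurable A) (h0 : Measurable S0)
    (h1 : Measurable S1) (hy0 : Measurable Y0) (hy1 : Measurable Y1)
    (hA8 : μ {ω | S0 ω ≤ S1 ω} = 1) (g : Fin m) :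
    (μ {ω | G ω = g ∧ S0 ω = true ∧ S1 ω = true}).toReal
      = (μ {ω | G ω = g ∧ S0 ω = true ∧ Y0 ω = true}).toReal
        + (μ {ω | G ω = g ∧ S0 ω = true ∧ Y0 ω = false}).toReal := by
  have e1 := master (μ := μ) hG hA h0 h1 hy0 hy1 g (fun _ s0 s1 _ _ => s0 = true ∧ s1 = true)
  have e2 := master (μ := μ) hG hA h0 h1 hy0 hy1 g (fun _ s0 _ y0 _ => s0 = true ∧ y0 = true)
  have e3 := master (μ := μ) hG hA h0 h1 hy0 hy1 g (fun _ s0 _ y0 _ => s0 = true ∧ y0 = false)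
  simp only [Fintype.sum_bool] at e1 e2 e3
  norm_num at e1 e2 e3
  rw [e1, e2, e3]
  have hz := monoZero hG hA h0 h1 hy0 hy1 hA8 g
  linarith [hz true true true, hz true true false, hz true false true, hz true false false,
    hz false true true, hz false true false, hz false false true, hz false false false]

lemma strataF2 (hG : Measurable G) (hA : Measurable A) (h0 : Measurable S0)
    (h1 : Measurable S1) (hy0 : Measurable Y0) (hy1 : Measurable Y1)
    (hA8 : μ {ω | S0 ω ≤ S1 ω} = 1) (g : Fin m) :
    (μ {ω | G ω = g ∧ S0 ω = false ∧ S1 ω = false}).toReal =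
      (μ {ω | G ω = g ∧ S1 ω = false}).toReal := by
  have e1 := master (μ := μ) hG hA h0 h1 hy0 hy1 g (fun _ s0 s1 _ _ => s0 = false ∧ s1 = false)
  have e2 := master (μ := μ) hG hA h0 h1 hy0 hy1 g (fun _ _ s1 _ _ => s1 = false)
  simp only [Fintype.sum_bool] at e1 e2
  norm_num at e1 e2
  rw [e1, e2]
  have hz := monoZero hG hA h0 h1 hy0 hy1 hA8 g
  linarith [hz true true true, hz true true false, hz true false true, hz true false false,
    hz false true true, hz false true false, hz false false true, hz false false false]

lemma strataF3 (hG : Measurable G) (hA : Measurable A) (h0 : Measurable S0)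
    (h1 : Measurable S1) (hy0 : Measurable Y0) (hy1 : Measurable Y1)
    (hA8 : μ {ω | S0 ω ≤ S1 ω} = 1) (g : Fin m) :
    (μ {ω | G ω = g ∧ S0 ω = false ∧ S1 ω = true}).toReal =
      (μ {ω | G ω = g}).toReal - (μ {ω | G ω = g ∧ S0 ω = true ∧ S1 ω = true}).toReal
        - (μ {ω | G ω = g ∧ S0 ω = false ∧ S1 ω = false}).toReal := by
  have e0 := master (μ := μ) hG hA h0 h1 hy0 hy1 g (fun _ _ _ _ _ => True)
  rw [show {ω | G ω = g ∧ True} = {ω | G ω = g} from by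
    ext ω; simp only [Set.mem_setOf_eq, and_true]] at e0
  have e1 := master (μ := μ) hG hA h0 h1 hy0 hy1 g (fun _ s0 s1 _ _ => s0 = false ∧ s1 = true)
  have e2 := master (μ := μ) hG hA h0 h1 hy0 hy1 g (fun _ s0 s1 _ _ => s0 = true ∧ s1 = true)
  have e3 := master (μ := μ) hG hA h0 h1 hy0 hy1 g (fun _ s0 s1 _ _ => s0 = false ∧ s1 = false)
  simp only [Fintype.sum_bool] at e0 e1 e2 e3
  norm_num at e0 e1 e2 e3
  rw [e0, e1, e2, e3]
  have hz := monoZero hG hA h0 h1 hy0 hy1 hA8 g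
  linarith [hz true true true, hz true true false, hz true false true, hz true false false,
    hz false true true, hz false true false, hz false false true, hz false false false]

lemma strataF4 (hG : Measurable G) (hA : Measurable A) (h0 : Measurable S0)
    (h1 : Measurable S1) (hy0 : Measurable Y0) (hy1 : Measurable Y1)
    (hA8 : μ {ω | S0 ω ≤ S1 ω} = 1) (g : Fin m) :
    (μ {ω | G ω = g ∧ S0 ω = true ∧ S1 ω = true ∧ Y0 ω = true}).toReal =
      (μ {ω | G ω = g ∧ S0 ω = true ∧ Y0 ω = true}).toReal := by
  have e1 := master (μ := μ) hG hA h0 h1 hy0 hy1 g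
    (fun _ s0 s1 y0 _ => s0 = true ∧ s1 = true ∧ y0 = true)
  have e2 := master (μ := μ) hG hA h0 h1 hy0 hy1 g (fun _ s0 _ y0 _ => s0 = true ∧ y0 = true)
  simp only [Fintype.sum_bool] at e1 e2
  norm_num at e1 e2
  rw [e1, e2]
  have hz := monoZero hG hA h0 h1 hy0 hy1 hA8 g
  linarith [hz true true true, hz true true false, hz true false true, hz true false false,
    hz false true true, hz false true false, hz false false true, hz false false false]

lemma strataF5 (hG : Measurable G) (hA : Measurable A) (h0 : Measurable S0)
    (h1 : Measurable S1) (hy0 : Measurable Y0) (hy1 : Measurable Y1) (g : Fin m) :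
    (μ {ω | G ω = g ∧ S0 ω = false ∧ Y0 ω = true}).toReal =
      (μ {ω | G ω = g ∧ S0 ω = false ∧ S1 ω = true ∧ Y0 ω = true}).toReal +
      (μ {ω | G ω = g ∧ S0 ω = false ∧ S1 ω = false ∧ Y0 ω = true}).toReal := by
  have e1 := master (μ := μ) hG hA h0 h1 hy0 hy1 g (fun _ s0 _ y0 _ => s0 = false ∧ y0 = true)
  have e2 := master (μ := μ) hG hA h0 h1 hy0 hy1 g
    (fun _ s0 s1 y0 _ => s0 = false ∧ s1 = true ∧ y0 = true)
  have e3 := master (μ := μ) hG hA h0 h1 hy0 hy1 g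
    (fun _ s0 s1 y0 _ => s0 = false ∧ s1 = false ∧ y0 = true)
  simp only [Fintype.sum_bool] at e1 e2 e3
  norm_num at e1 e2 e3
  rw [e1, e2, e3]
  ring

lemma a7cons
    (hA7 : ∀ (s0 s1 : Bool) (g : Fin m), 0 < μ {ω | S0 ω = s0 ∧ S1 ω = s1 ∧ G ω = g} →
      condP μ {ω | Y1 ω = true} {ω | S0 ω = s0 ∧ S1 ω = s1 ∧ G ω = g} =
        condP μ {ω | Y1 ω = true} {ω | S0 ω = s0 ∧ S1 ω = s1} ∧
      condP μ {ω | Y0 ω = true} {ω | S0 ω = s0 ∧ S1 ω = s1 ∧ G ω = g} =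
        condP μ {ω | Y0 ω = true} {ω | S0 ω = s0 ∧ S1 ω = s1})
    (g : Fin m) (b : Bool) :
    (μ {ω | G ω = g ∧ S0 ω = false ∧ S1 ω = b ∧ Y0 ω = true}).toReal =
      condP μ {ω | Y0 ω = true} {ω | S0 ω = false ∧ S1 ω = b} *
        (μ {ω | G ω = g ∧ S0 ω = false ∧ S1 ω = b}).toReal := by
  have hnum : {ω | Y0 ω = true} ∩ {ω | S0 ω = false ∧ S1 ω = b ∧ G ω = g} =
      {ω | G ω = g ∧ S0 ω = false ∧ S1 ω = b ∧ Y0 ω = true} := by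
    ext ω; simp only [Set.mem_inter_iff, Set.mem_setOf_eq]; tauto
  have hden : {ω | S0 ω = false ∧ S1 ω = b ∧ G ω = g} =
      {ω | G ω = g ∧ S0 ω = false ∧ S1 ω = b} := by
    ext ω; simp only [Set.mem_setOf_eq]; tauto
  by_cases hpos : 0 < μ {ω | S0 ω = false ∧ S1 ω = b ∧ G ω = g}
  · have h := (hA7 false b g hpos).2
    unfold condP at h
    rw [hnum, hden] at h
    have hD : 0 < (μ {ω | G ω = g ∧ S0 ω = false ∧ S1 ω = b}).toReal := by
      rw [← hden]
      exact ENNReal.toReal_pos hpos.ne' (measure_ne_top μ _)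
    rw [div_eq_iff hD.ne'] at h
    rw [h]
    unfold condP
    ring
  · have h0' : μ {ω | S0 ω = false ∧ S1 ω = b ∧ G ω = g} = 0 := by
      simpa using hpos
    have hnum0 : μ {ω | G ω = g ∧ S0 ω = false ∧ S1 ω = b ∧ Y0 ω = true} = 0 := by
      refine measure_mono_null ?_ h0'
      rintro ω ⟨hg, hs0, hs1, -⟩
      exact ⟨hs0, hs1, hg⟩
    have hden0 : μ {ω | G ω = g ∧ S0 ω = false ∧ S1 ω = b} = 0 := by
      rw [← hden]; exact h0'
    rw [hnum0, hden0]
    simp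

lemma posA (hG : Measurable G) (hA : Measurable A) (h0 : Measurable S0)
    (h1 : Measurable S1) (hy0 : Measurable Y0) (hy1 : Measurable Y1)
    (hA5pos : ∀ g : Fin m, 0 < μ {ω | G ω = g})
    (hA5ov : ∀ g : Fin m, 0 < condP μ {ω | A ω = true} {ω | G ω = g} ∧
        condP μ {ω | A ω = true} {ω | G ω = g} < 1)
    (g : Fin m) :
    0 < (μ {ω | G ω = g ∧ A ω = false}).toReal ∧
      0 < (μ {ω | G ω = g ∧ A ω = true}).toReal := by
  have hd : 0 < (μ {ω | G ω = g}).toReal :=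
    ENNReal.toReal_pos (hA5pos g).ne' (measure_ne_top μ _)
  have h := hA5ov g
  unfold condP at h
  rw [show {ω | A ω = true} ∩ {ω | G ω = g} = {ω | G ω = g ∧ A ω = true} from by
    ext ω; simp only [Set.mem_inter_iff, Set.mem_setOf_eq]; tauto] at h
  obtain ⟨h1', h2'⟩ := h
  have hn1 : 0 < (μ {ω | G ω = g ∧ A ω = true}).toReal := by
    rcases div_pos_iff.mp h1' with ⟨hx, -⟩ | ⟨-, hdneg⟩
    · exact hx
    · linarith
  have hlt : (μ {ω | G ω = g ∧ A ω = true}).toReal < (μ {ω | G ω = g}).toReal :=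
    (div_lt_one hd).mp h2'
  have hsum := decompA (μ := μ) hG hA h0 h1 hy0 hy1 g
  exact ⟨by linarith, hn1⟩

end Model

/-- **Theorem 3(b).** Under Assumptions 5, 7, 8 and Condition 4(ii), the control-arm
principal-stratum outcome distribution `P(Y⁰=1 | S⁰=a, S¹=b, G=g)` is identified from the
observed data distribution for all principal strata `(a,b) ∈ {(0,0),(0,1),(1,1)}`. -/
theorem stmt8
    {Ω Ω' : Type*} [MeasurableSpace Ω] [MeasurableSpace Ω']
    (μ : Measure Ω) (μ' : Measure Ω')
    [IsProbabilityMeasure μ] [IsProbabilityMeasure μ']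
    {m : ℕ} (hm : 1 ≤ m)
    (G : Ω → Fin m) (A S0 S1 Y0 Y1 S Y : Ω → Bool)
    (G' : Ω' → Fin m) (A' S0' S1' Y0' Y1' S' Y' : Ω' → Bool)
    (hGmeas : Measurable G) (hAmeas : Measurable A)
    (hS0meas : Measurable S0) (hS1meas : Measurable S1)
    (hY0meas : Measurable Y0) (hY1meas : Measurable Y1)
    (hG'meas : Measurable G') (hA'meas : Measurable A')
    (hS0'meas : Measurable S0') (hS1'meas : Measurable S1')
    (hY0'meas : Measurable Y0') (hY1'meas : Measurable Y1')
    (hSdef : ∀ ω, S ω = bif A ω then S1 ω else S0 ω)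
    (hYdef : ∀ ω, Y ω = bif A ω then Y1 ω else Y0 ω)
    (hS'def : ∀ ω, S' ω = bif A' ω then S1' ω else S0' ω)
    (hY'def : ∀ ω, Y' ω = bif A' ω then Y1' ω else Y0' ω)
    -- Assumption 5 for μ
    (hA5pos : ∀ g : Fin m, 0 < μ {ω | G ω = g})
    (hA5ov : ∀ g : Fin m, 0 < condP μ {ω | A ω = true} {ω | G ω = g} ∧
        condP μ {ω | A ω = true} {ω | G ω = g} < 1)
    (hA5ind : ∀ (g : Fin m) (a s0 s1 y0 y1 : Bool),
      condP μ {ω | A ω = a ∧ S0 ω = s0 ∧ S1 ω = s1 ∧ Y0 ω = y0 ∧ Y1 ω = y1} {ω | G ω = g} =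
        condP μ {ω | A ω = a} {ω | G ω = g} *
          condP μ {ω | S0 ω = s0 ∧ S1 ω = s1 ∧ Y0 ω = y0 ∧ Y1 ω = y1} {ω | G ω = g})
    -- Assumption 5 for μ'
    (hA5pos' : ∀ g : Fin m, 0 < μ' {ω | G' ω = g})
    (hA5ov' : ∀ g : Fin m, 0 < condP μ' {ω | A' ω = true} {ω | G' ω = g} ∧
        condP μ' {ω | A' ω = true} {ω | G' ω = g} < 1)
    (hA5ind' : ∀ (g : Fin m) (a s0 s1 y0 y1 : Bool),
      condP μ' {ω | A' ω = a ∧ S0' ω = s0 ∧ S1' ω = s1 ∧ Y0' ω = y0 ∧ Y1' ω = y1}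
          {ω | G' ω = g} =
        condP μ' {ω | A' ω = a} {ω | G' ω = g} *
          condP μ' {ω | S0' ω = s0 ∧ S1' ω = s1 ∧ Y0' ω = y0 ∧ Y1' ω = y1} {ω | G' ω = g})
    -- Assumption 7 for μ
    (hA7 : ∀ (s0 s1 : Bool) (g : Fin m), 0 < μ {ω | S0 ω = s0 ∧ S1 ω = s1 ∧ G ω = g} →
      condP μ {ω | Y1 ω = true} {ω | S0 ω = s0 ∧ S1 ω = s1 ∧ G ω = g} =
        condP μ {ω | Y1 ω = true} {ω | S0 ω = s0 ∧ S1 ω = s1} ∧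
      condP μ {ω | Y0 ω = true} {ω | S0 ω = s0 ∧ S1 ω = s1 ∧ G ω = g} =
        condP μ {ω | Y0 ω = true} {ω | S0 ω = s0 ∧ S1 ω = s1})
    -- Assumption 7 for μ'
    (hA7' : ∀ (s0 s1 : Bool) (g : Fin m), 0 < μ' {ω | S0' ω = s0 ∧ S1' ω = s1 ∧ G' ω = g} →
      condP μ' {ω | Y1' ω = true} {ω | S0' ω = s0 ∧ S1' ω = s1 ∧ G' ω = g} =
        condP μ' {ω | Y1' ω = true} {ω | S0' ω = s0 ∧ S1' ω = s1} ∧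
      condP μ' {ω | Y0' ω = true} {ω | S0' ω = s0 ∧ S1' ω = s1 ∧ G' ω = g} =
        condP μ' {ω | Y0' ω = true} {ω | S0' ω = s0 ∧ S1' ω = s1})
    -- Assumption 8 (monotonicity) for μ and μ'
    (hA8 : μ {ω | S0 ω ≤ S1 ω} = 1)
    (hA8' : μ' {ω | S0' ω ≤ S1' ω} = 1)
    -- Condition 4(ii): columns P(S⁰=0, S¹=1 | G=g) and P(S⁰=0, S¹=0 | G=g)
    (hC4ii : (Matrix.of fun (g : Fin m) (j : Fin 2) =>
      condP μ {ω | S0 ω = false ∧ S1 ω = (j = 0 : Bool)} {ω | G ω = g}).rank = 2)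
    (hC4ii' : (Matrix.of fun (g : Fin m) (j : Fin 2) =>
      condP μ' {ω | S0' ω = false ∧ S1' ω = (j = 0 : Bool)} {ω | G' ω = g}).rank = 2)
    -- equal observed data distributions
    (hobs : ∀ (g : Fin m) (a s y : Bool),
      μ {ω | G ω = g ∧ A ω = a ∧ S ω = s ∧ Y ω = y} =
        μ' {ω | G' ω = g ∧ A' ω = a ∧ S' ω = s ∧ Y' ω = y}) :
    ∀ a b : Bool, (a, b) ≠ (true, false) → ∀ g : Fin m,
      0 < μ {ω | S0 ω = a ∧ S1 ω = b ∧ G ω = g} →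
      0 < μ' {ω | S0' ω = a ∧ S1' ω = b ∧ G' ω = g} →
      condP μ {ω | Y0 ω = true} {ω | S0 ω = a ∧ S1 ω = b ∧ G ω = g} =
        condP μ' {ω | Y0' ω = true} {ω | S0' ω = a ∧ S1' ω = b ∧ G' ω = g} := by
  -- observed data equalities in potential-outcome form
  have ho0 : ∀ (γ : Fin m) (s y : Bool),
      (μ {ω | G ω = γ ∧ A ω = false ∧ S0 ω = s ∧ Y0 ω = y}).toReal =
      (μ' {ω | G' ω = γ ∧ A' ω = false ∧ S0' ω = s ∧ Y0' ω = y}).toReal := by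
    intro γ s y
    rw [← obsControl hSdef hYdef γ s y, ← obsControl hS'def hY'def γ s y, hobs]
  have ho1 : ∀ (γ : Fin m) (s y : Bool),
      (μ {ω | G ω = γ ∧ A ω = true ∧ S1 ω = s ∧ Y1 ω = y}).toReal =
      (μ' {ω | G' ω = γ ∧ A' ω = true ∧ S1' ω = s ∧ Y1' ω = y}).toReal := by
    intro γ s y
    rw [← obsTreat hSdef hYdef γ s y, ← obsTreat hS'def hY'def γ s y, hobs]
  have hn0 : ∀ γ : Fin m, (μ {ω | G ω = γ ∧ A ω = false}).toReal =
      (μ' {ω | G' ω = γ ∧ A' ω = false}).toReal := by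
    intro γ
    rw [decompControl hGmeas hAmeas hS0meas hS1meas hY0meas hY1meas γ,
      decompControl hG'meas hA'meas hS0'meas hS1'meas hY0'meas hY1'meas γ,
      ho0 γ true true, ho0 γ true false, ho0 γ false true, ho0 γ false false]
  have hn1 : ∀ γ : Fin m, (μ {ω | G ω = γ ∧ A ω = true}).toReal =
      (μ' {ω | G' ω = γ ∧ A' ω = true}).toReal := by
    intro γ
    rw [decompTreat hGmeas hAmeas hS0meas hS1meas hY0meas hY1meas γ,
      decompTreat hG'meas hA'meas hS0'meas hS1'meas hY0'meas hY1'meas γ,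
      ho1 γ true true, ho1 γ true false, ho1 γ false true, ho1 γ false false]
  have hd : ∀ γ : Fin m, (μ {ω | G ω = γ}).toReal = (μ' {ω | G' ω = γ}).toReal := by
    intro γ
    rw [decompA hGmeas hAmeas hS0meas hS1meas hY0meas hY1meas γ,
      decompA hG'meas hA'meas hS0'meas hS1'meas hY0'meas hY1'meas γ, hn0 γ, hn1 γ]
  have hpA := fun γ : Fin m =>
    posA hGmeas hAmeas hS0meas hS1meas hY0meas hY1meas hA5pos hA5ov γ
  have hB : ∀ (γ : Fin m) (s y : Bool),
      (μ {ω | G ω = γ ∧ S0 ω = s ∧ Y0 ω = y}).toReal =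
      (μ' {ω | G' ω = γ ∧ S0' ω = s ∧ Y0' ω = y}).toReal := by
    intro γ s y
    have m1 := margControl hGmeas hAmeas hS0meas hS1meas hY0meas hY1meas hA5pos hA5ind γ s y
    have m2 := margControl hG'meas hA'meas hS0'meas hS1'meas hY0'meas hY1'meas
      hA5pos' hA5ind' γ s y
    rw [← ho0 γ s y, ← hd γ, ← hn0 γ] at m2
    exact mul_right_cancel₀ (ne_of_gt (hpA γ).1) (m1.trans m2.symm)
  have hC : ∀ (γ : Fin m) (s : Bool),
      (μ {ω | G ω = γ ∧ S1 ω = s}).toReal = (μ' {ω | G' ω = γ ∧ S1' ω = s}).toReal := by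
    intro γ s
    have m1 := margTreat hGmeas hAmeas hS0meas hS1meas hY0meas hY1meas hA5pos hA5ind γ s
    have m2 := margTreat hG'meas hA'meas hS0'meas hS1'meas hY0'meas hY1'meas
      hA5pos' hA5ind' γ s
    rw [← ho1 γ s true, ← ho1 γ s false, ← hd γ, ← hn1 γ] at m2
    exact mul_right_cancel₀ (ne_of_gt (hpA γ).2) (m1.trans m2.symm)
  have hu11 : ∀ γ : Fin m, (μ {ω | G ω = γ ∧ S0 ω = true ∧ S1 ω = true}).toReal =
      (μ' {ω | G' ω = γ ∧ S0' ω = true ∧ S1' ω = true}).toReal := by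
    intro γ
    rw [strataF1 hGmeas hAmeas hS0meas hS1meas hY0meas hY1meas hA8 γ,
      strataF1 hG'meas hA'meas hS0'meas hS1'meas hY0'meas hY1'meas hA8' γ,
      hB γ true true, hB γ true false]
  have hu00 : ∀ γ : Fin m, (μ {ω | G ω = γ ∧ S0 ω = false ∧ S1 ω = false}).toReal =
      (μ' {ω | G' ω = γ ∧ S0' ω = false ∧ S1' ω = false}).toReal := by
    intro γ
    rw [strataF2 hGmeas hAmeas hS0meas hS1meas hY0meas hY1meas hA8 γ,
      strataF2 hG'meas hA'meas hS0'meas hS1'meas hY0'meas hY1'meas hA8' γ, hC γ false]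
  have hu01 : ∀ γ : Fin m, (μ {ω | G ω = γ ∧ S0 ω = false ∧ S1 ω = true}).toReal =
      (μ' {ω | G' ω = γ ∧ S0' ω = false ∧ S1' ω = true}).toReal := by
    intro γ
    rw [strataF3 hGmeas hAmeas hS0meas hS1meas hY0meas hY1meas hA8 γ,
      strataF3 hG'meas hA'meas hS0'meas hS1'meas hY0'meas hY1'meas hA8' γ,
      hd γ, hu11 γ, hu00 γ]
  -- the rank argument identifying the control-arm outcome distribution in mixed strata
  have hceq : ∀ b : Bool, condP μ {ω | Y0 ω = true} {ω | S0 ω = false ∧ S1 ω = b} =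
      condP μ' {ω | Y0' ω = true} {ω | S0' ω = false ∧ S1' ω = b} := by
    have hlin : ∀ γ : Fin m,
        condP μ {ω | Y0 ω = true} {ω | S0 ω = false ∧ S1 ω = true} *
          (μ {ω | G ω = γ ∧ S0 ω = false ∧ S1 ω = true}).toReal +
        condP μ {ω | Y0 ω = true} {ω | S0 ω = false ∧ S1 ω = false} *
          (μ {ω | G ω = γ ∧ S0 ω = false ∧ S1 ω = false}).toReal =
        condP μ' {ω | Y0' ω = true} {ω | S0' ω = false ∧ S1' ω = true} *
          (μ {ω | G ω = γ ∧ S0 ω = false ∧ S1 ω = true}).toReal +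
        condP μ' {ω | Y0' ω = true} {ω | S0' ω = false ∧ S1' ω = false} *
          (μ {ω | G ω = γ ∧ S0 ω = false ∧ S1 ω = false}).toReal := by
      intro γ
      have e := strataF5 (μ := μ) hGmeas hAmeas hS0meas hS1meas hY0meas hY1meas γ
      have e' := strataF5 (μ := μ') hG'meas hA'meas hS0'meas hS1'meas hY0'meas hY1'meas γ
      rw [a7cons hA7 γ true, a7cons hA7 γ false] at e
      rw [a7cons hA7' γ true, a7cons hA7' γ false] at e'
      rw [← hB γ false true, ← hu01 γ, ← hu00 γ] at e'
      rw [e] at e'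
      linarith [e']
    set v : Fin 2 → ℝ :=
      ![condP μ {ω | Y0 ω = true} {ω | S0 ω = false ∧ S1 ω = true} -
          condP μ' {ω | Y0' ω = true} {ω | S0' ω = false ∧ S1' ω = true},
        condP μ {ω | Y0 ω = true} {ω | S0 ω = false ∧ S1 ω = false} -
          condP μ' {ω | Y0' ω = true} {ω | S0' ω = false ∧ S1' ω = false}] with hv
    have hMv : (Matrix.of fun (γ : Fin m) (j : Fin 2) =>
        condP μ {ω | S0 ω = false ∧ S1 ω = (j = 0 : Bool)} {ω | G ω = γ}).mulVec v = 0 := by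
      funext γ
      have hdγ : 0 < (μ {ω | G ω = γ}).toReal :=
        ENNReal.toReal_pos (hA5pos γ).ne' (measure_ne_top μ _)
      have hl := hlin γ
      simp only [Matrix.mulVec, dotProduct, Fin.sum_univ_two, Matrix.of_apply,
        hv, Matrix.cons_val_zero, Matrix.cons_val_one, Matrix.head_cons, Pi.zero_apply]
      rw [show (decide True) = true from rfl,
        show (decide ((1 : Fin 2) = 0)) = false from by decide]
      have hent1 : condP μ {ω | S0 ω = false ∧ S1 ω = true} {ω | G ω = γ} =
          (μ {ω | G ω = γ ∧ S0 ω = false ∧ S1 ω = true}).toReal /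
            (μ {ω | G ω = γ}).toReal := by
        unfold condP
        rw [show {ω | S0 ω = false ∧ S1 ω = true} ∩ {ω | G ω = γ}
            = {ω | G ω = γ ∧ S0 ω = false ∧ S1 ω = true} from by
          ext ω; simp only [Set.mem_inter_iff, Set.mem_setOf_eq]; tauto]
      have hent2 : condP μ {ω | S0 ω = false ∧ S1 ω = false} {ω | G ω = γ} =
          (μ {ω | G ω = γ ∧ S0 ω = false ∧ S1 ω = false}).toReal /
            (μ {ω | G ω = γ}).toReal := by
        unfold condP
        rw [show {ω | S0 ω = false ∧ S1 ω = false} ∩ {ω | G ω = γ}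
            = {ω | G ω = γ ∧ S0 ω = false ∧ S1 ω = false} from by
          ext ω; simp only [Set.mem_inter_iff, Set.mem_setOf_eq]; tauto]
      rw [hent1, hent2, div_mul_eq_mul_div, div_mul_eq_mul_div, ← add_div,
        div_eq_zero_iff]
      left
      linear_combination hl
    have hker : LinearMap.ker (Matrix.mulVecLin (Matrix.of fun (γ : Fin m) (j : Fin 2) =>
        condP μ {ω | S0 ω = false ∧ S1 ω = (j = 0 : Bool)} {ω | G ω = γ})) = ⊥ := by
      have h1 := LinearMap.finrank_range_add_finrank_ker
        (Matrix.mulVecLin (Matrix.of fun (γ : Fin m) (j : Fin 2) =>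
          condP μ {ω | S0 ω = false ∧ S1 ω = (j = 0 : Bool)} {ω | G ω = γ}))
      rw [show Module.finrank ℝ (LinearMap.range (Matrix.mulVecLin
          (Matrix.of fun (γ : Fin m) (j : Fin 2) =>
            condP μ {ω | S0 ω = false ∧ S1 ω = (j = 0 : Bool)} {ω | G ω = γ}))) = 2
        from hC4ii, Module.finrank_fin_fun] at h1
      exact Submodule.finrank_eq_zero.mp (by omega)
    have hmem : v ∈ LinearMap.ker (Matrix.mulVecLin (Matrix.of fun (γ : Fin m) (j : Fin 2) =>
        condP μ {ω | S0 ω = false ∧ S1 ω = (j = 0 : Bool)} {ω | G ω = γ})) := by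
      rw [LinearMap.mem_ker, Matrix.mulVecLin_apply, hMv]
    rw [hker, Submodule.mem_bot] at hmem
    intro b
    cases b
    · have h1 := congrFun hmem 1
      simp only [hv, Matrix.cons_val_one, Matrix.head_cons, Matrix.cons_val_zero, Pi.zero_apply] at h1
      linarith [h1]
    · have h0 := congrFun hmem 0
      simp only [hv, Matrix.cons_val_zero, Pi.zero_apply] at h0
      linarith [h0]
  -- conclusion
  intro a b hab g hpos hpos'
  cases a
  · rw [(hA7 false b g hpos).2, (hA7' false b g hpos').2]
    exact hceq b
  · cases b
    · exact absurd rfl hab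
    · unfold condP
      rw [show {ω | Y0 ω = true} ∩ {ω | S0 ω = true ∧ S1 ω = true ∧ G ω = g}
          = {ω | G ω = g ∧ S0 ω = true ∧ S1 ω = true ∧ Y0 ω = true} from by
        ext ω; simp only [Set.mem_inter_iff, Set.mem_setOf_eq]; tauto]
      rw [show {ω | S0 ω = true ∧ S1 ω = true ∧ G ω = g}
          = {ω | G ω = g ∧ S0 ω = true ∧ S1 ω = true} from by
        ext ω; simp only [Set.mem_setOf_eq]; tauto]
      rw [show {ω | Y0' ω = true} ∩ {ω | S0' ω = true ∧ S1' ω = true ∧ G' ω = g}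
          = {ω | G' ω = g ∧ S0' ω = true ∧ S1' ω = true ∧ Y0' ω = true} from by
        ext ω; simp only [Set.mem_inter_iff, Set.mem_setOf_eq]; tauto]
      rw [show {ω | S0' ω = true ∧ S1' ω = true ∧ G' ω = g}
          = {ω | G' ω = g ∧ S0' ω = true ∧ S1' ω = true} from by
        ext ω; simp only [Set.mem_setOf_eq]; tauto]
      rw [strataF4 hGmeas hAmeas hS0meas hS1meas hY0meas hY1meas hA8 g,
        strataF4 hG'meas hA'meas hS0'meas hS1'meas hY0'meas hY1'meas hA8' g,
        hB g true true, hu11 g]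
end

section
/- Identifiability of principal stratification average causal effects (Theorem 3(c)): Suppose two models (Ω, ℱ, μ, G, A, S⁰, S¹, Y⁰, Y¹) and (Ω', ℱ', μ', G', A', S'⁰, S'¹, Y'⁰, Y'¹) each satisfy Assumption 5, Assumption 7, Assumption 8, and both parts (i) and (ii) of Condition 4, and have the same observed data distribution, i.e. μ(G=g, A=a, S=s, Y=y) = μ'(G'=g, A'=a, S'=s, Y'=y) for all g ∈ Fin m and a, s, y ∈ {0,1}. Then for all (a,b) ∈ {(0,0),(0,1),(1,1)} and every g such that μ(S⁰=a, S¹=b, G=g) > 0 and μ'(S'⁰=a, S'¹=b, G'=g) > 0: PSACE_{ab|g} computed under μ equals PSACE_{ab|g} computed under μ', where PSACE_{ab|g} := P(Y¹=1 | S⁰=a, S¹=b, G=g) − P(Y⁰=1 | S⁰=a, S¹=b, G=g). -/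
open MeasureTheory ProbabilityTheory

section S
variable {Ω : Type*} [MeasurableSpace Ω] (μ : Measure Ω) [IsFiniteMeasure μ]

lemma split2 {T U V : Set Ω} (hU : MeasurableSet U) (hV : MeasurableSet V)
    (hd : Disjoint U V) (hT : T = U ∪ V) :
    (μ T).toReal = (μ U).toReal + (μ V).toReal := by
  rw [hT, measure_union hd hV, ENNReal.toReal_add (measure_ne_top μ U) (measure_ne_top μ V)]

lemma split4 {T U1 U2 U3 U4 : Set Ω} (h1 : MeasurableSet U1) (h2 : MeasurableSet U2)
    (h3 : MeasurableSet U3) (h4 : MeasurableSet U4)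
    (d12 : Disjoint U1 U2) (d13 : Disjoint U1 U3) (d14 : Disjoint U1 U4)
    (d23 : Disjoint U2 U3) (d24 : Disjoint U2 U4) (d34 : Disjoint U3 U4)
    (hT : T = U1 ∪ U2 ∪ U3 ∪ U4) :
    (μ T).toReal = (μ U1).toReal + (μ U2).toReal + (μ U3).toReal + (μ U4).toReal := by
  rw [split2 μ ((h1.union h2).union h3) h4 (by
      refine Disjoint.union_left ?_ d34
      exact Disjoint.union_left d14 d24) (by rw [hT]),
    split2 μ (h1.union h2) h3 (Disjoint.union_left d13 d23) rfl,
    split2 μ h1 h2 d12 rfl]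

end S


section Helpers
variable {Ω : Type*} [MeasurableSpace Ω] (μ : Measure Ω) [IsFiniteMeasure μ]
  {m : ℕ} {G : Ω → Fin m} {A S0 S1 Y0 Y1 S Y : Ω → Bool}

lemma djBool {P Q : Ω → Prop} {f : Ω → Bool} {b c : Bool} (hbc : b ≠ c)
    (h1 : ∀ ω, P ω → f ω = b) (h2 : ∀ ω, Q ω → f ω = c) :
    Disjoint {ω | P ω} {ω | Q ω} :=
  Set.disjoint_left.mpr fun {ω} hP hQ => hbc ((h1 ω hP).symm.trans (h2 ω hQ))

lemma obsT (hG : Measurable G) (hA : Measurable A) (hS0 : Measurable S0) (hS1 : Measurable S1)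
    (hY0 : Measurable Y0) (hY1 : Measurable Y1)
    (hSdef : ∀ ω, S ω = bif A ω then S1 ω else S0 ω)
    (hYdef : ∀ ω, Y ω = bif A ω then Y1 ω else Y0 ω) (g : Fin m) (s y : Bool) :
    (μ {ω | G ω = g ∧ A ω = true ∧ S ω = s ∧ Y ω = y}).toReal =
      (μ {ω | G ω = g ∧ A ω = true ∧ S0 ω = false ∧ S1 ω = s ∧ Y0 ω = false ∧ Y1 ω = y}).toReal +
      (μ {ω | G ω = g ∧ A ω = true ∧ S0 ω = false ∧ S1 ω = s ∧ Y0 ω = true ∧ Y1 ω = y}).toReal +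
      (μ {ω | G ω = g ∧ A ω = true ∧ S0 ω = true ∧ S1 ω = s ∧ Y0 ω = false ∧ Y1 ω = y}).toReal +
      (μ {ω | G ω = g ∧ A ω = true ∧ S0 ω = true ∧ S1 ω = s ∧ Y0 ω = true ∧ Y1 ω = y}).toReal := by
  refine split4 μ ?_ ?_ ?_ ?_
    (djBool (by simp) (fun ω h => h.2.2.2.2.1) (fun ω h => h.2.2.2.2.1))
    (djBool (by simp) (fun ω h => h.2.2.1) (fun ω h => h.2.2.1))
    (djBool (by simp) (fun ω h => h.2.2.1) (fun ω h => h.2.2.1))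
    (djBool (by simp) (fun ω h => h.2.2.1) (fun ω h => h.2.2.1))
    (djBool (by simp) (fun ω h => h.2.2.1) (fun ω h => h.2.2.1))
    (djBool (by simp) (fun ω h => h.2.2.2.2.1) (fun ω h => h.2.2.2.2.1)) ?_
  · exact (hG (measurableSet_singleton _)).inter ((hA (measurableSet_singleton _)).inter
      ((hS0 (measurableSet_singleton _)).inter ((hS1 (measurableSet_singleton _)).inter
      ((hY0 (measurableSet_singleton _)).inter (hY1 (measurableSet_singleton _))))))
  · exact (hG (measurableSet_singleton _)).inter ((hA (measurableSet_singleton _)).inter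
      ((hS0 (measurableSet_singleton _)).inter ((hS1 (measurableSet_singleton _)).inter
      ((hY0 (measurableSet_singleton _)).inter (hY1 (measurableSet_singleton _))))))
  · exact (hG (measurableSet_singleton _)).inter ((hA (measurableSet_singleton _)).inter
      ((hS0 (measurableSet_singleton _)).inter ((hS1 (measurableSet_singleton _)).inter
      ((hY0 (measurableSet_singleton _)).inter (hY1 (measurableSet_singleton _))))))
  · exact (hG (measurableSet_singleton _)).inter ((hA (measurableSet_singleton _)).inter
      ((hS0 (measurableSet_singleton _)).inter ((hS1 (measurableSet_singleton _)).inter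
      ((hY0 (measurableSet_singleton _)).inter (hY1 (measurableSet_singleton _))))))
  · ext ω; cases h0 : S0 ω <;> cases h1 : Y0 ω <;> cases h2 : A ω <;>
      simp [hSdef ω, hYdef ω, h0, h1, h2]

lemma obsF (hG : Measurable G) (hA : Measurable A) (hS0 : Measurable S0) (hS1 : Measurable S1)
    (hY0 : Measurable Y0) (hY1 : Measurable Y1)
    (hSdef : ∀ ω, S ω = bif A ω then S1 ω else S0 ω)
    (hYdef : ∀ ω, Y ω = bif A ω then Y1 ω else Y0 ω) (g : Fin m) (s y : Bool) :
    (μ {ω | G ω = g ∧ A ω = false ∧ S ω = s ∧ Y ω = y}).toReal =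
      (μ {ω | G ω = g ∧ A ω = false ∧ S0 ω = s ∧ S1 ω = false ∧ Y0 ω = y ∧ Y1 ω = false}).toReal +
      (μ {ω | G ω = g ∧ A ω = false ∧ S0 ω = s ∧ S1 ω = false ∧ Y0 ω = y ∧ Y1 ω = true}).toReal +
      (μ {ω | G ω = g ∧ A ω = false ∧ S0 ω = s ∧ S1 ω = true ∧ Y0 ω = y ∧ Y1 ω = false}).toReal +
      (μ {ω | G ω = g ∧ A ω = false ∧ S0 ω = s ∧ S1 ω = true ∧ Y0 ω = y ∧ Y1 ω = true}).toReal := by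
  refine split4 μ ?_ ?_ ?_ ?_
    (djBool (by simp) (fun ω h => h.2.2.2.2.2) (fun ω h => h.2.2.2.2.2))
    (djBool (by simp) (fun ω h => h.2.2.2.1) (fun ω h => h.2.2.2.1))
    (djBool (by simp) (fun ω h => h.2.2.2.1) (fun ω h => h.2.2.2.1))
    (djBool (by simp) (fun ω h => h.2.2.2.1) (fun ω h => h.2.2.2.1))
    (djBool (by simp) (fun ω h => h.2.2.2.1) (fun ω h => h.2.2.2.1))
    (djBool (by simp) (fun ω h => h.2.2.2.2.2) (fun ω h => h.2.2.2.2.2)) ?_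
  · exact (hG (measurableSet_singleton _)).inter ((hA (measurableSet_singleton _)).inter
      ((hS0 (measurableSet_singleton _)).inter ((hS1 (measurableSet_singleton _)).inter
      ((hY0 (measurableSet_singleton _)).inter (hY1 (measurableSet_singleton _))))))
  · exact (hG (measurableSet_singleton _)).inter ((hA (measurableSet_singleton _)).inter
      ((hS0 (measurableSet_singleton _)).inter ((hS1 (measurableSet_singleton _)).inter
      ((hY0 (measurableSet_singleton _)).inter (hY1 (measurableSet_singleton _))))))
  · exact (hG (measurableSet_singleton _)).inter ((hA (measurableSet_singleton _)).inter
      ((hS0 (measurableSet_singleton _)).inter ((hS1 (measurableSet_singleton _)).inter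
      ((hY0 (measurableSet_singleton _)).inter (hY1 (measurableSet_singleton _))))))
  · exact (hG (measurableSet_singleton _)).inter ((hA (measurableSet_singleton _)).inter
      ((hS0 (measurableSet_singleton _)).inter ((hS1 (measurableSet_singleton _)).inter
      ((hY0 (measurableSet_singleton _)).inter (hY1 (measurableSet_singleton _))))))
  · ext ω; cases h0 : S1 ω <;> cases h1 : Y1 ω <;> cases h2 : A ω <;>
      simp [hSdef ω, hYdef ω, h0, h1, h2]

lemma pa4 (hG : Measurable G) (hA : Measurable A) (hS0 : Measurable S0) (hS1 : Measurable S1)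
    (g : Fin m) (a : Bool) :
    (μ {ω | A ω = a ∧ G ω = g}).toReal =
      (μ {ω | G ω = g ∧ A ω = a ∧ S0 ω = false ∧ S1 ω = false}).toReal +
      (μ {ω | G ω = g ∧ A ω = a ∧ S0 ω = false ∧ S1 ω = true}).toReal +
      (μ {ω | G ω = g ∧ A ω = a ∧ S0 ω = true ∧ S1 ω = false}).toReal +
      (μ {ω | G ω = g ∧ A ω = a ∧ S0 ω = true ∧ S1 ω = true}).toReal := by
  refine split4 μ ?_ ?_ ?_ ?_
    (djBool (by simp) (fun ω h => h.2.2.2) (fun ω h => h.2.2.2))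
    (djBool (by simp) (fun ω h => h.2.2.1) (fun ω h => h.2.2.1))
    (djBool (by simp) (fun ω h => h.2.2.1) (fun ω h => h.2.2.1))
    (djBool (by simp) (fun ω h => h.2.2.1) (fun ω h => h.2.2.1))
    (djBool (by simp) (fun ω h => h.2.2.1) (fun ω h => h.2.2.1))
    (djBool (by simp) (fun ω h => h.2.2.2) (fun ω h => h.2.2.2)) ?_
  · exact (hG (measurableSet_singleton _)).inter ((hA (measurableSet_singleton _)).inter
      ((hS0 (measurableSet_singleton _)).inter (hS1 (measurableSet_singleton _))))
  · exact (hG (measurableSet_singleton _)).inter ((hA (measurableSet_singleton _)).inter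
      ((hS0 (measurableSet_singleton _)).inter (hS1 (measurableSet_singleton _))))
  · exact (hG (measurableSet_singleton _)).inter ((hA (measurableSet_singleton _)).inter
      ((hS0 (measurableSet_singleton _)).inter (hS1 (measurableSet_singleton _))))
  · exact (hG (measurableSet_singleton _)).inter ((hA (measurableSet_singleton _)).inter
      ((hS0 (measurableSet_singleton _)).inter (hS1 (measurableSet_singleton _))))
  · ext ω; cases h0 : S0 ω <;> cases h1 : S1 ω <;> simp [h0, h1] <;> tauto

lemma m4split (hG : Measurable G) (hA : Measurable A) (hS0 : Measurable S0) (hS1 : Measurable S1)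
    (hY0 : Measurable Y0) (hY1 : Measurable Y1) (g : Fin m) (a s0 s1 : Bool) :
    (μ {ω | G ω = g ∧ A ω = a ∧ S0 ω = s0 ∧ S1 ω = s1}).toReal =
      (μ {ω | G ω = g ∧ A ω = a ∧ S0 ω = s0 ∧ S1 ω = s1 ∧ Y0 ω = false ∧ Y1 ω = false}).toReal +
      (μ {ω | G ω = g ∧ A ω = a ∧ S0 ω = s0 ∧ S1 ω = s1 ∧ Y0 ω = false ∧ Y1 ω = true}).toReal +
      (μ {ω | G ω = g ∧ A ω = a ∧ S0 ω = s0 ∧ S1 ω = s1 ∧ Y0 ω = true ∧ Y1 ω = false}).toReal +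
      (μ {ω | G ω = g ∧ A ω = a ∧ S0 ω = s0 ∧ S1 ω = s1 ∧ Y0 ω = true ∧ Y1 ω = true}).toReal := by
  refine split4 μ ?_ ?_ ?_ ?_
    (djBool (by simp) (fun ω h => h.2.2.2.2.2) (fun ω h => h.2.2.2.2.2))
    (djBool (by simp) (fun ω h => h.2.2.2.2.1) (fun ω h => h.2.2.2.2.1))
    (djBool (by simp) (fun ω h => h.2.2.2.2.1) (fun ω h => h.2.2.2.2.1))
    (djBool (by simp) (fun ω h => h.2.2.2.2.1) (fun ω h => h.2.2.2.2.1))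
    (djBool (by simp) (fun ω h => h.2.2.2.2.1) (fun ω h => h.2.2.2.2.1))
    (djBool (by simp) (fun ω h => h.2.2.2.2.2) (fun ω h => h.2.2.2.2.2)) ?_
  · exact (hG (measurableSet_singleton _)).inter ((hA (measurableSet_singleton _)).inter
      ((hS0 (measurableSet_singleton _)).inter ((hS1 (measurableSet_singleton _)).inter
      ((hY0 (measurableSet_singleton _)).inter (hY1 (measurableSet_singleton _))))))
  · exact (hG (measurableSet_singleton _)).inter ((hA (measurableSet_singleton _)).inter
      ((hS0 (measurableSet_singleton _)).inter ((hS1 (measurableSet_singleton _)).inter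
      ((hY0 (measurableSet_singleton _)).inter (hY1 (measurableSet_singleton _))))))
  · exact (hG (measurableSet_singleton _)).inter ((hA (measurableSet_singleton _)).inter
      ((hS0 (measurableSet_singleton _)).inter ((hS1 (measurableSet_singleton _)).inter
      ((hY0 (measurableSet_singleton _)).inter (hY1 (measurableSet_singleton _))))))
  · exact (hG (measurableSet_singleton _)).inter ((hA (measurableSet_singleton _)).inter
      ((hS0 (measurableSet_singleton _)).inter ((hS1 (measurableSet_singleton _)).inter
      ((hY0 (measurableSet_singleton _)).inter (hY1 (measurableSet_singleton _))))))
  · ext ω; cases h0 : Y0 ω <;> cases h1 : Y1 ω <;> simp [h0, h1] <;> tauto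

lemma pisplit (hG : Measurable G) (hS0 : Measurable S0) (hS1 : Measurable S1)
    (hY0 : Measurable Y0) (hY1 : Measurable Y1) (g : Fin m) (s0 s1 : Bool) :
    (μ {ω | G ω = g ∧ S0 ω = s0 ∧ S1 ω = s1}).toReal =
      (μ {ω | G ω = g ∧ S0 ω = s0 ∧ S1 ω = s1 ∧ Y0 ω = false ∧ Y1 ω = false}).toReal +
      (μ {ω | G ω = g ∧ S0 ω = s0 ∧ S1 ω = s1 ∧ Y0 ω = false ∧ Y1 ω = true}).toReal +
      (μ {ω | G ω = g ∧ S0 ω = s0 ∧ S1 ω = s1 ∧ Y0 ω = true ∧ Y1 ω = false}).toReal +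
      (μ {ω | G ω = g ∧ S0 ω = s0 ∧ S1 ω = s1 ∧ Y0 ω = true ∧ Y1 ω = true}).toReal := by
  refine split4 μ ?_ ?_ ?_ ?_
    (djBool (by simp) (fun ω h => h.2.2.2.2) (fun ω h => h.2.2.2.2))
    (djBool (by simp) (fun ω h => h.2.2.2.1) (fun ω h => h.2.2.2.1))
    (djBool (by simp) (fun ω h => h.2.2.2.1) (fun ω h => h.2.2.2.1))
    (djBool (by simp) (fun ω h => h.2.2.2.1) (fun ω h => h.2.2.2.1))
    (djBool (by simp) (fun ω h => h.2.2.2.1) (fun ω h => h.2.2.2.1))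
    (djBool (by simp) (fun ω h => h.2.2.2.2) (fun ω h => h.2.2.2.2)) ?_
  · exact (hG (measurableSet_singleton _)).inter
      ((hS0 (measurableSet_singleton _)).inter ((hS1 (measurableSet_singleton _)).inter
      ((hY0 (measurableSet_singleton _)).inter (hY1 (measurableSet_singleton _)))))
  · exact (hG (measurableSet_singleton _)).inter
      ((hS0 (measurableSet_singleton _)).inter ((hS1 (measurableSet_singleton _)).inter
      ((hY0 (measurableSet_singleton _)).inter (hY1 (measurableSet_singleton _)))))
  · exact (hG (measurableSet_singleton _)).inter
      ((hS0 (measurableSet_singleton _)).inter ((hS1 (measurableSet_singleton _)).inter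
      ((hY0 (measurableSet_singleton _)).inter (hY1 (measurableSet_singleton _)))))
  · exact (hG (measurableSet_singleton _)).inter
      ((hS0 (measurableSet_singleton _)).inter ((hS1 (measurableSet_singleton _)).inter
      ((hY0 (measurableSet_singleton _)).inter (hY1 (measurableSet_singleton _)))))
  · ext ω; cases h0 : Y0 ω <;> cases h1 : Y1 ω <;> simp [h0, h1] <;> tauto

lemma y1split (hG : Measurable G) (hS0 : Measurable S0) (hS1 : Measurable S1)
    (hY0 : Measurable Y0) (hY1 : Measurable Y1) (g : Fin m) (s0 s1 : Bool) :
    (μ {ω | G ω = g ∧ S0 ω = s0 ∧ S1 ω = s1 ∧ Y1 ω = true}).toReal =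
      (μ {ω | G ω = g ∧ S0 ω = s0 ∧ S1 ω = s1 ∧ Y0 ω = false ∧ Y1 ω = true}).toReal +
      (μ {ω | G ω = g ∧ S0 ω = s0 ∧ S1 ω = s1 ∧ Y0 ω = true ∧ Y1 ω = true}).toReal := by
  refine split2 μ ?_ ?_
    (djBool (by simp) (fun ω h => h.2.2.2.1) (fun ω h => h.2.2.2.1)) ?_
  · exact (hG (measurableSet_singleton _)).inter
      ((hS0 (measurableSet_singleton _)).inter ((hS1 (measurableSet_singleton _)).inter
      ((hY0 (measurableSet_singleton _)).inter (hY1 (measurableSet_singleton _)))))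
  · exact (hG (measurableSet_singleton _)).inter
      ((hS0 (measurableSet_singleton _)).inter ((hS1 (measurableSet_singleton _)).inter
      ((hY0 (measurableSet_singleton _)).inter (hY1 (measurableSet_singleton _)))))
  · ext ω; cases h0 : Y0 ω <;> simp [h0] <;> tauto

lemma y0split (hG : Measurable G) (hS0 : Measurable S0) (hS1 : Measurable S1)
    (hY0 : Measurable Y0) (hY1 : Measurable Y1) (g : Fin m) (s0 s1 : Bool) :
    (μ {ω | G ω = g ∧ S0 ω = s0 ∧ S1 ω = s1 ∧ Y0 ω = true}).toReal =
      (μ {ω | G ω = g ∧ S0 ω = s0 ∧ S1 ω = s1 ∧ Y0 ω = true ∧ Y1 ω = false}).toReal +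
      (μ {ω | G ω = g ∧ S0 ω = s0 ∧ S1 ω = s1 ∧ Y0 ω = true ∧ Y1 ω = true}).toReal := by
  refine split2 μ ?_ ?_
    (djBool (by simp) (fun ω h => h.2.2.2.2) (fun ω h => h.2.2.2.2)) ?_
  · exact (hG (measurableSet_singleton _)).inter
      ((hS0 (measurableSet_singleton _)).inter ((hS1 (measurableSet_singleton _)).inter
      ((hY0 (measurableSet_singleton _)).inter (hY1 (measurableSet_singleton _)))))
  · exact (hG (measurableSet_singleton _)).inter
      ((hS0 (measurableSet_singleton _)).inter ((hS1 (measurableSet_singleton _)).inter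
      ((hY0 (measurableSet_singleton _)).inter (hY1 (measurableSet_singleton _)))))
  · ext ω; cases h0 : Y1 ω <;> simp [h0] <;> tauto

lemma gsplit (hG : Measurable G) (hA : Measurable A) (g : Fin m) :
    (μ {ω | G ω = g}).toReal =
      (μ {ω | A ω = true ∧ G ω = g}).toReal + (μ {ω | A ω = false ∧ G ω = g}).toReal := by
  refine split2 μ ?_ ?_
    (djBool (by simp) (fun ω h => h.1) (fun ω h => h.1)) ?_
  · exact (hA (measurableSet_singleton _)).inter (hG (measurableSet_singleton _))
  · exact (hA (measurableSet_singleton _)).inter (hG (measurableSet_singleton _))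
  · ext ω; cases h : A ω <;> simp [h]

lemma nullstratum (hS0 : Measurable S0) (hS1 : Measurable S1)
    (hA8 : μ {ω | S0 ω ≤ S1 ω} = 1) [IsProbabilityMeasure μ]
    {T : Set Ω} (hT : ∀ ω ∈ T, S0 ω = true ∧ S1 ω = false) : (μ T).toReal = 0 := by
  have hms : MeasurableSet {ω | S0 ω ≤ S1 ω} := by
    have he : {ω | S0 ω ≤ S1 ω} = (fun ω => (S0 ω, S1 ω)) ⁻¹' {p : Bool × Bool | p.1 ≤ p.2} :=
      rfl
    rw [he]
    exact (hS0.prodMk hS1) (Set.to_countable _).measurableSet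
  have hc : μ {ω | S0 ω ≤ S1 ω}ᶜ = 0 := by
    rw [measure_compl hms (measure_ne_top μ _), hA8, measure_univ]
    simp
  have h0 : μ T = 0 := by
    refine measure_mono_null ?_ hc
    intro ω hω
    simp only [Set.mem_compl_iff, Set.mem_setOf_eq]
    rw [(hT ω hω).1, (hT ω hω).2]
    decide
  simp [h0]

lemma indAtom (g : Fin m) (a s0 s1 y0 y1 : Bool)
    (hpGne : (μ {ω | G ω = g}).toReal ≠ 0)
    (h : condP μ {ω | A ω = a ∧ S0 ω = s0 ∧ S1 ω = s1 ∧ Y0 ω = y0 ∧ Y1 ω = y1} {ω | G ω = g} =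
      condP μ {ω | A ω = a} {ω | G ω = g} *
        condP μ {ω | S0 ω = s0 ∧ S1 ω = s1 ∧ Y0 ω = y0 ∧ Y1 ω = y1} {ω | G ω = g}) :
    (μ {ω | G ω = g ∧ A ω = a ∧ S0 ω = s0 ∧ S1 ω = s1 ∧ Y0 ω = y0 ∧ Y1 ω = y1}).toReal *
      (μ {ω | G ω = g}).toReal =
    (μ {ω | A ω = a ∧ G ω = g}).toReal *
      (μ {ω | G ω = g ∧ S0 ω = s0 ∧ S1 ω = s1 ∧ Y0 ω = y0 ∧ Y1 ω = y1}).toReal := by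
  unfold condP at h
  rw [show {ω | A ω = a ∧ S0 ω = s0 ∧ S1 ω = s1 ∧ Y0 ω = y0 ∧ Y1 ω = y1} ∩ {ω | G ω = g}
      = {ω | G ω = g ∧ A ω = a ∧ S0 ω = s0 ∧ S1 ω = s1 ∧ Y0 ω = y0 ∧ Y1 ω = y1} from by
      ext ω; simp only [Set.mem_inter_iff, Set.mem_setOf_eq]; tauto,
    show {ω | A ω = a} ∩ {ω | G ω = g} = {ω | A ω = a ∧ G ω = g} from rfl,
    show {ω | S0 ω = s0 ∧ S1 ω = s1 ∧ Y0 ω = y0 ∧ Y1 ω = y1} ∩ {ω | G ω = g}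
      = {ω | G ω = g ∧ S0 ω = s0 ∧ S1 ω = s1 ∧ Y0 ω = y0 ∧ Y1 ω = y1} from by
      ext ω; simp only [Set.mem_inter_iff, Set.mem_setOf_eq]; tauto] at h
  field_simp at h
  apply mul_right_cancel₀ hpGne
  linear_combination (μ {ω | G ω = g}).toReal * h

lemma hcLemma (g : Fin m) (s0 s1 : Bool) (hpGne : (μ {ω | G ω = g}).toReal ≠ 0) :
    condP μ {ω | S0 ω = s0 ∧ S1 ω = s1} {ω | G ω = g} * (μ {ω | G ω = g}).toReal =
    (μ {ω | G ω = g ∧ S0 ω = s0 ∧ S1 ω = s1}).toReal := by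
  unfold condP
  rw [show {ω | S0 ω = s0 ∧ S1 ω = s1} ∩ {ω | G ω = g} =
    {ω | G ω = g ∧ S0 ω = s0 ∧ S1 ω = s1} from by
      ext ω; simp only [Set.mem_inter_iff, Set.mem_setOf_eq]; tauto]
  exact div_mul_cancel₀ _ hpGne

lemma f3aLemma (hG : Measurable G) (hS0 : Measurable S0) (hS1 : Measurable S1)
    (hY0 : Measurable Y0) (hY1 : Measurable Y1) (g : Fin m) (s0 s1 : Bool)
    (h7 : 0 < μ {ω | S0 ω = s0 ∧ S1 ω = s1 ∧ G ω = g} →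
      condP μ {ω | Y1 ω = true} {ω | S0 ω = s0 ∧ S1 ω = s1 ∧ G ω = g} =
        condP μ {ω | Y1 ω = true} {ω | S0 ω = s0 ∧ S1 ω = s1}) :
    (μ {ω | G ω = g ∧ S0 ω = s0 ∧ S1 ω = s1 ∧ Y0 ω = false ∧ Y1 ω = true}).toReal +
      (μ {ω | G ω = g ∧ S0 ω = s0 ∧ S1 ω = s1 ∧ Y0 ω = true ∧ Y1 ω = true}).toReal =
    condP μ {ω | Y1 ω = true} {ω | S0 ω = s0 ∧ S1 ω = s1} *
      (μ {ω | G ω = g ∧ S0 ω = s0 ∧ S1 ω = s1}).toReal := by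
  rw [← y1split μ hG hS0 hS1 hY0 hY1 g s0 s1]
  by_cases hz : μ {ω | S0 ω = s0 ∧ S1 ω = s1 ∧ G ω = g} = 0
  · have h0 : μ {ω | G ω = g ∧ S0 ω = s0 ∧ S1 ω = s1} = 0 := by
      rw [show {ω | G ω = g ∧ S0 ω = s0 ∧ S1 ω = s1} =
        {ω | S0 ω = s0 ∧ S1 ω = s1 ∧ G ω = g} from by
          ext ω; simp only [Set.mem_setOf_eq]; tauto]
      exact hz
    have h1 : μ {ω | G ω = g ∧ S0 ω = s0 ∧ S1 ω = s1 ∧ Y1 ω = true} = 0 :=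
      measure_mono_null (by intro ω hω; exact ⟨hω.1, hω.2.1, hω.2.2.1⟩) h0
    simp [h0, h1]
  · have hpos : 0 < μ {ω | S0 ω = s0 ∧ S1 ω = s1 ∧ G ω = g} :=
      lt_of_le_of_ne zero_le (Ne.symm hz)
    have h := h7 hpos
    have h2 : condP μ {ω | Y1 ω = true} {ω | S0 ω = s0 ∧ S1 ω = s1 ∧ G ω = g} =
        (μ {ω | G ω = g ∧ S0 ω = s0 ∧ S1 ω = s1 ∧ Y1 ω = true}).toReal /
          (μ {ω | G ω = g ∧ S0 ω = s0 ∧ S1 ω = s1}).toReal := by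
      unfold condP
      rw [show {ω | Y1 ω = true} ∩ {ω | S0 ω = s0 ∧ S1 ω = s1 ∧ G ω = g} =
          {ω | G ω = g ∧ S0 ω = s0 ∧ S1 ω = s1 ∧ Y1 ω = true} from by
          ext ω; simp only [Set.mem_inter_iff, Set.mem_setOf_eq]; tauto,
        show {ω | S0 ω = s0 ∧ S1 ω = s1 ∧ G ω = g} =
          {ω | G ω = g ∧ S0 ω = s0 ∧ S1 ω = s1} from by
          ext ω; simp only [Set.mem_setOf_eq]; tauto]
    rw [h2] at h
    have hdne : (μ {ω | G ω = g ∧ S0 ω = s0 ∧ S1 ω = s1}).toReal ≠ 0 := by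
      refine ENNReal.toReal_ne_zero.mpr ⟨?_, measure_ne_top μ _⟩
      rw [show {ω | G ω = g ∧ S0 ω = s0 ∧ S1 ω = s1} =
        {ω | S0 ω = s0 ∧ S1 ω = s1 ∧ G ω = g} from by
          ext ω; simp only [Set.mem_setOf_eq]; tauto]
      exact hz
    rw [div_eq_iff hdne] at h
    exact h

lemma f3bLemma (hG : Measurable G) (hS0 : Measurable S0) (hS1 : Measurable S1)
    (hY0 : Measurable Y0) (hY1 : Measurable Y1) (g : Fin m) (s0 s1 : Bool)
    (h7 : 0 < μ {ω | S0 ω = s0 ∧ S1 ω = s1 ∧ G ω = g} →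
      condP μ {ω | Y0 ω = true} {ω | S0 ω = s0 ∧ S1 ω = s1 ∧ G ω = g} =
        condP μ {ω | Y0 ω = true} {ω | S0 ω = s0 ∧ S1 ω = s1}) :
    (μ {ω | G ω = g ∧ S0 ω = s0 ∧ S1 ω = s1 ∧ Y0 ω = true ∧ Y1 ω = false}).toReal +
      (μ {ω | G ω = g ∧ S0 ω = s0 ∧ S1 ω = s1 ∧ Y0 ω = true ∧ Y1 ω = true}).toReal =
    condP μ {ω | Y0 ω = true} {ω | S0 ω = s0 ∧ S1 ω = s1} *
      (μ {ω | G ω = g ∧ S0 ω = s0 ∧ S1 ω = s1}).toReal := by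
  rw [← y0split μ hG hS0 hS1 hY0 hY1 g s0 s1]
  by_cases hz : μ {ω | S0 ω = s0 ∧ S1 ω = s1 ∧ G ω = g} = 0
  · have h0 : μ {ω | G ω = g ∧ S0 ω = s0 ∧ S1 ω = s1} = 0 := by
      rw [show {ω | G ω = g ∧ S0 ω = s0 ∧ S1 ω = s1} =
        {ω | S0 ω = s0 ∧ S1 ω = s1 ∧ G ω = g} from by
          ext ω; simp only [Set.mem_setOf_eq]; tauto]
      exact hz
    have h1 : μ {ω | G ω = g ∧ S0 ω = s0 ∧ S1 ω = s1 ∧ Y0 ω = true} = 0 :=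
      measure_mono_null (by intro ω hω; exact ⟨hω.1, hω.2.1, hω.2.2.1⟩) h0
    simp [h0, h1]
  · have hpos : 0 < μ {ω | S0 ω = s0 ∧ S1 ω = s1 ∧ G ω = g} :=
      lt_of_le_of_ne zero_le (Ne.symm hz)
    have h := h7 hpos
    have h2 : condP μ {ω | Y0 ω = true} {ω | S0 ω = s0 ∧ S1 ω = s1 ∧ G ω = g} =
        (μ {ω | G ω = g ∧ S0 ω = s0 ∧ S1 ω = s1 ∧ Y0 ω = true}).toReal /
          (μ {ω | G ω = g ∧ S0 ω = s0 ∧ S1 ω = s1}).toReal := by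
      unfold condP
      rw [show {ω | Y0 ω = true} ∩ {ω | S0 ω = s0 ∧ S1 ω = s1 ∧ G ω = g} =
          {ω | G ω = g ∧ S0 ω = s0 ∧ S1 ω = s1 ∧ Y0 ω = true} from by
          ext ω; simp only [Set.mem_inter_iff, Set.mem_setOf_eq]; tauto,
        show {ω | S0 ω = s0 ∧ S1 ω = s1 ∧ G ω = g} =
          {ω | G ω = g ∧ S0 ω = s0 ∧ S1 ω = s1} from by
          ext ω; simp only [Set.mem_setOf_eq]; tauto]
    rw [h2] at h
    have hdne : (μ {ω | G ω = g ∧ S0 ω = s0 ∧ S1 ω = s1}).toReal ≠ 0 := by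
      refine ENNReal.toReal_ne_zero.mpr ⟨?_, measure_ne_top μ _⟩
      rw [show {ω | G ω = g ∧ S0 ω = s0 ∧ S1 ω = s1} =
        {ω | S0 ω = s0 ∧ S1 ω = s1 ∧ G ω = g} from by
          ext ω; simp only [Set.mem_setOf_eq]; tauto]
      exact hz
    rw [div_eq_iff hdne] at h
    exact h

lemma patPos (g : Fin m) (hpG : 0 < (μ {ω | G ω = g}).toReal)
    (h : 0 < condP μ {ω | A ω = true} {ω | G ω = g}) :
    0 < (μ {ω | A ω = true ∧ G ω = g}).toReal := by
  unfold condP at h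
  rw [show {ω | A ω = true} ∩ {ω | G ω = g} = {ω | A ω = true ∧ G ω = g} from rfl] at h
  rcases div_pos_iff.mp h with ⟨h1, _⟩ | ⟨_, h2⟩
  · exact h1
  · linarith

lemma pafPos (hG : Measurable G) (hA : Measurable A) (g : Fin m)
    (hpG : 0 < (μ {ω | G ω = g}).toReal)
    (h : condP μ {ω | A ω = true} {ω | G ω = g} < 1) :
    0 < (μ {ω | A ω = false ∧ G ω = g}).toReal := by
  unfold condP at h
  rw [show {ω | A ω = true} ∩ {ω | G ω = g} = {ω | A ω = true ∧ G ω = g} from rfl,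
    div_lt_one hpG] at h
  have := gsplit μ hG hA g
  linarith

end Helpers

set_option maxHeartbeats 2000000 in
lemma modelEqs {Ω : Type*} [MeasurableSpace Ω] (μ : Measure Ω) [IsProbabilityMeasure μ]
    {m : ℕ} (G : Ω → Fin m) (A S0 S1 Y0 Y1 S Y : Ω → Bool)
    (hG : Measurable G) (hA : Measurable A) (hS0 : Measurable S0) (hS1 : Measurable S1)
    (hY0 : Measurable Y0) (hY1 : Measurable Y1)
    (hSdef : ∀ ω, S ω = bif A ω then S1 ω else S0 ω)
    (hYdef : ∀ ω, Y ω = bif A ω then Y1 ω else Y0 ω)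
    (hA5pos : ∀ g : Fin m, 0 < μ {ω | G ω = g})
    (hA5ov : ∀ g : Fin m, 0 < condP μ {ω | A ω = true} {ω | G ω = g} ∧
        condP μ {ω | A ω = true} {ω | G ω = g} < 1)
    (hA5ind : ∀ (g : Fin m) (a s0 s1 y0 y1 : Bool),
      condP μ {ω | A ω = a ∧ S0 ω = s0 ∧ S1 ω = s1 ∧ Y0 ω = y0 ∧ Y1 ω = y1} {ω | G ω = g} =
        condP μ {ω | A ω = a} {ω | G ω = g} *
          condP μ {ω | S0 ω = s0 ∧ S1 ω = s1 ∧ Y0 ω = y0 ∧ Y1 ω = y1} {ω | G ω = g})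
    (hA7 : ∀ (s0 s1 : Bool) (g : Fin m), 0 < μ {ω | S0 ω = s0 ∧ S1 ω = s1 ∧ G ω = g} →
      condP μ {ω | Y1 ω = true} {ω | S0 ω = s0 ∧ S1 ω = s1 ∧ G ω = g} =
        condP μ {ω | Y1 ω = true} {ω | S0 ω = s0 ∧ S1 ω = s1} ∧
      condP μ {ω | Y0 ω = true} {ω | S0 ω = s0 ∧ S1 ω = s1 ∧ G ω = g} =
        condP μ {ω | Y0 ω = true} {ω | S0 ω = s0 ∧ S1 ω = s1})
    (hA8 : μ {ω | S0 ω ≤ S1 ω} = 1)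
    (g : Fin m) :
    (0 < (μ {ω | A ω = true ∧ G ω = g}).toReal) ∧
    (0 < (μ {ω | A ω = false ∧ G ω = g}).toReal) ∧
    (∀ a : Bool, (μ {ω | A ω = a ∧ G ω = g}).toReal =
      ∑ s : Bool, ∑ y : Bool, (μ {ω | G ω = g ∧ A ω = a ∧ S ω = s ∧ Y ω = y}).toReal) ∧
    ((μ {ω | G ω = g ∧ A ω = false ∧ S ω = true ∧ Y ω = false}).toReal +
      (μ {ω | G ω = g ∧ A ω = false ∧ S ω = true ∧ Y ω = true}).toReal =
      (μ {ω | A ω = false ∧ G ω = g}).toReal *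
        condP μ {ω | S0 ω = true ∧ S1 ω = true} {ω | G ω = g}) ∧
    ((μ {ω | G ω = g ∧ A ω = true ∧ S ω = false ∧ Y ω = false}).toReal +
      (μ {ω | G ω = g ∧ A ω = true ∧ S ω = false ∧ Y ω = true}).toReal =
      (μ {ω | A ω = true ∧ G ω = g}).toReal *
        condP μ {ω | S0 ω = false ∧ S1 ω = false} {ω | G ω = g}) ∧
    ((μ {ω | G ω = g ∧ A ω = true ∧ S ω = true ∧ Y ω = false}).toReal +
      (μ {ω | G ω = g ∧ A ω = true ∧ S ω = true ∧ Y ω = true}).toReal =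
      (μ {ω | A ω = true ∧ G ω = g}).toReal *
        (condP μ {ω | S0 ω = false ∧ S1 ω = true} {ω | G ω = g} +
         condP μ {ω | S0 ω = true ∧ S1 ω = true} {ω | G ω = g})) ∧
    ((μ {ω | G ω = g ∧ A ω = true ∧ S ω = true ∧ Y ω = true}).toReal =
      (μ {ω | A ω = true ∧ G ω = g}).toReal *
        (condP μ {ω | Y1 ω = true} {ω | S0 ω = false ∧ S1 ω = true} *
           condP μ {ω | S0 ω = false ∧ S1 ω = true} {ω | G ω = g} +
         condP μ {ω | Y1 ω = true} {ω | S0 ω = true ∧ S1 ω = true} *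
           condP μ {ω | S0 ω = true ∧ S1 ω = true} {ω | G ω = g})) ∧
    ((μ {ω | G ω = g ∧ A ω = true ∧ S ω = false ∧ Y ω = true}).toReal =
      (μ {ω | A ω = true ∧ G ω = g}).toReal *
        (condP μ {ω | Y1 ω = true} {ω | S0 ω = false ∧ S1 ω = false} *
           condP μ {ω | S0 ω = false ∧ S1 ω = false} {ω | G ω = g})) ∧
    ((μ {ω | G ω = g ∧ A ω = false ∧ S ω = true ∧ Y ω = true}).toReal =
      (μ {ω | A ω = false ∧ G ω = g}).toReal *
        (condP μ {ω | Y0 ω = true} {ω | S0 ω = true ∧ S1 ω = true} *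
           condP μ {ω | S0 ω = true ∧ S1 ω = true} {ω | G ω = g})) ∧
    ((μ {ω | G ω = g ∧ A ω = false ∧ S ω = false ∧ Y ω = true}).toReal =
      (μ {ω | A ω = false ∧ G ω = g}).toReal *
        (condP μ {ω | Y0 ω = true} {ω | S0 ω = false ∧ S1 ω = false} *
           condP μ {ω | S0 ω = false ∧ S1 ω = false} {ω | G ω = g} +
         condP μ {ω | Y0 ω = true} {ω | S0 ω = false ∧ S1 ω = true} *
           condP μ {ω | S0 ω = false ∧ S1 ω = true} {ω | G ω = g})) := by
  have hpG : (0:ℝ) < (μ {ω | G ω = g}).toReal :=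
    ENNReal.toReal_pos (hA5pos g).ne' (measure_ne_top μ _)
  have hpGne : (μ {ω | G ω = g}).toReal ≠ 0 := hpG.ne'
  have hIND : ∀ a s0 s1 y0 y1 : Bool,
      (μ {ω | G ω = g ∧ A ω = a ∧ S0 ω = s0 ∧ S1 ω = s1 ∧ Y0 ω = y0 ∧ Y1 ω = y1}).toReal *
        (μ {ω | G ω = g}).toReal =
      (μ {ω | A ω = a ∧ G ω = g}).toReal *
        (μ {ω | G ω = g ∧ S0 ω = s0 ∧ S1 ω = s1 ∧ Y0 ω = y0 ∧ Y1 ω = y1}).toReal :=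
    fun a s0 s1 y0 y1 => indAtom μ g a s0 s1 y0 y1 hpGne (hA5ind g a s0 s1 y0 y1)
  have hRN : ∀ y0 y1 : Bool,
      (μ {ω | G ω = g ∧ S0 ω = true ∧ S1 ω = false ∧ Y0 ω = y0 ∧ Y1 ω = y1}).toReal = 0 :=
    fun y0 y1 => nullstratum μ hS0 hS1 hA8
      (by intro ω hω; exact ⟨hω.2.1, hω.2.2.1⟩)
  have hF3A := fun s0 s1 => f3aLemma μ hG hS0 hS1 hY0 hY1 g s0 s1
    (fun hpos => (hA7 s0 s1 g hpos).1)
  have hF3B := fun s0 s1 => f3bLemma μ hG hS0 hS1 hY0 hY1 g s0 s1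
    (fun hpos => (hA7 s0 s1 g hpos).2)
  have hHC := fun s0 s1 => hcLemma (S0 := S0) (S1 := S1) μ g s0 s1 hpGne
  have hNT := obsT μ hG hA hS0 hS1 hY0 hY1 hSdef hYdef g
  have hNF := obsF μ hG hA hS0 hS1 hY0 hY1 hSdef hYdef g
  have hPAS4 := pa4 μ hG hA hS0 hS1 g
  have hM4 := m4split μ hG hA hS0 hS1 hY0 hY1 g
  have hPIS := pisplit (Y0 := Y0) (Y1 := Y1) μ hG hS0 hS1 hY0 hY1 g
  have hPAt := patPos μ g hpG (hA5ov g).1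
  have hPAf := pafPos μ hG hA g hpG (hA5ov g).2
  refine ⟨hPAt, hPAf, ?_, ?_, ?_, ?_, ?_, ?_, ?_, ?_⟩
  · intro a
    simp only [Fintype.sum_bool]
    cases a
    · linear_combination (hPAS4 false) + (hM4 false false false) + (hM4 false false true) +
        (hM4 false true false) + (hM4 false true true) - (hNF true true) - (hNF true false) -
        (hNF false true) - (hNF false false)
    · linear_combination (hPAS4 true) + (hM4 true false false) + (hM4 true false true) +
        (hM4 true true false) + (hM4 true true true) - (hNT true true) - (hNT true false) -
        (hNT false true) - (hNT false false)
  · -- E5a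
    apply mul_right_cancel₀ hpGne
    linear_combination (μ {ω | G ω = g}).toReal * ((hNF true false) + (hNF true true)) +
      (hIND false true false false false) + (hIND false true false false true) +
      (hIND false true true false false) + (hIND false true true false true) +
      (hIND false true false true false) + (hIND false true false true true) +
      (hIND false true true true false) + (hIND false true true true true) +
      (μ {ω | A ω = false ∧ G ω = g}).toReal *
        ((hRN false false) + (hRN false true) + (hRN true false) + (hRN true true)) -
      (μ {ω | A ω = false ∧ G ω = g}).toReal * (hPIS true true) -
      (μ {ω | A ω = false ∧ G ω = g}).toReal * (hHC true true)
  · -- E5b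
    apply mul_right_cancel₀ hpGne
    linear_combination (μ {ω | G ω = g}).toReal * ((hNT false false) + (hNT false true)) +
      (hIND true false false false false) + (hIND true false false true false) +
      (hIND true true false false false) + (hIND true true false true false) +
      (hIND true false false false true) + (hIND true false false true true) +
      (hIND true true false false true) + (hIND true true false true true) +
      (μ {ω | A ω = true ∧ G ω = g}).toReal *
        ((hRN false false) + (hRN false true) + (hRN true false) + (hRN true true)) -
      (μ {ω | A ω = true ∧ G ω = g}).toReal * (hPIS false false) -
      (μ {ω | A ω = true ∧ G ω = g}).toReal * (hHC false false)
  · -- E5c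
    apply mul_right_cancel₀ hpGne
    linear_combination (μ {ω | G ω = g}).toReal * ((hNT true false) + (hNT true true)) +
      (hIND true false true false false) + (hIND true false true true false) +
      (hIND true true true false false) + (hIND true true true true false) +
      (hIND true false true false true) + (hIND true false true true true) +
      (hIND true true true false true) + (hIND true true true true true) -
      (μ {ω | A ω = true ∧ G ω = g}).toReal * ((hPIS false true) + (hPIS true true)) -
      (μ {ω | A ω = true ∧ G ω = g}).toReal * ((hHC false true) + (hHC true true))
  · -- E1
    apply mul_right_cancel₀ hpGne
    linear_combination (μ {ω | G ω = g}).toReal * (hNT true true) +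
      (hIND true false true false true) + (hIND true false true true true) +
      (hIND true true true false true) + (hIND true true true true true) +
      (μ {ω | A ω = true ∧ G ω = g}).toReal * ((hF3A false true) + (hF3A true true)) -
      (μ {ω | A ω = true ∧ G ω = g}).toReal *
        condP μ {ω | Y1 ω = true} {ω | S0 ω = false ∧ S1 ω = true} * (hHC false true) -
      (μ {ω | A ω = true ∧ G ω = g}).toReal *
        condP μ {ω | Y1 ω = true} {ω | S0 ω = true ∧ S1 ω = true} * (hHC true true)
  · -- E2
    apply mul_right_cancel₀ hpGne
    linear_combination (μ {ω | G ω = g}).toReal * (hNT false true) +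
      (hIND true false false false true) + (hIND true false false true true) +
      (hIND true true false false true) + (hIND true true false true true) +
      (μ {ω | A ω = true ∧ G ω = g}).toReal * ((hRN false true) + (hRN true true)) +
      (μ {ω | A ω = true ∧ G ω = g}).toReal * (hF3A false false) -
      (μ {ω | A ω = true ∧ G ω = g}).toReal *
        condP μ {ω | Y1 ω = true} {ω | S0 ω = false ∧ S1 ω = false} * (hHC false false)
  · -- E3
    apply mul_right_cancel₀ hpGne
    linear_combination (μ {ω | G ω = g}).toReal * (hNF true true) +
      (hIND false true false true false) + (hIND false true false true true) +
      (hIND false true true true false) + (hIND false true true true true) +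
      (μ {ω | A ω = false ∧ G ω = g}).toReal * ((hRN true false) + (hRN true true)) +
      (μ {ω | A ω = false ∧ G ω = g}).toReal * (hF3B true true) -
      (μ {ω | A ω = false ∧ G ω = g}).toReal *
        condP μ {ω | Y0 ω = true} {ω | S0 ω = true ∧ S1 ω = true} * (hHC true true)
  · -- E4
    apply mul_right_cancel₀ hpGne
    linear_combination (μ {ω | G ω = g}).toReal * (hNF false true) +
      (hIND false false false true false) + (hIND false false false true true) +
      (hIND false false true true false) + (hIND false false true true true) +
      (μ {ω | A ω = false ∧ G ω = g}).toReal * ((hF3B false false) + (hF3B false true)) -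
      (μ {ω | A ω = false ∧ G ω = g}).toReal *
        condP μ {ω | Y0 ω = true} {ω | S0 ω = false ∧ S1 ω = false} * (hHC false false) -
      (μ {ω | A ω = false ∧ G ω = g}).toReal *
        condP μ {ω | Y0 ω = true} {ω | S0 ω = false ∧ S1 ω = true} * (hHC false true)

lemma rank_inj {m : ℕ} (M : Matrix (Fin m) (Fin 2) ℝ) (h : M.rank = 2)
    (v w : Fin 2 → ℝ) (hvw : M.mulVec v = M.mulVec w) : v = w := by
  have hker : LinearMap.ker M.mulVecLin = ⊥ := by
    have h1 := LinearMap.finrank_range_add_finrank_ker M.mulVecLin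
    rw [Matrix.rank] at h
    rw [h] at h1
    have h2 : Module.finrank ℝ (Fin 2 → ℝ) = 2 := by simp
    rw [h2] at h1
    have h3 : Module.finrank ℝ (LinearMap.ker M.mulVecLin) = 0 := by omega
    exact Submodule.finrank_eq_zero.mp h3
  have hinj : Function.Injective M.mulVecLin := by
    rwa [← LinearMap.ker_eq_bot]
  exact hinj (by simpa [Matrix.mulVecLin_apply] using hvw)

lemma rank_col_ne_zero {m : ℕ} (M : Matrix (Fin m) (Fin 2) ℝ) (h : M.rank = 2)
    (j : Fin 2) : ∃ g, M g j ≠ 0 := by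
  by_contra hc
  push_neg at hc
  have hz : (Pi.single j 1 : Fin 2 → ℝ) = 0 := by
    apply rank_inj M h
    funext g
    simp [Matrix.mulVec_single, hc g]
  have := congrFun hz j
  simp at this

/-- **Theorem 3(c).** Under Assumptions 5, 7, 8 and both parts of Condition 4, the
principal stratification average causal effects `PSACE_{ab|g}` are identified from the
observed data distribution for all principal strata `(a,b) ∈ {(0,0),(0,1),(1,1)}`. -/
theorem stmt9
    {Ω Ω' : Type*} [MeasurableSpace Ω] [MeasurableSpace Ω']
    (μ : Measure Ω) (μ' : Measure Ω')
    [IsProbabilityMeasure μ] [IsProbabilityMeasure μ']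
    {m : ℕ} (hm : 1 ≤ m)
    (G : Ω → Fin m) (A S0 S1 Y0 Y1 S Y : Ω → Bool)
    (G' : Ω' → Fin m) (A' S0' S1' Y0' Y1' S' Y' : Ω' → Bool)
    (hGmeas : Measurable G) (hAmeas : Measurable A)
    (hS0meas : Measurable S0) (hS1meas : Measurable S1)
    (hY0meas : Measurable Y0) (hY1meas : Measurable Y1)
    (hG'meas : Measurable G') (hA'meas : Measurable A')
    (hS0'meas : Measurable S0') (hS1'meas : Measurable S1')
    (hY0'meas : Measurable Y0') (hY1'meas : Measurable Y1')
    (hSdef : ∀ ω, S ω = bif A ω then S1 ω else S0 ω)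
    (hYdef : ∀ ω, Y ω = bif A ω then Y1 ω else Y0 ω)
    (hS'def : ∀ ω, S' ω = bif A' ω then S1' ω else S0' ω)
    (hY'def : ∀ ω, Y' ω = bif A' ω then Y1' ω else Y0' ω)
    -- Assumption 5 for μ
    (hA5pos : ∀ g : Fin m, 0 < μ {ω | G ω = g})
    (hA5ov : ∀ g : Fin m, 0 < condP μ {ω | A ω = true} {ω | G ω = g} ∧
        condP μ {ω | A ω = true} {ω | G ω = g} < 1)
    (hA5ind : ∀ (g : Fin m) (a s0 s1 y0 y1 : Bool),
      condP μ {ω | A ω = a ∧ S0 ω = s0 ∧ S1 ω = s1 ∧ Y0 ω = y0 ∧ Y1 ω = y1} {ω | G ω = g} =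
        condP μ {ω | A ω = a} {ω | G ω = g} *
          condP μ {ω | S0 ω = s0 ∧ S1 ω = s1 ∧ Y0 ω = y0 ∧ Y1 ω = y1} {ω | G ω = g})
    -- Assumption 5 for μ'
    (hA5pos' : ∀ g : Fin m, 0 < μ' {ω | G' ω = g})
    (hA5ov' : ∀ g : Fin m, 0 < condP μ' {ω | A' ω = true} {ω | G' ω = g} ∧
        condP μ' {ω | A' ω = true} {ω | G' ω = g} < 1)
    (hA5ind' : ∀ (g : Fin m) (a s0 s1 y0 y1 : Bool),
      condP μ' {ω | A' ω = a ∧ S0' ω = s0 ∧ S1' ω = s1 ∧ Y0' ω = y0 ∧ Y1' ω = y1}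
          {ω | G' ω = g} =
        condP μ' {ω | A' ω = a} {ω | G' ω = g} *
          condP μ' {ω | S0' ω = s0 ∧ S1' ω = s1 ∧ Y0' ω = y0 ∧ Y1' ω = y1} {ω | G' ω = g})
    -- Assumption 7 for μ
    (hA7 : ∀ (s0 s1 : Bool) (g : Fin m), 0 < μ {ω | S0 ω = s0 ∧ S1 ω = s1 ∧ G ω = g} →
      condP μ {ω | Y1 ω = true} {ω | S0 ω = s0 ∧ S1 ω = s1 ∧ G ω = g} =
        condP μ {ω | Y1 ω = true} {ω | S0 ω = s0 ∧ S1 ω = s1} ∧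
      condP μ {ω | Y0 ω = true} {ω | S0 ω = s0 ∧ S1 ω = s1 ∧ G ω = g} =
        condP μ {ω | Y0 ω = true} {ω | S0 ω = s0 ∧ S1 ω = s1})
    -- Assumption 7 for μ'
    (hA7' : ∀ (s0 s1 : Bool) (g : Fin m), 0 < μ' {ω | S0' ω = s0 ∧ S1' ω = s1 ∧ G' ω = g} →
      condP μ' {ω | Y1' ω = true} {ω | S0' ω = s0 ∧ S1' ω = s1 ∧ G' ω = g} =
        condP μ' {ω | Y1' ω = true} {ω | S0' ω = s0 ∧ S1' ω = s1} ∧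
      condP μ' {ω | Y0' ω = true} {ω | S0' ω = s0 ∧ S1' ω = s1 ∧ G' ω = g} =
        condP μ' {ω | Y0' ω = true} {ω | S0' ω = s0 ∧ S1' ω = s1})
    -- Assumption 8 (monotonicity) for μ and μ'
    (hA8 : μ {ω | S0 ω ≤ S1 ω} = 1)
    (hA8' : μ' {ω | S0' ω ≤ S1' ω} = 1)
    -- Condition 4(i): columns P(S⁰=0, S¹=1 | G=g) and P(S⁰=1, S¹=1 | G=g)
    (hC4i : (Matrix.of fun (g : Fin m) (j : Fin 2) =>
      condP μ {ω | S0 ω = (j = 1 : Bool) ∧ S1 ω = true} {ω | G ω = g}).rank = 2)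
    (hC4i' : (Matrix.of fun (g : Fin m) (j : Fin 2) =>
      condP μ' {ω | S0' ω = (j = 1 : Bool) ∧ S1' ω = true} {ω | G' ω = g}).rank = 2)
    -- Condition 4(ii): columns P(S⁰=0, S¹=1 | G=g) and P(S⁰=0, S¹=0 | G=g)
    (hC4ii : (Matrix.of fun (g : Fin m) (j : Fin 2) =>
      condP μ {ω | S0 ω = false ∧ S1 ω = (j = 0 : Bool)} {ω | G ω = g}).rank = 2)
    (hC4ii' : (Matrix.of fun (g : Fin m) (j : Fin 2) =>
      condP μ' {ω | S0' ω = false ∧ S1' ω = (j = 0 : Bool)} {ω | G' ω = g}).rank = 2)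
    -- equal observed data distributions
    (hobs : ∀ (g : Fin m) (a s y : Bool),
      μ {ω | G ω = g ∧ A ω = a ∧ S ω = s ∧ Y ω = y} =
        μ' {ω | G' ω = g ∧ A' ω = a ∧ S' ω = s ∧ Y' ω = y}) :
    ∀ a b : Bool, (a, b) ≠ (true, false) → ∀ g : Fin m,
      0 < μ {ω | S0 ω = a ∧ S1 ω = b ∧ G ω = g} →
      0 < μ' {ω | S0' ω = a ∧ S1' ω = b ∧ G' ω = g} →
      condP μ {ω | Y1 ω = true} {ω | S0 ω = a ∧ S1 ω = b ∧ G ω = g} -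
        condP μ {ω | Y0 ω = true} {ω | S0 ω = a ∧ S1 ω = b ∧ G ω = g} =
      condP μ' {ω | Y1' ω = true} {ω | S0' ω = a ∧ S1' ω = b ∧ G' ω = g} -
        condP μ' {ω | Y0' ω = true} {ω | S0' ω = a ∧ S1' ω = b ∧ G' ω = g} := by
  intro a b hab g₀ hpos hpos'
  have M := fun g => modelEqs μ G A S0 S1 Y0 Y1 S Y hGmeas hAmeas hS0meas hS1meas hY0meas
    hY1meas hSdef hYdef hA5pos hA5ov hA5ind hA7 hA8 g
  have M' := fun g => modelEqs μ' G' A' S0' S1' Y0' Y1' S' Y' hG'meas hA'meas hS0'meas hS1'meas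
    hY0'meas hY1'meas hS'def hY'def hA5pos' hA5ov' hA5ind' hA7' hA8' g
  have hPAt := fun g => (M g).1
  have hPAf := fun g => (M g).2.1
  have hE6 := fun g => (M g).2.2.1
  have hE5a := fun g => (M g).2.2.2.1
  have hE5b := fun g => (M g).2.2.2.2.1
  have hE5c := fun g => (M g).2.2.2.2.2.1
  have hE1 := fun g => (M g).2.2.2.2.2.2.1
  have hE2 := fun g => (M g).2.2.2.2.2.2.2.1
  have hE3 := fun g => (M g).2.2.2.2.2.2.2.2.1
  have hE4 := fun g => (M g).2.2.2.2.2.2.2.2.2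
  have hPAt' := fun g => (M' g).1
  have hPAf' := fun g => (M' g).2.1
  have hE6' := fun g => (M' g).2.2.1
  have hE5a' := fun g => (M' g).2.2.2.1
  have hE5b' := fun g => (M' g).2.2.2.2.1
  have hE5c' := fun g => (M' g).2.2.2.2.2.1
  have hE1' := fun g => (M' g).2.2.2.2.2.2.1
  have hE2' := fun g => (M' g).2.2.2.2.2.2.2.1
  have hE3' := fun g => (M' g).2.2.2.2.2.2.2.2.1
  have hE4' := fun g => (M' g).2.2.2.2.2.2.2.2.2
  clear M M'
  have hobsR : ∀ (g : Fin m) (a s y : Bool),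
      (μ {ω | G ω = g ∧ A ω = a ∧ S ω = s ∧ Y ω = y}).toReal =
      (μ' {ω | G' ω = g ∧ A' ω = a ∧ S' ω = s ∧ Y' ω = y}).toReal := by
    intro g a s y; rw [hobs]
  have hPAeq : ∀ (g : Fin m) (a : Bool),
      (μ {ω | A ω = a ∧ G ω = g}).toReal = (μ' {ω | A' ω = a ∧ G' ω = g}).toReal := by
    intro g a
    rw [hE6 g a, hE6' g a]
    exact Finset.sum_congr rfl fun s _ => Finset.sum_congr rfl fun y _ => hobsR g a s y
  -- transfer of the principal-stratum conditional probabilities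
  have hctt : ∀ g : Fin m, condP μ {ω | S0 ω = true ∧ S1 ω = true} {ω | G ω = g} =
      condP μ' {ω | S0' ω = true ∧ S1' ω = true} {ω | G' ω = g} := by
    intro g
    apply mul_left_cancel₀ (hPAf' g).ne'
    calc (μ' {ω | A' ω = false ∧ G' ω = g}).toReal *
          condP μ {ω | S0 ω = true ∧ S1 ω = true} {ω | G ω = g}
        = (μ {ω | A ω = false ∧ G ω = g}).toReal *
          condP μ {ω | S0 ω = true ∧ S1 ω = true} {ω | G ω = g} := by rw [hPAeq g false]
      _ = (μ {ω | G ω = g ∧ A ω = false ∧ S ω = true ∧ Y ω = false}).toReal +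
          (μ {ω | G ω = g ∧ A ω = false ∧ S ω = true ∧ Y ω = true}).toReal := (hE5a g).symm
      _ = (μ' {ω | G' ω = g ∧ A' ω = false ∧ S' ω = true ∧ Y' ω = false}).toReal +
          (μ' {ω | G' ω = g ∧ A' ω = false ∧ S' ω = true ∧ Y' ω = true}).toReal := by
            rw [hobsR g false true false, hobsR g false true true]
      _ = _ := hE5a' g
  have hcff : ∀ g : Fin m, condP μ {ω | S0 ω = false ∧ S1 ω = false} {ω | G ω = g} =
      condP μ' {ω | S0' ω = false ∧ S1' ω = false} {ω | G' ω = g} := by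
    intro g
    apply mul_left_cancel₀ (hPAt' g).ne'
    calc (μ' {ω | A' ω = true ∧ G' ω = g}).toReal *
          condP μ {ω | S0 ω = false ∧ S1 ω = false} {ω | G ω = g}
        = (μ {ω | A ω = true ∧ G ω = g}).toReal *
          condP μ {ω | S0 ω = false ∧ S1 ω = false} {ω | G ω = g} := by rw [hPAeq g true]
      _ = (μ {ω | G ω = g ∧ A ω = true ∧ S ω = false ∧ Y ω = false}).toReal +
          (μ {ω | G ω = g ∧ A ω = true ∧ S ω = false ∧ Y ω = true}).toReal := (hE5b g).symm
      _ = (μ' {ω | G' ω = g ∧ A' ω = true ∧ S' ω = false ∧ Y' ω = false}).toReal +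
          (μ' {ω | G' ω = g ∧ A' ω = true ∧ S' ω = false ∧ Y' ω = true}).toReal := by
            rw [hobsR g true false false, hobsR g true false true]
      _ = _ := hE5b' g
  have hcft : ∀ g : Fin m, condP μ {ω | S0 ω = false ∧ S1 ω = true} {ω | G ω = g} =
      condP μ' {ω | S0' ω = false ∧ S1' ω = true} {ω | G' ω = g} := by
    intro g
    have h : (μ {ω | A ω = true ∧ G ω = g}).toReal *
        (condP μ {ω | S0 ω = false ∧ S1 ω = true} {ω | G ω = g} +
         condP μ {ω | S0 ω = true ∧ S1 ω = true} {ω | G ω = g}) =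
        (μ {ω | A ω = true ∧ G ω = g}).toReal *
        (condP μ' {ω | S0' ω = false ∧ S1' ω = true} {ω | G' ω = g} +
         condP μ' {ω | S0' ω = true ∧ S1' ω = true} {ω | G' ω = g}) := by
      rw [← hE5c g, hobsR g true true false, hobsR g true true true, hE5c' g, hPAeq g true]
    have h2 := mul_left_cancel₀ (hPAt g).ne' h
    have h3 := hctt g
    linarith
  -- identification of the four "mixture" conditional outcome probabilities
  have hq1 : ∀ g : Fin m,
      condP μ {ω | Y1 ω = true} {ω | S0 ω = false ∧ S1 ω = true} *
        condP μ {ω | S0 ω = false ∧ S1 ω = true} {ω | G ω = g} +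
      condP μ {ω | Y1 ω = true} {ω | S0 ω = true ∧ S1 ω = true} *
        condP μ {ω | S0 ω = true ∧ S1 ω = true} {ω | G ω = g} =
      condP μ' {ω | Y1' ω = true} {ω | S0' ω = false ∧ S1' ω = true} *
        condP μ {ω | S0 ω = false ∧ S1 ω = true} {ω | G ω = g} +
      condP μ' {ω | Y1' ω = true} {ω | S0' ω = true ∧ S1' ω = true} *
        condP μ {ω | S0 ω = true ∧ S1 ω = true} {ω | G ω = g} := by
    intro g
    have h2 : condP μ {ω | Y1 ω = true} {ω | S0 ω = false ∧ S1 ω = true} *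
          condP μ {ω | S0 ω = false ∧ S1 ω = true} {ω | G ω = g} +
        condP μ {ω | Y1 ω = true} {ω | S0 ω = true ∧ S1 ω = true} *
          condP μ {ω | S0 ω = true ∧ S1 ω = true} {ω | G ω = g} =
        condP μ' {ω | Y1' ω = true} {ω | S0' ω = false ∧ S1' ω = true} *
          condP μ' {ω | S0' ω = false ∧ S1' ω = true} {ω | G' ω = g} +
        condP μ' {ω | Y1' ω = true} {ω | S0' ω = true ∧ S1' ω = true} *
          condP μ' {ω | S0' ω = true ∧ S1' ω = true} {ω | G' ω = g} := by
      apply mul_left_cancel₀ (hPAt g).ne'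
      calc (μ {ω | A ω = true ∧ G ω = g}).toReal * _
          = (μ {ω | G ω = g ∧ A ω = true ∧ S ω = true ∧ Y ω = true}).toReal := (hE1 g).symm
        _ = (μ' {ω | G' ω = g ∧ A' ω = true ∧ S' ω = true ∧ Y' ω = true}).toReal :=
            hobsR g true true true
        _ = (μ' {ω | A' ω = true ∧ G' ω = g}).toReal * _ := hE1' g
        _ = (μ {ω | A ω = true ∧ G ω = g}).toReal * _ := by rw [hPAeq g true]
    rw [← hcft g, ← hctt g] at h2
    exact h2
  have hq0 : ∀ g : Fin m,
      condP μ {ω | Y0 ω = true} {ω | S0 ω = false ∧ S1 ω = false} *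
        condP μ {ω | S0 ω = false ∧ S1 ω = false} {ω | G ω = g} +
      condP μ {ω | Y0 ω = true} {ω | S0 ω = false ∧ S1 ω = true} *
        condP μ {ω | S0 ω = false ∧ S1 ω = true} {ω | G ω = g} =
      condP μ' {ω | Y0' ω = true} {ω | S0' ω = false ∧ S1' ω = false} *
        condP μ {ω | S0 ω = false ∧ S1 ω = false} {ω | G ω = g} +
      condP μ' {ω | Y0' ω = true} {ω | S0' ω = false ∧ S1' ω = true} *
        condP μ {ω | S0 ω = false ∧ S1 ω = true} {ω | G ω = g} := by
    intro g
    have h2 : condP μ {ω | Y0 ω = true} {ω | S0 ω = false ∧ S1 ω = false} *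
          condP μ {ω | S0 ω = false ∧ S1 ω = false} {ω | G ω = g} +
        condP μ {ω | Y0 ω = true} {ω | S0 ω = false ∧ S1 ω = true} *
          condP μ {ω | S0 ω = false ∧ S1 ω = true} {ω | G ω = g} =
        condP μ' {ω | Y0' ω = true} {ω | S0' ω = false ∧ S1' ω = false} *
          condP μ' {ω | S0' ω = false ∧ S1' ω = false} {ω | G' ω = g} +
        condP μ' {ω | Y0' ω = true} {ω | S0' ω = false ∧ S1' ω = true} *
          condP μ' {ω | S0' ω = false ∧ S1' ω = true} {ω | G' ω = g} := by
      apply mul_left_cancel₀ (hPAf g).ne'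
      calc (μ {ω | A ω = false ∧ G ω = g}).toReal * _
          = (μ {ω | G ω = g ∧ A ω = false ∧ S ω = false ∧ Y ω = true}).toReal := (hE4 g).symm
        _ = (μ' {ω | G' ω = g ∧ A' ω = false ∧ S' ω = false ∧ Y' ω = true}).toReal :=
            hobsR g false false true
        _ = (μ' {ω | A' ω = false ∧ G' ω = g}).toReal * _ := hE4' g
        _ = (μ {ω | A ω = false ∧ G ω = g}).toReal * _ := by rw [hPAeq g false]
    rw [← hcff g, ← hcft g] at h2
    exact h2
  have hsingle1 : ∀ g : Fin m,
      condP μ {ω | Y1 ω = true} {ω | S0 ω = false ∧ S1 ω = false} *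
        condP μ {ω | S0 ω = false ∧ S1 ω = false} {ω | G ω = g} =
      condP μ' {ω | Y1' ω = true} {ω | S0' ω = false ∧ S1' ω = false} *
        condP μ {ω | S0 ω = false ∧ S1 ω = false} {ω | G ω = g} := by
    intro g
    have h2 : condP μ {ω | Y1 ω = true} {ω | S0 ω = false ∧ S1 ω = false} *
          condP μ {ω | S0 ω = false ∧ S1 ω = false} {ω | G ω = g} =
        condP μ' {ω | Y1' ω = true} {ω | S0' ω = false ∧ S1' ω = false} *
          condP μ' {ω | S0' ω = false ∧ S1' ω = false} {ω | G' ω = g} := by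
      apply mul_left_cancel₀ (hPAt g).ne'
      calc (μ {ω | A ω = true ∧ G ω = g}).toReal * _
          = (μ {ω | G ω = g ∧ A ω = true ∧ S ω = false ∧ Y ω = true}).toReal := (hE2 g).symm
        _ = (μ' {ω | G' ω = g ∧ A' ω = true ∧ S' ω = false ∧ Y' ω = true}).toReal :=
            hobsR g true false true
        _ = (μ' {ω | A' ω = true ∧ G' ω = g}).toReal * _ := hE2' g
        _ = (μ {ω | A ω = true ∧ G ω = g}).toReal * _ := by rw [hPAeq g true]
    rw [← hcff g] at h2
    exact h2
  have hsingle0 : ∀ g : Fin m,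
      condP μ {ω | Y0 ω = true} {ω | S0 ω = true ∧ S1 ω = true} *
        condP μ {ω | S0 ω = true ∧ S1 ω = true} {ω | G ω = g} =
      condP μ' {ω | Y0' ω = true} {ω | S0' ω = true ∧ S1' ω = true} *
        condP μ {ω | S0 ω = true ∧ S1 ω = true} {ω | G ω = g} := by
    intro g
    have h2 : condP μ {ω | Y0 ω = true} {ω | S0 ω = true ∧ S1 ω = true} *
          condP μ {ω | S0 ω = true ∧ S1 ω = true} {ω | G ω = g} =
        condP μ' {ω | Y0' ω = true} {ω | S0' ω = true ∧ S1' ω = true} *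
          condP μ' {ω | S0' ω = true ∧ S1' ω = true} {ω | G' ω = g} := by
      apply mul_left_cancel₀ (hPAf g).ne'
      calc (μ {ω | A ω = false ∧ G ω = g}).toReal * _
          = (μ {ω | G ω = g ∧ A ω = false ∧ S ω = true ∧ Y ω = true}).toReal := (hE3 g).symm
        _ = (μ' {ω | G' ω = g ∧ A' ω = false ∧ S' ω = true ∧ Y' ω = true}).toReal :=
            hobsR g false true true
        _ = (μ' {ω | A' ω = false ∧ G' ω = g}).toReal * _ := hE3' g
        _ = (μ {ω | A ω = false ∧ G ω = g}).toReal * _ := by rw [hPAeq g false]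
    rw [← hctt g] at h2
    exact h2
  -- use the rank conditions
  have th1ft_tt : condP μ {ω | Y1 ω = true} {ω | S0 ω = false ∧ S1 ω = true} =
      condP μ' {ω | Y1' ω = true} {ω | S0' ω = false ∧ S1' ω = true} ∧
      condP μ {ω | Y1 ω = true} {ω | S0 ω = true ∧ S1 ω = true} =
      condP μ' {ω | Y1' ω = true} {ω | S0' ω = true ∧ S1' ω = true} := by
    have hv := rank_inj _ hC4i
      (fun j => if j = 0 then condP μ {ω | Y1 ω = true} {ω | S0 ω = false ∧ S1 ω = true}
        else condP μ {ω | Y1 ω = true} {ω | S0 ω = true ∧ S1 ω = true})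
      (fun j => if j = 0 then condP μ' {ω | Y1' ω = true} {ω | S0' ω = false ∧ S1' ω = true}
        else condP μ' {ω | Y1' ω = true} {ω | S0' ω = true ∧ S1' ω = true})
      (by
        funext g
        simp only [Matrix.mulVec, dotProduct, Fin.sum_univ_two, Matrix.of_apply]
        norm_num
        linear_combination hq1 g)
    constructor
    · have := congrFun hv 0; simpa using this
    · have := congrFun hv 1; simpa using this
  have th0ft_ff : condP μ {ω | Y0 ω = true} {ω | S0 ω = false ∧ S1 ω = true} =
      condP μ' {ω | Y0' ω = true} {ω | S0' ω = false ∧ S1' ω = true} ∧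
      condP μ {ω | Y0 ω = true} {ω | S0 ω = false ∧ S1 ω = false} =
      condP μ' {ω | Y0' ω = true} {ω | S0' ω = false ∧ S1' ω = false} := by
    have hv := rank_inj _ hC4ii
      (fun j => if j = 0 then condP μ {ω | Y0 ω = true} {ω | S0 ω = false ∧ S1 ω = true}
        else condP μ {ω | Y0 ω = true} {ω | S0 ω = false ∧ S1 ω = false})
      (fun j => if j = 0 then condP μ' {ω | Y0' ω = true} {ω | S0' ω = false ∧ S1' ω = true}
        else condP μ' {ω | Y0' ω = true} {ω | S0' ω = false ∧ S1' ω = false})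
      (by
        funext g
        simp only [Matrix.mulVec, dotProduct, Fin.sum_univ_two, Matrix.of_apply]
        norm_num
        linear_combination hq0 g)
    constructor
    · have := congrFun hv 0; simpa using this
    · have := congrFun hv 1; simpa using this
  have th1ff : condP μ {ω | Y1 ω = true} {ω | S0 ω = false ∧ S1 ω = false} =
      condP μ' {ω | Y1' ω = true} {ω | S0' ω = false ∧ S1' ω = false} := by
    obtain ⟨g, hg⟩ := rank_col_ne_zero _ hC4ii 1
    have hg2 : condP μ {ω | S0 ω = false ∧ S1 ω = false} {ω | G ω = g} ≠ 0 := by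
      simpa using hg
    exact mul_right_cancel₀ hg2 (hsingle1 g)
  have th0tt : condP μ {ω | Y0 ω = true} {ω | S0 ω = true ∧ S1 ω = true} =
      condP μ' {ω | Y0' ω = true} {ω | S0' ω = true ∧ S1' ω = true} := by
    obtain ⟨g, hg⟩ := rank_col_ne_zero _ hC4i 1
    have hg2 : condP μ {ω | S0 ω = true ∧ S1 ω = true} {ω | G ω = g} ≠ 0 := by
      simpa using hg
    exact mul_right_cancel₀ hg2 (hsingle0 g)
  -- conclude using Assumption 7 at the stratum (a,b)
  rw [(hA7 a b g₀ hpos).1, (hA7 a b g₀ hpos).2, (hA7' a b g₀ hpos').1, (hA7' a b g₀ hpos').2]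
  cases a <;> cases b
  · rw [th1ff, th0ft_ff.2]
  · rw [th1ft_tt.1, th0ft_ff.1]
  · exact absurd rfl hab
  · rw [th1ft_tt.2, th0tt]
end

section
/- Observed-data linear system (Equation (2)): Under Assumptions 1 and 2, for every g ∈ Fin m, P(Y=1 | G=g, A=1) = π₁₍₀₎·P(Y=0 | G=g, A=0) + π₁₍₁₎·P(Y=1 | G=g, A=0), where π₁₍ₐ₎ := P(Y¹=1 | Y⁰=a) and all displayed conditional probabilities are well-defined by Assumption 1. -/
open MeasureTheory ProbabilityTheory

lemma bsplit {Ω : Type*} [MeasurableSpace Ω] (μ : Measure Ω) [IsFiniteMeasure μ]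
    {P : Ω → Prop} (hP : MeasurableSet {ω | P ω}) {f : Ω → Bool} (hf : Measurable f) :
    (μ {ω | P ω}).toReal =
      (μ {ω | P ω ∧ f ω = true}).toReal + (μ {ω | P ω ∧ f ω = false}).toReal := by
  have h1 : MeasurableSet {ω | P ω ∧ f ω = false} :=
    hP.inter (hf (measurableSet_singleton false))
  have hd : Disjoint {ω | P ω ∧ f ω = true} {ω | P ω ∧ f ω = false} := by
    rw [Set.disjoint_left]; rintro ω ⟨_, h1⟩ ⟨_, h2⟩; simp_all
  have hu : {ω | P ω} = {ω | P ω ∧ f ω = true} ∪ {ω | P ω ∧ f ω = false} := by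
    ext ω; rcases h : f ω <;> simp [h]
  rw [hu, measure_union hd h1, ENNReal.toReal_add (measure_ne_top _ _) (measure_ne_top _ _)]

/-- **Observed-data linear system (Equation (2)).** Under Assumptions 1 and 2, for every `g`,
`P(Y=1 | G=g, A=1) = π₁₍₀₎·P(Y=0 | G=g, A=0) + π₁₍₁₎·P(Y=1 | G=g, A=0)`,
where `π₁₍ₐ₎ := P(Y¹=1 | Y⁰=a)`. -/
theorem stmt11
    {Ω : Type*} [MeasurableSpace Ω] (μ : Measure Ω) [IsProbabilityMeasure μ]
    {m : ℕ} (hm : 1 ≤ m)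
    (G : Ω → Fin m) (A Y0 Y1 Y : Ω → Bool)
    (hGmeas : Measurable G) (hAmeas : Measurable A)
    (hY0meas : Measurable Y0) (hY1meas : Measurable Y1)
    (hYdef : ∀ ω, Y ω = bif A ω then Y1 ω else Y0 ω)
    -- Assumption 1
    (hA1pos : ∀ g : Fin m, 0 < μ {ω | G ω = g})
    (hA1ov : ∀ g : Fin m, 0 < condP μ {ω | A ω = true} {ω | G ω = g} ∧
        condP μ {ω | A ω = true} {ω | G ω = g} < 1)
    (hA1ind : ∀ (g : Fin m) (a y0 y1 : Bool),
      condP μ {ω | A ω = a ∧ Y0 ω = y0 ∧ Y1 ω = y1} {ω | G ω = g} =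
        condP μ {ω | A ω = a} {ω | G ω = g} *
          condP μ {ω | Y0 ω = y0 ∧ Y1 ω = y1} {ω | G ω = g})
    -- Assumption 2
    (hA2pos : ∀ a : Bool, 0 < μ {ω | Y0 ω = a})
    (hA2 : ∀ (a b : Bool) (g : Fin m), 0 < μ {ω | Y0 ω = a ∧ G ω = g} →
      condP μ {ω | Y1 ω = b} {ω | Y0 ω = a ∧ G ω = g} =
        condP μ {ω | Y1 ω = b} {ω | Y0 ω = a}) :
    ∀ g : Fin m,
      condP μ {ω | Y ω = true} {ω | G ω = g ∧ A ω = true} =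
        condP μ {ω | Y1 ω = true} {ω | Y0 ω = false} *
          condP μ {ω | Y ω = false} {ω | G ω = g ∧ A ω = false} +
        condP μ {ω | Y1 ω = true} {ω | Y0 ω = true} *
          condP μ {ω | Y ω = true} {ω | G ω = g ∧ A ω = false} := by
  intro g
  have mG : MeasurableSet {ω | G ω = g} := hGmeas (measurableSet_singleton g)
  have mA : ∀ a : Bool, MeasurableSet {ω | A ω = a} :=
    fun a => hAmeas (measurableSet_singleton a)
  have mY0 : ∀ a : Bool, MeasurableSet {ω | Y0 ω = a} :=
    fun a => hY0meas (measurableSet_singleton a)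
  have mY1 : ∀ a : Bool, MeasurableSet {ω | Y1 ω = a} :=
    fun a => hY1meas (measurableSet_singleton a)
  set N : ℝ := (μ {ω | G ω = g}).toReal with hNdef
  have hN0 : 0 < N := ENNReal.toReal_pos (hA1pos g).ne' (measure_ne_top _ _)
  -- independence in unnormalized form
  have hM : ∀ a y0 y1 : Bool,
      (μ {ω | A ω = a ∧ Y0 ω = y0 ∧ Y1 ω = y1 ∧ G ω = g}).toReal * N =
        (μ {ω | A ω = a ∧ G ω = g}).toReal *
          (μ {ω | Y0 ω = y0 ∧ Y1 ω = y1 ∧ G ω = g}).toReal := by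
    intro a y0 y1
    have h := hA1ind g a y0 y1
    rw [condP, condP, condP,
      show {ω | A ω = a ∧ Y0 ω = y0 ∧ Y1 ω = y1} ∩ {ω | G ω = g} =
          {ω | A ω = a ∧ Y0 ω = y0 ∧ Y1 ω = y1 ∧ G ω = g} from by
        ext ω; simp only [Set.mem_inter_iff, Set.mem_setOf_eq]; tauto,
      show {ω | A ω = a} ∩ {ω | G ω = g} = {ω | A ω = a ∧ G ω = g} from rfl,
      show {ω | Y0 ω = y0 ∧ Y1 ω = y1} ∩ {ω | G ω = g} =
          {ω | Y0 ω = y0 ∧ Y1 ω = y1 ∧ G ω = g} from by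
        ext ω; simp only [Set.mem_inter_iff, Set.mem_setOf_eq]; tauto] at h
    rw [← hNdef, div_mul_div_comm, div_eq_div_iff hN0.ne' (mul_pos hN0 hN0).ne'] at h
    refine mul_right_cancel₀ hN0.ne' ?_
    linear_combination h
  -- positivity of the two arms
  have hPat : 0 < (μ {ω | A ω = true ∧ G ω = g}).toReal := by
    have hx := (hA1ov g).1
    rw [condP, show {ω | A ω = true} ∩ {ω | G ω = g} = {ω | A ω = true ∧ G ω = g} from rfl]
      at hx
    rcases div_pos_iff.mp hx with ⟨h, _⟩ | ⟨_, h⟩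
    · exact h
    · linarith
  have hsplitA : N = (μ {ω | A ω = true ∧ G ω = g}).toReal +
      (μ {ω | A ω = false ∧ G ω = g}).toReal := by
    have h := bsplit μ (P := fun ω => G ω = g) mG hAmeas
    rw [show {ω | G ω = g ∧ A ω = true} = {ω | A ω = true ∧ G ω = g} from by
          ext ω; simp only [Set.mem_setOf_eq]; tauto,
        show {ω | G ω = g ∧ A ω = false} = {ω | A ω = false ∧ G ω = g} from by
          ext ω; simp only [Set.mem_setOf_eq]; tauto] at h
    exact h
  have hPaf : 0 < (μ {ω | A ω = false ∧ G ω = g}).toReal := by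
    have hx := (hA1ov g).2
    rw [condP, show {ω | A ω = true} ∩ {ω | G ω = g} = {ω | A ω = true ∧ G ω = g} from rfl]
      at hx
    rw [div_lt_one hN0] at hx
    linarith
  -- transport
  have hT : ∀ a : Bool,
      (μ {ω | Y0 ω = a ∧ Y1 ω = true ∧ G ω = g}).toReal =
        condP μ {ω | Y1 ω = true} {ω | Y0 ω = a} *
          ((μ {ω | Y0 ω = a ∧ Y1 ω = false ∧ G ω = g}).toReal +
           (μ {ω | Y0 ω = a ∧ Y1 ω = true ∧ G ω = g}).toReal) := by
    intro a
    have hS : (μ {ω | Y0 ω = a ∧ G ω = g}).toReal =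
        (μ {ω | Y0 ω = a ∧ Y1 ω = true ∧ G ω = g}).toReal +
        (μ {ω | Y0 ω = a ∧ Y1 ω = false ∧ G ω = g}).toReal := by
      have h := bsplit μ (P := fun ω => Y0 ω = a ∧ G ω = g) ((mY0 a).inter mG) hY1meas
      rw [show {ω | (Y0 ω = a ∧ G ω = g) ∧ Y1 ω = true} =
            {ω | Y0 ω = a ∧ Y1 ω = true ∧ G ω = g} from by
          ext ω; simp only [Set.mem_setOf_eq]; tauto,
        show {ω | (Y0 ω = a ∧ G ω = g) ∧ Y1 ω = false} =
            {ω | Y0 ω = a ∧ Y1 ω = false ∧ G ω = g} from by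
          ext ω; simp only [Set.mem_setOf_eq]; tauto] at h
      exact h
    by_cases h0 : μ {ω | Y0 ω = a ∧ G ω = g} = 0
    · have hsub : ∀ b : Bool, (μ {ω | Y0 ω = a ∧ Y1 ω = b ∧ G ω = g}).toReal = 0 := by
        intro b
        have : μ {ω | Y0 ω = a ∧ Y1 ω = b ∧ G ω = g} = 0 := by
          refine measure_mono_null ?_ h0
          intro ω hω
          simp only [Set.mem_setOf_eq] at *
          exact ⟨hω.1, hω.2.2⟩
        simp [this]
      rw [hsub true, hsub false]; ring
    · have hpos : 0 < μ {ω | Y0 ω = a ∧ G ω = g} :=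
        lt_of_le_of_ne zero_le (Ne.symm h0)
      have h := hA2 a true g hpos
      rw [condP, show {ω | Y1 ω = true} ∩ {ω | Y0 ω = a ∧ G ω = g} =
            {ω | Y0 ω = a ∧ Y1 ω = true ∧ G ω = g} from by
          ext ω; simp only [Set.mem_inter_iff, Set.mem_setOf_eq]; tauto] at h
      have hd0 : 0 < (μ {ω | Y0 ω = a ∧ G ω = g}).toReal :=
        ENNReal.toReal_pos h0 (measure_ne_top _ _)
      rw [div_eq_iff hd0.ne'] at h
      rw [hS] at h
      linear_combination h
  -- numerators
  have numt : (μ ({ω | Y ω = true} ∩ {ω | A ω = true ∧ G ω = g})).toReal * N =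
      (μ {ω | A ω = true ∧ G ω = g}).toReal *
        ((μ {ω | Y0 ω = true ∧ Y1 ω = true ∧ G ω = g}).toReal +
         (μ {ω | Y0 ω = false ∧ Y1 ω = true ∧ G ω = g}).toReal) := by
    have e : {ω | Y ω = true} ∩ {ω | A ω = true ∧ G ω = g} =
        {ω | A ω = true ∧ Y1 ω = true ∧ G ω = g} := by
      ext ω
      simp only [Set.mem_inter_iff, Set.mem_setOf_eq, hYdef ω]
      rcases h : A ω <;> simp [h] <;> tauto
    rw [e]
    have h := bsplit μ (P := fun ω => A ω = true ∧ Y1 ω = true ∧ G ω = g)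
      ((mA true).inter ((mY1 true).inter mG)) hY0meas
    rw [show {ω | (A ω = true ∧ Y1 ω = true ∧ G ω = g) ∧ Y0 ω = true} =
          {ω | A ω = true ∧ Y0 ω = true ∧ Y1 ω = true ∧ G ω = g} from by
        ext ω; simp only [Set.mem_setOf_eq]; tauto,
      show {ω | (A ω = true ∧ Y1 ω = true ∧ G ω = g) ∧ Y0 ω = false} =
          {ω | A ω = true ∧ Y0 ω = false ∧ Y1 ω = true ∧ G ω = g} from by
        ext ω; simp only [Set.mem_setOf_eq]; tauto] at h
    rw [h, add_mul, hM true true true, hM true false true]; ring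
  have numf : ∀ b : Bool,
      (μ ({ω | Y ω = b} ∩ {ω | A ω = false ∧ G ω = g})).toReal * N =
      (μ {ω | A ω = false ∧ G ω = g}).toReal *
        ((μ {ω | Y0 ω = b ∧ Y1 ω = false ∧ G ω = g}).toReal +
         (μ {ω | Y0 ω = b ∧ Y1 ω = true ∧ G ω = g}).toReal) := by
    intro b
    have e : {ω | Y ω = b} ∩ {ω | A ω = false ∧ G ω = g} =
        {ω | A ω = false ∧ Y0 ω = b ∧ G ω = g} := by
      ext ω
      simp only [Set.mem_inter_iff, Set.mem_setOf_eq, hYdef ω]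
      rcases h : A ω <;> simp [h] <;> tauto
    rw [e]
    have h := bsplit μ (P := fun ω => A ω = false ∧ Y0 ω = b ∧ G ω = g)
      ((mA false).inter ((mY0 b).inter mG)) hY1meas
    rw [show {ω | (A ω = false ∧ Y0 ω = b ∧ G ω = g) ∧ Y1 ω = true} =
          {ω | A ω = false ∧ Y0 ω = b ∧ Y1 ω = true ∧ G ω = g} from by
        ext ω; simp only [Set.mem_setOf_eq]; tauto,
      show {ω | (A ω = false ∧ Y0 ω = b ∧ G ω = g) ∧ Y1 ω = false} =
          {ω | A ω = false ∧ Y0 ω = b ∧ Y1 ω = false ∧ G ω = g} from by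
        ext ω; simp only [Set.mem_setOf_eq]; tauto] at h
    rw [h, add_mul, hM false b true, hM false b false]; ring
  -- rewrite the goal
  have edent : {ω | G ω = g ∧ A ω = true} = {ω | A ω = true ∧ G ω = g} := by
    ext ω; simp only [Set.mem_setOf_eq]; tauto
  have edenf : {ω | G ω = g ∧ A ω = false} = {ω | A ω = false ∧ G ω = g} := by
    ext ω; simp only [Set.mem_setOf_eq]; tauto
  have e1 : condP μ {ω | Y ω = true} {ω | G ω = g ∧ A ω = true} =
      ((μ {ω | Y0 ω = true ∧ Y1 ω = true ∧ G ω = g}).toReal +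
       (μ {ω | Y0 ω = false ∧ Y1 ω = true ∧ G ω = g}).toReal) / N := by
    rw [condP, edent, div_eq_div_iff hPat.ne' hN0.ne']
    linear_combination numt
  have e2 : ∀ b : Bool, condP μ {ω | Y ω = b} {ω | G ω = g ∧ A ω = false} =
      ((μ {ω | Y0 ω = b ∧ Y1 ω = false ∧ G ω = g}).toReal +
       (μ {ω | Y0 ω = b ∧ Y1 ω = true ∧ G ω = g}).toReal) / N := by
    intro b
    rw [condP, edenf, div_eq_div_iff hPaf.ne' hN0.ne']
    linear_combination numf b
  rw [e1, e2 true, e2 false]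
  field_simp
  linear_combination hT false + hT true
end

section
/- Population least-squares representation of the transition probabilities: Under Assumptions 1 and 2 and Condition 1, let X̃_g := (P(Y=0 | G=g, A=0), P(Y=1 | G=g, A=0)) ∈ ℝ² and Ỹ_g := P(Y=1 | G=g, A=1) for g ∈ Fin m, and let θ := (π₁₍₀₎, π₁₍₁₎) with π₁₍ₐ₎ = P(Y¹=1 | Y⁰=a). Then the 2×2 matrix Σ_g X̃_g X̃_gᵀ is invertible and θ = (Σ_g X̃_g X̃_gᵀ)⁻¹ · Σ_g X̃_g Ỹ_g; moreover, θ is the unique vector in ℝ² satisfying Ỹ_g = X̃_gᵀ θ for all g ∈ Fin m. -/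
open MeasureTheory ProbabilityTheory Matrix

lemma auxIsUnit {n : Type*} [Fintype n] [DecidableEq n] (A : Matrix n n ℝ)
    (h : A.rank = Fintype.card n) : IsUnit A := by
  rw [← Matrix.mulVec_surjective_iff_isUnit]
  have htop : LinearMap.range A.mulVecLin = ⊤ := by
    apply Submodule.eq_top_of_finrank_eq
    rw [show Module.finrank ℝ (LinearMap.range A.mulVecLin) = A.rank from rfl, h,
      Module.finrank_fintype_fun_eq_card]
  intro v
  exact LinearMap.range_eq_top.mp htop v

/-- **Population least-squares representation of the transition probabilities.**
Under Assumptions 1, 2 and Condition 1, the `2 × 2` matrix `Σ_g X̃_g X̃_gᵀ` is invertible,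
`θ = (Σ_g X̃_g X̃_gᵀ)⁻¹ · Σ_g X̃_g Ỹ_g`, and `θ` is the unique vector satisfying
`Ỹ_g = X̃_gᵀ θ` for all `g`. -/
theorem stmt13
    {Ω : Type*} [MeasurableSpace Ω] (μ : Measure Ω) [IsProbabilityMeasure μ]
    {m : ℕ} (hm : 1 ≤ m)
    (G : Ω → Fin m) (A Y0 Y1 Y : Ω → Bool)
    (hGmeas : Measurable G) (hAmeas : Measurable A)
    (hY0meas : Measurable Y0) (hY1meas : Measurable Y1)
    (hYdef : ∀ ω, Y ω = bif A ω then Y1 ω else Y0 ω)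
    -- Assumption 1
    (hA1pos : ∀ g : Fin m, 0 < μ {ω | G ω = g})
    (hA1ov : ∀ g : Fin m, 0 < condP μ {ω | A ω = true} {ω | G ω = g} ∧
        condP μ {ω | A ω = true} {ω | G ω = g} < 1)
    (hA1ind : ∀ (g : Fin m) (a y0 y1 : Bool),
      condP μ {ω | A ω = a ∧ Y0 ω = y0 ∧ Y1 ω = y1} {ω | G ω = g} =
        condP μ {ω | A ω = a} {ω | G ω = g} *
          condP μ {ω | Y0 ω = y0 ∧ Y1 ω = y1} {ω | G ω = g})
    -- Assumption 2
    (hA2pos : ∀ a : Bool, 0 < μ {ω | Y0 ω = a})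
    (hA2 : ∀ (a b : Bool) (g : Fin m), 0 < μ {ω | Y0 ω = a ∧ G ω = g} →
      condP μ {ω | Y1 ω = b} {ω | Y0 ω = a ∧ G ω = g} =
        condP μ {ω | Y1 ω = b} {ω | Y0 ω = a})
    -- Condition 1
    (hC1 : (Matrix.of fun (g : Fin m) (a : Bool) =>
      condP μ {ω | Y0 ω = a} {ω | G ω = g}).rank = 2)
    -- the population quantities X̃_g, Ỹ_g and the parameter θ
    (Xt : Fin m → Fin 2 → ℝ)
    (hXt : ∀ g : Fin m, Xt g =
      ![condP μ {ω | Y ω = false} {ω | G ω = g ∧ A ω = false},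
        condP μ {ω | Y ω = true} {ω | G ω = g ∧ A ω = false}])
    (Yt : Fin m → ℝ)
    (hYt : ∀ g : Fin m, Yt g = condP μ {ω | Y ω = true} {ω | G ω = g ∧ A ω = true})
    (θ : Fin 2 → ℝ)
    (hθ : θ = ![condP μ {ω | Y1 ω = true} {ω | Y0 ω = false},
                condP μ {ω | Y1 ω = true} {ω | Y0 ω = true}]) :
    IsUnit (∑ g : Fin m, vecMulVec (Xt g) (Xt g)) ∧
    θ = (∑ g : Fin m, vecMulVec (Xt g) (Xt g))⁻¹ *ᵥ (∑ g : Fin m, Yt g • Xt g) ∧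
    (∀ θ' : Fin 2 → ℝ, (∀ g : Fin m, Yt g = Xt g ⬝ᵥ θ') → θ' = θ) := by
  classical
  set M : Matrix (Fin m) Bool ℝ :=
    Matrix.of fun (g : Fin m) (a : Bool) => condP μ {ω | Y0 ω = a} {ω | G ω = g} with hMdef
  -- basic positivity
  have hνG : ∀ g : Fin m, 0 < (μ {ω | G ω = g}).toReal := fun g =>
    ENNReal.toReal_pos (hA1pos g).ne' (measure_ne_top μ _)
  -- splitting a measure over a boolean function
  have split : ∀ (T : Set Ω) (f : Ω → Bool), Measurable f →
      (μ T).toReal = (μ (T ∩ {ω | f ω = false})).toReal + (μ (T ∩ {ω | f ω = true})).toReal := by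
    intro T f hf
    have hft : MeasurableSet {ω | f ω = true} := hf (measurableSet_singleton true)
    have h1 : T ∩ {ω | f ω = false} = T \ {ω | f ω = true} := by
      ext ω; simp [Bool.not_eq_true]
    rw [h1, ← measure_inter_add_diff T hft,
      ENNReal.toReal_add (measure_ne_top μ _) (measure_ne_top μ _)]
    exact add_comm _ _
  -- joint factorization, multiplied out
  have keyJ : ∀ (g : Fin m) (a y0 y1 : Bool),
      (μ ({ω | A ω = a ∧ Y0 ω = y0 ∧ Y1 ω = y1} ∩ {ω | G ω = g})).toReal =
        condP μ {ω | A ω = a} {ω | G ω = g} *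
          (μ ({ω | Y0 ω = y0 ∧ Y1 ω = y1} ∩ {ω | G ω = g})).toReal := by
    intro g a y0 y1
    have hr := (hνG g).ne'
    have h2 : (μ ({ω | A ω = a ∧ Y0 ω = y0 ∧ Y1 ω = y1} ∩ {ω | G ω = g})).toReal /
        (μ {ω | G ω = g}).toReal =
        condP μ {ω | A ω = a} {ω | G ω = g} *
          ((μ ({ω | Y0 ω = y0 ∧ Y1 ω = y1} ∩ {ω | G ω = g})).toReal /
            (μ {ω | G ω = g}).toReal) := hA1ind g a y0 y1
    rw [div_eq_iff hr] at h2
    rw [h2]; field_simp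
  -- marginal over Y1
  have key1 : ∀ (g : Fin m) (a y0 : Bool),
      (μ ({ω | A ω = a ∧ Y0 ω = y0} ∩ {ω | G ω = g})).toReal =
        condP μ {ω | A ω = a} {ω | G ω = g} *
          (μ ({ω | Y0 ω = y0} ∩ {ω | G ω = g})).toReal := by
    intro g a y0
    have s1 := split ({ω | A ω = a ∧ Y0 ω = y0} ∩ {ω | G ω = g}) Y1 hY1meas
    have s2 := split ({ω | Y0 ω = y0} ∩ {ω | G ω = g}) Y1 hY1meas
    have e1 : ∀ y1 : Bool, ({ω | A ω = a ∧ Y0 ω = y0} ∩ {ω | G ω = g}) ∩ {ω | Y1 ω = y1} =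
        {ω | A ω = a ∧ Y0 ω = y0 ∧ Y1 ω = y1} ∩ {ω | G ω = g} := by
      intro y1; ext ω; simp only [Set.mem_inter_iff, Set.mem_setOf_eq]; tauto
    have e2 : ∀ y1 : Bool, ({ω | Y0 ω = y0} ∩ {ω | G ω = g}) ∩ {ω | Y1 ω = y1} =
        {ω | Y0 ω = y0 ∧ Y1 ω = y1} ∩ {ω | G ω = g} := by
      intro y1; ext ω; simp only [Set.mem_inter_iff, Set.mem_setOf_eq]; tauto
    rw [e1 false, e1 true, keyJ g a y0 false, keyJ g a y0 true] at s1
    rw [e2 false, e2 true] at s2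
    rw [s1, s2]; ring
  -- marginal over Y0
  have key2 : ∀ (g : Fin m) (a y1 : Bool),
      (μ ({ω | A ω = a ∧ Y1 ω = y1} ∩ {ω | G ω = g})).toReal =
        condP μ {ω | A ω = a} {ω | G ω = g} *
          (μ ({ω | Y1 ω = y1} ∩ {ω | G ω = g})).toReal := by
    intro g a y1
    have s1 := split ({ω | A ω = a ∧ Y1 ω = y1} ∩ {ω | G ω = g}) Y0 hY0meas
    have s2 := split ({ω | Y1 ω = y1} ∩ {ω | G ω = g}) Y0 hY0meas
    have e1 : ∀ y0 : Bool, ({ω | A ω = a ∧ Y1 ω = y1} ∩ {ω | G ω = g}) ∩ {ω | Y0 ω = y0} =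
        {ω | A ω = a ∧ Y0 ω = y0 ∧ Y1 ω = y1} ∩ {ω | G ω = g} := by
      intro y0; ext ω; simp only [Set.mem_inter_iff, Set.mem_setOf_eq]; tauto
    have e2 : ∀ y0 : Bool, ({ω | Y1 ω = y1} ∩ {ω | G ω = g}) ∩ {ω | Y0 ω = y0} =
        {ω | Y0 ω = y0 ∧ Y1 ω = y1} ∩ {ω | G ω = g} := by
      intro y0; ext ω; simp only [Set.mem_inter_iff, Set.mem_setOf_eq]; tauto
    rw [e1 false, e1 true, keyJ g a false y1, keyJ g a true y1] at s1
    rw [e2 false, e2 true] at s2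
    rw [s1, s2]; ring
  -- P(A = false | G = g) = 1 - P(A = true | G = g) > 0
  have hAsum : ∀ g : Fin m,
      (μ ({ω | A ω = false} ∩ {ω | G ω = g})).toReal +
        (μ ({ω | A ω = true} ∩ {ω | G ω = g})).toReal = (μ {ω | G ω = g}).toReal := by
    intro g
    have s := split {ω | G ω = g} A hAmeas
    have e : ∀ a : Bool, {ω | G ω = g} ∩ {ω | A ω = a} = {ω | A ω = a} ∩ {ω | G ω = g} :=
      fun a => Set.inter_comm _ _
    rw [e false, e true] at s
    linarith
  have hcF : ∀ g : Fin m, 0 < condP μ {ω | A ω = false} {ω | G ω = g} := by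
    intro g
    have h1 : condP μ {ω | A ω = false} {ω | G ω = g} =
        1 - condP μ {ω | A ω = true} {ω | G ω = g} := by
      show (μ ({ω | A ω = false} ∩ {ω | G ω = g})).toReal / (μ {ω | G ω = g}).toReal =
        1 - (μ ({ω | A ω = true} ∩ {ω | G ω = g})).toReal / (μ {ω | G ω = g}).toReal
      rw [eq_sub_iff_add_eq, ← add_div, div_eq_one_iff_eq (hνG g).ne']
      exact hAsum g
    rw [h1]
    linarith [(hA1ov g).2]
  -- numerator identity for condP: μ(E ∩ F) = condP * μ(F)
  have hnum : ∀ (E F : Set Ω), (μ F).toReal ≠ 0 →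
      (μ (E ∩ F)).toReal = condP μ E F * (μ F).toReal := by
    intro E F hF
    show (μ (E ∩ F)).toReal = (μ (E ∩ F)).toReal / (μ F).toReal * (μ F).toReal
    rw [div_mul_cancel₀ _ hF]
  -- X̃ entries equal M entries
  have hX : ∀ (g : Fin m) (y : Bool),
      condP μ {ω | Y ω = y} {ω | G ω = g ∧ A ω = false} = M g y := by
    intro g y
    have enum : {ω | Y ω = y} ∩ {ω | G ω = g ∧ A ω = false} =
        {ω | A ω = false ∧ Y0 ω = y} ∩ {ω | G ω = g} := by
      ext ω
      by_cases ha : A ω = false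
      · have hy : Y ω = Y0 ω := by rw [hYdef ω, ha]; rfl
        simp only [Set.mem_inter_iff, Set.mem_setOf_eq, ha, hy]; tauto
      · simp only [Set.mem_inter_iff, Set.mem_setOf_eq, ha]; tauto
    have edenom : {ω | G ω = g ∧ A ω = false} = {ω | A ω = false} ∩ {ω | G ω = g} := by
      ext ω; simp only [Set.mem_inter_iff, Set.mem_setOf_eq]; tauto
    show (μ ({ω | Y ω = y} ∩ {ω | G ω = g ∧ A ω = false})).toReal /
        (μ {ω | G ω = g ∧ A ω = false}).toReal = M g y
    rw [enum, edenom, key1 g false y,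
      hnum {ω | A ω = false} {ω | G ω = g} (hνG g).ne',
      mul_div_mul_left _ _ (hcF g).ne']
    rfl
  -- Ỹ_g = P(Y1 = true | G = g)
  have hYg : ∀ g : Fin m,
      condP μ {ω | Y ω = true} {ω | G ω = g ∧ A ω = true} =
        (μ ({ω | Y1 ω = true} ∩ {ω | G ω = g})).toReal / (μ {ω | G ω = g}).toReal := by
    intro g
    have enum : {ω | Y ω = true} ∩ {ω | G ω = g ∧ A ω = true} =
        {ω | A ω = true ∧ Y1 ω = true} ∩ {ω | G ω = g} := by
      ext ω
      by_cases ha : A ω = true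
      · have hy : Y ω = Y1 ω := by rw [hYdef ω, ha]; rfl
        simp only [Set.mem_inter_iff, Set.mem_setOf_eq, ha, hy]; tauto
      · simp only [Set.mem_inter_iff, Set.mem_setOf_eq, ha]; tauto
    have edenom : {ω | G ω = g ∧ A ω = true} = {ω | A ω = true} ∩ {ω | G ω = g} := by
      ext ω; simp only [Set.mem_inter_iff, Set.mem_setOf_eq]; tauto
    show (μ ({ω | Y ω = true} ∩ {ω | G ω = g ∧ A ω = true})).toReal /
        (μ {ω | G ω = g ∧ A ω = true}).toReal = _
    rw [enum, edenom, key2 g true true,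
      hnum {ω | A ω = true} {ω | G ω = g} (hνG g).ne',
      mul_div_mul_left _ _ (hA1ov g).1.ne']
  -- transition decomposition: per-stratum term identity
  have hterm : ∀ (g : Fin m) (a : Bool),
      (μ ({ω | Y1 ω = true} ∩ {ω | Y0 ω = a ∧ G ω = g})).toReal =
        condP μ {ω | Y1 ω = true} {ω | Y0 ω = a} *
          (μ ({ω | Y0 ω = a} ∩ {ω | G ω = g})).toReal := by
    intro g a
    have e : {ω | Y0 ω = a} ∩ {ω | G ω = g} = {ω | Y0 ω = a ∧ G ω = g} := by
      ext ω; simp only [Set.mem_inter_iff, Set.mem_setOf_eq]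
    rw [e]
    by_cases hz : μ {ω | Y0 ω = a ∧ G ω = g} = 0
    · have h1 : μ ({ω | Y1 ω = true} ∩ {ω | Y0 ω = a ∧ G ω = g}) = 0 :=
        measure_mono_null Set.inter_subset_right hz
      rw [h1, hz]; simp
    · have hd : (μ {ω | Y0 ω = a ∧ G ω = g}).toReal ≠ 0 :=
        (ENNReal.toReal_pos hz (measure_ne_top μ _)).ne'
      rw [hnum _ _ hd, hA2 a true g (pos_iff_ne_zero.mpr hz)]
  -- Ỹ_g as linear combination
  have hYlin : ∀ g : Fin m, Yt g = θ 0 * M g false + θ 1 * M g true := by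
    intro g
    have s := split ({ω | Y1 ω = true} ∩ {ω | G ω = g}) Y0 hY0meas
    have e : ∀ a : Bool, ({ω | Y1 ω = true} ∩ {ω | G ω = g}) ∩ {ω | Y0 ω = a} =
        {ω | Y1 ω = true} ∩ {ω | Y0 ω = a ∧ G ω = g} := by
      intro a; ext ω; simp only [Set.mem_inter_iff, Set.mem_setOf_eq]; tauto
    rw [e false, e true, hterm g false, hterm g true] at s
    have hθ0 : θ 0 = condP μ {ω | Y1 ω = true} {ω | Y0 ω = false} := by rw [hθ]; rfl
    have hθ1 : θ 1 = condP μ {ω | Y1 ω = true} {ω | Y0 ω = true} := by rw [hθ]; rfl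
    rw [hYt g, hYg g, s, hθ0, hθ1]
    have hM0 : M g false =
        (μ ({ω | Y0 ω = false} ∩ {ω | G ω = g})).toReal / (μ {ω | G ω = g}).toReal := rfl
    have hM1 : M g true =
        (μ ({ω | Y0 ω = true} ∩ {ω | G ω = g})).toReal / (μ {ω | G ω = g}).toReal := rfl
    rw [hM0, hM1]
    field_simp
  -- the design matrix
  set X : Matrix (Fin m) (Fin 2) ℝ := M.submatrix id ⇑finTwoEquiv with hXdef
  have hXtX : ∀ (g : Fin m) (i : Fin 2), Xt g i = X g i := by
    intro g i
    fin_cases i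
    · show Xt g 0 = M g (finTwoEquiv 0)
      rw [hXt g]
      show condP μ {ω | Y ω = false} {ω | G ω = g ∧ A ω = false} = M g false
      exact hX g false
    · show Xt g 1 = M g (finTwoEquiv 1)
      rw [hXt g]
      show condP μ {ω | Y ω = true} {ω | G ω = g ∧ A ω = false} = M g true
      exact hX g true
  -- S = Xᵀ * X
  have hS : (∑ g : Fin m, vecMulVec (Xt g) (Xt g)) = Xᵀ * X := by
    ext i j
    simp only [Matrix.sum_apply, vecMulVec_apply, Matrix.mul_apply, transpose_apply]
    exact Finset.sum_congr rfl fun g _ => by rw [hXtX g i, hXtX g j]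
  have hXX : Xᵀ * X = (Mᵀ * M).submatrix ⇑finTwoEquiv ⇑finTwoEquiv := by
    have h1 : Xᵀ = Mᵀ.submatrix ⇑finTwoEquiv ⇑(Equiv.refl (Fin m)) := by
      rw [hXdef, transpose_submatrix]; rfl
    have h2 : X = M.submatrix ⇑(Equiv.refl (Fin m)) ⇑finTwoEquiv := rfl
    rw [h1, h2, submatrix_mul_equiv]
  have hrankMM : (Mᵀ * M).rank = Fintype.card Bool := by
    rw [Matrix.rank_transpose_mul_self, hC1]; rfl
  have hUnit : IsUnit (∑ g : Fin m, vecMulVec (Xt g) (Xt g)) := by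
    rw [hS, Matrix.isUnit_iff_isUnit_det, hXX, Matrix.det_submatrix_equiv_self,
      ← Matrix.isUnit_iff_isUnit_det]
    exact auxIsUnit _ hrankMM
  -- action of S on vectors
  have hmulS : ∀ v : Fin 2 → ℝ,
      (∑ g : Fin m, vecMulVec (Xt g) (Xt g)) *ᵥ v = ∑ g : Fin m, (Xt g ⬝ᵥ v) • Xt g := by
    intro v
    funext i
    simp only [Matrix.mulVec, dotProduct, Finset.sum_apply, Pi.smul_apply,
      smul_eq_mul, Matrix.sum_apply, vecMulVec_apply, Finset.sum_mul]
    rw [Finset.sum_comm]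
    exact Finset.sum_congr rfl fun g _ => Finset.sum_congr rfl fun j _ => by ring
  have hYtdot : ∀ g : Fin m, Yt g = Xt g ⬝ᵥ θ := by
    intro g
    rw [hYlin g, dotProduct, Fin.sum_univ_two, hXtX g 0, hXtX g 1]
    show θ 0 * M g false + θ 1 * M g true = M g (finTwoEquiv 0) * θ 0 + M g (finTwoEquiv 1) * θ 1
    show θ 0 * M g false + θ 1 * M g true = M g false * θ 0 + M g true * θ 1
    ring
  have hSθ : (∑ g : Fin m, vecMulVec (Xt g) (Xt g)) *ᵥ θ = ∑ g : Fin m, Yt g • Xt g := by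
    rw [hmulS θ]
    exact Finset.sum_congr rfl fun g _ => by rw [hYtdot g]
  refine ⟨hUnit, ?_, ?_⟩
  · rw [← hSθ, Matrix.mulVec_mulVec,
      Matrix.nonsing_inv_mul _ ((Matrix.isUnit_iff_isUnit_det _).mp hUnit), Matrix.one_mulVec]
  · intro θ' h'
    have hinj := Matrix.mulVec_injective_iff_isUnit.mpr hUnit
    apply hinj
    rw [hmulS θ', hmulS θ]
    exact Finset.sum_congr rfl fun g _ => by rw [← h' g, hYtdot g]
end

section
/- Identification of principal scores under monotonicity: Under Assumption 5 and the monotonicity condition μ(S¹ ≥ S⁰) = 1, for every g ∈ Fin m the principal scores δ_{ab|g} := P(S⁰=a, S¹=b | G=g) satisfy: δ_{10|g} = 0; δ_{11|g} = P(S=1 | A=0, G=g); δ_{01|g} = P(S=1 | A=1, G=g) − P(S=1 | A=0, G=g); and δ_{00|g} = 1 − P(S=1 | A=1, G=g). -/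
open MeasureTheory ProbabilityTheory

/-- **Identification of principal scores under monotonicity.** Under Assumption 5 and
`S¹ ≥ S⁰` a.s., the principal scores `δ_{ab|g} = P(S⁰=a, S¹=b | G=g)` satisfy
`δ_{10|g} = 0`, `δ_{11|g} = P(S=1 | A=0, G=g)`,
`δ_{01|g} = P(S=1 | A=1, G=g) − P(S=1 | A=0, G=g)` and
`δ_{00|g} = 1 − P(S=1 | A=1, G=g)`. -/
theorem stmt14
    {Ω : Type*} [MeasurableSpace Ω] (μ : Measure Ω) [IsProbabilityMeasure μ]
    {m : ℕ} (hm : 1 ≤ m)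
    (G : Ω → Fin m) (A S0 S1 Y0 Y1 S Y : Ω → Bool)
    (hGmeas : Measurable G) (hAmeas : Measurable A)
    (hS0meas : Measurable S0) (hS1meas : Measurable S1)
    (hY0meas : Measurable Y0) (hY1meas : Measurable Y1)
    (hSdef : ∀ ω, S ω = bif A ω then S1 ω else S0 ω)
    (hYdef : ∀ ω, Y ω = bif A ω then Y1 ω else Y0 ω)
    -- Assumption 5
    (hA5pos : ∀ g : Fin m, 0 < μ {ω | G ω = g})
    (hA5ov : ∀ g : Fin m, 0 < condP μ {ω | A ω = true} {ω | G ω = g} ∧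
        condP μ {ω | A ω = true} {ω | G ω = g} < 1)
    (hA5ind : ∀ (g : Fin m) (a s0 s1 y0 y1 : Bool),
      condP μ {ω | A ω = a ∧ S0 ω = s0 ∧ S1 ω = s1 ∧ Y0 ω = y0 ∧ Y1 ω = y1} {ω | G ω = g} =
        condP μ {ω | A ω = a} {ω | G ω = g} *
          condP μ {ω | S0 ω = s0 ∧ S1 ω = s1 ∧ Y0 ω = y0 ∧ Y1 ω = y1} {ω | G ω = g})
    -- monotonicity S¹ ≥ S⁰
    (hmono : μ {ω | S0 ω ≤ S1 ω} = 1) :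
    ∀ g : Fin m,
      condP μ {ω | S0 ω = true ∧ S1 ω = false} {ω | G ω = g} = 0 ∧
      condP μ {ω | S0 ω = true ∧ S1 ω = true} {ω | G ω = g} =
        condP μ {ω | S ω = true} {ω | A ω = false ∧ G ω = g} ∧
      condP μ {ω | S0 ω = false ∧ S1 ω = true} {ω | G ω = g} =
        condP μ {ω | S ω = true} {ω | A ω = true ∧ G ω = g} -
          condP μ {ω | S ω = true} {ω | A ω = false ∧ G ω = g} ∧
      condP μ {ω | S0 ω = false ∧ S1 ω = false} {ω | G ω = g} =
        1 - condP μ {ω | S ω = true} {ω | A ω = true ∧ G ω = g} := by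
  intro g
  -- basic measurability
  have mG : MeasurableSet {ω | G ω = g} := hGmeas (measurableSet_singleton g)
  have mA : ∀ a, MeasurableSet {ω | A ω = a} := fun a => hAmeas (measurableSet_singleton a)
  have mS0 : ∀ a, MeasurableSet {ω | S0 ω = a} := fun a => hS0meas (measurableSet_singleton a)
  have mS1 : ∀ a, MeasurableSet {ω | S1 ω = a} := fun a => hS1meas (measurableSet_singleton a)
  -- split lemma
  have key : ∀ (X : Set Ω), MeasurableSet X → ∀ (f : Ω → Bool), Measurable f →
      (μ X).toReal = (μ (X ∩ {ω | f ω = true})).toReal + (μ (X ∩ {ω | f ω = false})).toReal := by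
    intro X hX f hf
    have hd : Disjoint (X ∩ {ω | f ω = true}) (X ∩ {ω | f ω = false}) := by
      apply Set.disjoint_left.2
      rintro ω ⟨-, h1⟩ ⟨-, h2⟩
      simp only [Set.mem_setOf_eq] at h1 h2
      simp [h1] at h2
    have hu : X ∩ {ω | f ω = true} ∪ X ∩ {ω | f ω = false} = X := by
      ext ω; cases h : f ω <;> simp [h]
    calc (μ X).toReal = (μ (X ∩ {ω | f ω = true} ∪ X ∩ {ω | f ω = false})).toReal := by rw [hu]
      _ = (μ (X ∩ {ω | f ω = true}) + μ (X ∩ {ω | f ω = false})).toReal := by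
          rw [measure_union hd (hX.inter (hf (measurableSet_singleton false)))]
      _ = _ := ENNReal.toReal_add (measure_ne_top μ _) (measure_ne_top μ _)
  -- positivity of μ Gg
  have hyne : (μ {ω | G ω = g}).toReal ≠ 0 := by
    have := (hA5pos g).ne'
    simp [ENNReal.toReal_eq_zero_iff, this, measure_ne_top]
  -- joint factorization
  have hfact : ∀ a s0 s1 y0 y1 : Bool,
      (μ ({ω | A ω = a ∧ S0 ω = s0 ∧ S1 ω = s1 ∧ Y0 ω = y0 ∧ Y1 ω = y1} ∩ {ω | G ω = g})).toReal =
      condP μ {ω | A ω = a} {ω | G ω = g} *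
        (μ ({ω | S0 ω = s0 ∧ S1 ω = s1 ∧ Y0 ω = y0 ∧ Y1 ω = y1} ∩ {ω | G ω = g})).toReal := by
    intro a s0 s1 y0 y1
    have h := hA5ind g a s0 s1 y0 y1
    simp only [condP] at h ⊢
    rw [div_eq_iff hyne] at h
    rw [h, mul_assoc, div_mul_cancel₀ _ hyne]
  -- pair-level factorization
  have L1 : ∀ a s0 s1 : Bool,
      (μ ({ω | A ω = a ∧ S0 ω = s0 ∧ S1 ω = s1} ∩ {ω | G ω = g})).toReal =
      condP μ {ω | A ω = a} {ω | G ω = g} *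
        (μ ({ω | S0 ω = s0 ∧ S1 ω = s1} ∩ {ω | G ω = g})).toReal := by
    intro a s0 s1
    have splitY : ∀ (X : Set Ω), MeasurableSet X →
        (μ X).toReal =
        (μ ((X ∩ {ω | Y0 ω = true}) ∩ {ω | Y1 ω = true})).toReal +
        (μ ((X ∩ {ω | Y0 ω = true}) ∩ {ω | Y1 ω = false})).toReal +
        ((μ ((X ∩ {ω | Y0 ω = false}) ∩ {ω | Y1 ω = true})).toReal +
        (μ ((X ∩ {ω | Y0 ω = false}) ∩ {ω | Y1 ω = false})).toReal) := by
      intro X hX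
      rw [key X hX Y0 hY0meas,
        key (X ∩ {ω | Y0 ω = true}) (hX.inter (hY0meas (measurableSet_singleton true))) Y1 hY1meas,
        key (X ∩ {ω | Y0 ω = false}) (hX.inter (hY0meas (measurableSet_singleton false))) Y1 hY1meas]
    have e1 : ∀ y0 y1 : Bool,
        (({ω | A ω = a ∧ S0 ω = s0 ∧ S1 ω = s1} ∩ {ω | G ω = g}) ∩ {ω | Y0 ω = y0}) ∩ {ω | Y1 ω = y1}
        = {ω | A ω = a ∧ S0 ω = s0 ∧ S1 ω = s1 ∧ Y0 ω = y0 ∧ Y1 ω = y1} ∩ {ω | G ω = g} := by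
      intro y0 y1
      ext ω
      simp only [Set.mem_inter_iff, Set.mem_setOf_eq]
      tauto
    have e2 : ∀ y0 y1 : Bool,
        (({ω | S0 ω = s0 ∧ S1 ω = s1} ∩ {ω | G ω = g}) ∩ {ω | Y0 ω = y0}) ∩ {ω | Y1 ω = y1}
        = {ω | S0 ω = s0 ∧ S1 ω = s1 ∧ Y0 ω = y0 ∧ Y1 ω = y1} ∩ {ω | G ω = g} := by
      intro y0 y1
      ext ω
      simp only [Set.mem_inter_iff, Set.mem_setOf_eq]
      tauto
    have mX1 : MeasurableSet ({ω | A ω = a ∧ S0 ω = s0 ∧ S1 ω = s1} ∩ {ω | G ω = g}) :=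
      ((mA a).inter ((mS0 s0).inter (mS1 s1))).inter mG
    have mX2 : MeasurableSet ({ω | S0 ω = s0 ∧ S1 ω = s1} ∩ {ω | G ω = g}) :=
      ((mS0 s0).inter (mS1 s1)).inter mG
    rw [splitY _ mX1, splitY _ mX2, e1, e1, e1, e1, e2, e2, e2, e2,
      hfact a s0 s1 true true, hfact a s0 s1 true false,
      hfact a s0 s1 false true, hfact a s0 s1 false false]
    ring
  -- marginal for S0
  have L2 : ∀ a s0 : Bool,
      (μ ({ω | A ω = a ∧ S0 ω = s0} ∩ {ω | G ω = g})).toReal =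
      condP μ {ω | A ω = a} {ω | G ω = g} * (μ ({ω | S0 ω = s0} ∩ {ω | G ω = g})).toReal := by
    intro a s0
    have e1 : ∀ s1 : Bool, ({ω | A ω = a ∧ S0 ω = s0} ∩ {ω | G ω = g}) ∩ {ω | S1 ω = s1}
        = {ω | A ω = a ∧ S0 ω = s0 ∧ S1 ω = s1} ∩ {ω | G ω = g} := by
      intro s1; ext ω; simp only [Set.mem_inter_iff, Set.mem_setOf_eq]; tauto
    have e2 : ∀ s1 : Bool, ({ω | S0 ω = s0} ∩ {ω | G ω = g}) ∩ {ω | S1 ω = s1}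
        = {ω | S0 ω = s0 ∧ S1 ω = s1} ∩ {ω | G ω = g} := by
      intro s1; ext ω; simp only [Set.mem_inter_iff, Set.mem_setOf_eq]; tauto
    rw [key ({ω | A ω = a ∧ S0 ω = s0} ∩ {ω | G ω = g}) (((mA a).inter (mS0 s0)).inter mG) S1 hS1meas,
      key ({ω | S0 ω = s0} ∩ {ω | G ω = g}) ((mS0 s0).inter mG) S1 hS1meas, e1, e1, e2, e2, L1, L1]
    ring
  -- marginal for S1
  have L3 : ∀ a s1 : Bool,
      (μ ({ω | A ω = a ∧ S1 ω = s1} ∩ {ω | G ω = g})).toReal =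
      condP μ {ω | A ω = a} {ω | G ω = g} * (μ ({ω | S1 ω = s1} ∩ {ω | G ω = g})).toReal := by
    intro a s1
    have e1 : ∀ s0 : Bool, ({ω | A ω = a ∧ S1 ω = s1} ∩ {ω | G ω = g}) ∩ {ω | S0 ω = s0}
        = {ω | A ω = a ∧ S0 ω = s0 ∧ S1 ω = s1} ∩ {ω | G ω = g} := by
      intro s0; ext ω; simp only [Set.mem_inter_iff, Set.mem_setOf_eq]; tauto
    have e2 : ∀ s0 : Bool, ({ω | S1 ω = s1} ∩ {ω | G ω = g}) ∩ {ω | S0 ω = s0}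
        = {ω | S0 ω = s0 ∧ S1 ω = s1} ∩ {ω | G ω = g} := by
      intro s0; ext ω; simp only [Set.mem_inter_iff, Set.mem_setOf_eq]; tauto
    rw [key ({ω | A ω = a ∧ S1 ω = s1} ∩ {ω | G ω = g}) (((mA a).inter (mS1 s1)).inter mG) S0 hS0meas,
      key ({ω | S1 ω = s1} ∩ {ω | G ω = g}) ((mS1 s1).inter mG) S0 hS0meas, e1, e1, e2, e2, L1, L1]
    ring
  -- denominators: μ ({A=a} ∩ Gg).toReal = p_a * μ Gg
  have hden : ∀ a : Bool, (μ ({ω | A ω = a} ∩ {ω | G ω = g})).toReal =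
      condP μ {ω | A ω = a} {ω | G ω = g} * (μ {ω | G ω = g}).toReal := by
    intro a
    simp only [condP]
    rw [div_mul_cancel₀ _ hyne]
  -- p_true + p_false = 1, positivity of both
  have hpt := hA5ov g
  have hsum : condP μ {ω | A ω = true} {ω | G ω = g} + condP μ {ω | A ω = false} {ω | G ω = g} = 1 := by
    have e : ∀ b : Bool, {ω | G ω = g} ∩ {ω | A ω = b} = {ω | A ω = b} ∩ {ω | G ω = g} :=
      fun b => Set.inter_comm _ _
    have h := key {ω | G ω = g} mG A hAmeas
    rw [e, e] at h
    simp only [condP]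
    rw [← add_div, ← h, div_self hyne]
  have hpf : 0 < condP μ {ω | A ω = false} {ω | G ω = g} := by linarith [hpt.2]
  have hptpos : 0 < condP μ {ω | A ω = true} {ω | G ω = g} := hpt.1
  have hyR : 0 < (μ {ω | G ω = g}).toReal := lt_of_le_of_ne ENNReal.toReal_nonneg (Ne.symm hyne)
  -- monotonicity: μ {S0=1 ∧ S1=0} = 0
  have hzero : μ {ω | S0 ω = true ∧ S1 ω = false} = 0 := by
    have hset : {ω | S0 ω ≤ S1 ω} = {ω | S0 ω = true ∧ S1 ω = false}ᶜ := by
      ext ω; simp only [Set.mem_setOf_eq, Set.mem_compl_iff]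
      cases h0 : S0 ω <;> cases h1 : S1 ω <;> simp
    rw [hset] at hmono
    exact (prob_compl_eq_one_iff ((mS0 true).inter (mS1 false))).mp hmono
  have hzero' : μ ({ω | S0 ω = true ∧ S1 ω = false} ∩ {ω | G ω = g}) = 0 :=
    measure_mono_null Set.inter_subset_left hzero
  -- numerator set identities for observed S
  have eObs : ∀ a : Bool, {ω | S ω = true} ∩ {ω | A ω = a ∧ G ω = g} =
      {ω | A ω = a ∧ (bif a then S1 ω else S0 ω) = true} ∩ {ω | G ω = g} := by
    intro a
    ext ω
    simp only [Set.mem_inter_iff, Set.mem_setOf_eq, hSdef ω]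
    constructor
    · rintro ⟨h1, h2, h3⟩; rw [h2] at h1; exact ⟨⟨h2, h1⟩, h3⟩
    · rintro ⟨⟨h2, h1⟩, h3⟩; refine ⟨?_, h2, h3⟩; rw [h2]; exact h1
  have eDen : ∀ a : Bool, ({ω | A ω = a ∧ G ω = g} : Set Ω) = {ω | A ω = a} ∩ {ω | G ω = g} := by
    intro a; ext ω; simp [Set.mem_inter_iff]
  -- abbreviations for the four cell measures
  set n11 := (μ ({ω | S0 ω = true ∧ S1 ω = true} ∩ {ω | G ω = g})).toReal with hn11
  set n10 := (μ ({ω | S0 ω = true ∧ S1 ω = false} ∩ {ω | G ω = g})).toReal with hn10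
  set n01 := (μ ({ω | S0 ω = false ∧ S1 ω = true} ∩ {ω | G ω = g})).toReal with hn01
  set n00 := (μ ({ω | S0 ω = false ∧ S1 ω = false} ∩ {ω | G ω = g})).toReal with hn00
  have hn10z : n10 = 0 := by rw [hn10, hzero']; simp
  -- marginals in terms of cells
  have hx : (μ ({ω | S0 ω = true} ∩ {ω | G ω = g})).toReal = n11 + n10 := by
    have e : ∀ s1 : Bool, ({ω | S0 ω = true} ∩ {ω | G ω = g}) ∩ {ω | S1 ω = s1}
        = {ω | S0 ω = true ∧ S1 ω = s1} ∩ {ω | G ω = g} := by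
      intro s1; ext ω; simp only [Set.mem_inter_iff, Set.mem_setOf_eq]; tauto
    rw [key ({ω | S0 ω = true} ∩ {ω | G ω = g}) ((mS0 true).inter mG) S1 hS1meas, e, e]
  have hz : (μ ({ω | S1 ω = true} ∩ {ω | G ω = g})).toReal = n11 + n01 := by
    have e : ∀ s0 : Bool, ({ω | S1 ω = true} ∩ {ω | G ω = g}) ∩ {ω | S0 ω = s0}
        = {ω | S0 ω = s0 ∧ S1 ω = true} ∩ {ω | G ω = g} := by
      intro s0; ext ω; simp only [Set.mem_inter_iff, Set.mem_setOf_eq]; tauto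
    rw [key ({ω | S1 ω = true} ∩ {ω | G ω = g}) ((mS1 true).inter mG) S0 hS0meas, e, e]
  have hy : (μ {ω | G ω = g}).toReal = n11 + n01 + (n10 + n00) := by
    have e : ∀ s1 : Bool, ({ω | G ω = g} ∩ {ω | S1 ω = s1})
        = {ω | S1 ω = s1} ∩ {ω | G ω = g} := fun s1 => Set.inter_comm _ _
    have e2 : ∀ s0 s1 : Bool, ({ω | S1 ω = s1} ∩ {ω | G ω = g}) ∩ {ω | S0 ω = s0}
        = {ω | S0 ω = s0 ∧ S1 ω = s1} ∩ {ω | G ω = g} := by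
      intro s0 s1; ext ω; simp only [Set.mem_inter_iff, Set.mem_setOf_eq]; tauto
    rw [key {ω | G ω = g} mG S1 hS1meas, e, e,
      key ({ω | S1 ω = true} ∩ {ω | G ω = g}) ((mS1 true).inter mG) S0 hS0meas,
      key ({ω | S1 ω = false} ∩ {ω | G ω = g}) ((mS1 false).inter mG) S0 hS0meas, e2, e2, e2, e2]
  -- the two observed conditional probabilities
  have hobs : ∀ a : Bool, condP μ {ω | S ω = true} {ω | A ω = a ∧ G ω = g} =
      (μ ({ω | (bif a then S1 ω else S0 ω) = true} ∩ {ω | G ω = g})).toReal / (μ {ω | G ω = g}).toReal := by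
    intro a
    have hLa : (μ ({ω | A ω = a ∧ (bif a then S1 ω else S0 ω) = true} ∩ {ω | G ω = g})).toReal =
        condP μ {ω | A ω = a} {ω | G ω = g} *
          (μ ({ω | (bif a then S1 ω else S0 ω) = true} ∩ {ω | G ω = g})).toReal := by
      cases a
      · exact L2 false true
      · exact L3 true true
    have hpa : 0 < condP μ {ω | A ω = a} {ω | G ω = g} := by cases a; exact hpf; exact hptpos
    rw [condP, eObs a, eDen a, hLa, hden a, mul_div_mul_left _ _ (ne_of_gt hpa)]
  have hobsF := hobs false
  have hobsT := hobs true
  simp only [cond_false, cond_true] at hobsF hobsT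
  refine ⟨?_, ?_, ?_, ?_⟩
  · simp only [condP]
    rw [hzero']
    simp
  · rw [hobsF, condP, ← hn11, hx, hn10z, add_zero]
  · rw [hobsF, hobsT, condP, ← hn01, hx, hz, hn10z, add_zero]
    field_simp
    ring
  · rw [hobsT, condP, ← hn00, hz]
    have hyy : (μ {ω | G ω = g}).toReal = n11 + n01 + n00 := by rw [hy, hn10z]; ring
    have hpos : 0 < n11 + n01 + n00 := by rw [← hyy]; exact hyR
    rw [hyy]
    field_simp
    ring
end
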